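/- arXiv:2411.04875 — 10 statements merged into one kernel-verified Lean document; each statement's English description precedes it below -/
import Mathlib

section
/- Let A be a unital C*-algebra, a a nonzero positive element of A with a ≥ 1, and x ∈ A such that a·x is self-adjoint with spectrum contained in [0,∞) (i.e. a·x ≥ 0). If φ : [0,∞) → ℝ is continuous and convex with φ(0) = 0, then for every f ∈ S_a(A) one has f(φ(a·x)) ≥ φ(f(a·x)), where φ(a·x) is defined by continuous functional calculus. -/
open scoped ComplexOrder

section

variable {A : Type*} [CStarAlgebra A] [PartialOrder A] [StarOrderedRing A]

/-- A positive linear functional on `A`: `f (x* x) ≥ 0` for all `x`. -/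
def IsPosLF (f : A →ₗ[ℂ] ℂ) : Prop := ∀ x : A, 0 ≤ f (star x * x)

/-- Membership in `S_a(A)`: positive linear functionals `f` with `f a = 1`. -/
def MemSa (a : A) (f : A →ₗ[ℂ] ℂ) : Prop := IsPosLF f ∧ f a = 1

/-- if `a ≥ 1`, `a·x ≥ 0`, and `φ` is continuous and convex on `[0,∞)`
with `φ 0 = 0`, then `f(φ(a·x)) ≥ φ(f(a·x))` for every `f ∈ S_a(A)`, where `φ(a·x)` is
given by the continuous functional calculus. -/
theorem jensen_memSa (a : A) (ha : 0 ≤ a) (ha0 : a ≠ 0) (ha1 : 1 ≤ a)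
    (x : A) (hax : 0 ≤ a * x)
    (φ : ℝ → ℝ) (hcont : ContinuousOn φ (Set.Ici 0))
    (hconv : ConvexOn ℝ (Set.Ici 0) φ) (hφ0 : φ 0 = 0)
    (f : A →ₗ[ℂ] ℂ) (hf : MemSa a f) :
    φ ((f (a * x)).re) ≤ (f (cfc φ (a * x))).re := by
  obtain ⟨hfpos, hfa⟩ := hf
  set y := a * x with hy
  have hy0 : 0 ≤ y := hax
  have hysa : IsSelfAdjoint y := .of_nonneg hy0
  -- f is nonnegative on nonnegative elements
  have hF : ∀ z : A, 0 ≤ z → 0 ≤ (f z).re := by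
    intro z hz
    have h1 : star (CFC.sqrt z) * CFC.sqrt z = z := by
      rw [(IsSelfAdjoint.of_nonneg (CFC.sqrt_nonneg z)).star_eq, CFC.sqrt_mul_sqrt_self z hz]
    have h2 := hfpos (CFC.sqrt z)
    rw [h1] at h2
    exact (Complex.le_def.mp h2).1
  have hFmono : ∀ z w : A, z ≤ w → (f z).re ≤ (f w).re := by
    intro z w hzw
    have h1 := hF (w - z) (sub_nonneg.mpr hzw)
    rw [map_sub, Complex.sub_re] at h1
    linarith
  set s : ℝ := (f y).re with hs
  have hs0 : 0 ≤ s := hF y hy0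
  set t : ℝ := (f 1).re with ht
  have ht0 : 0 ≤ t := hF 1 zero_le_one
  have ht1 : t ≤ 1 := by
    have h1 := hFmono 1 a ha1
    rw [hfa] at h1
    simpa using h1
  have hspec : ∀ u ∈ spectrum ℝ y, (0:ℝ) ≤ u := fun u hu =>
    spectrum_nonneg_of_nonneg hy0 hu
  have hspec' : spectrum ℝ y ⊆ Set.Ici 0 := fun u hu => hspec u hu
  have hcont' : ContinuousOn φ (spectrum ℝ y) := hcont.mono hspec'
  -- key: any affine minorant of φ on [0,∞) gives a lower bound for f (cfc φ y)
  have key : ∀ k c : ℝ, (∀ u : ℝ, 0 ≤ u → k * u + c ≤ φ u) →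
      k * s + c * t ≤ (f (cfc φ y)).re := by
    intro k c hkc
    have hle : cfc (fun u : ℝ => k * u + c) y ≤ cfc φ y :=
      cfc_mono (fun u hu => hkc u (hspec u hu)) (by fun_prop) hcont'
    have heq : cfc (fun u : ℝ => k * u + c) y = k • y + c • (1:A) := by
      rw [cfc_add y (fun u => k * u) (fun _ => c) (by fun_prop) (by fun_prop),
        cfc_const_mul k (fun u : ℝ => u) y (by fun_prop), cfc_id' ℝ y,
        cfc_const c y, Algebra.algebraMap_eq_smul_one]
    rw [heq] at hle
    have h2 := hFmono _ _ hle
    have h3 : f (k • y + c • (1:A)) = k • f y + c • f 1 := by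
      rw [map_add, LinearMap.map_smul_of_tower, LinearMap.map_smul_of_tower]
    rw [h3] at h2
    simpa [Complex.add_re, Complex.smul_re] using h2
  -- goal already expressed via s and y
  rcases eq_or_lt_of_le hs0 with hseq | hslt
  · -- s = 0
    rw [← hseq, hφ0]
    refine le_of_forall_pos_le_add fun δ hδ => ?_
    -- choose ε with |φ u| ≤ δ/2 on [0, ε]
    have hc0 : ContinuousWithinAt φ (Set.Ici 0) 0 := hcont 0 (Set.mem_Ici.mpr le_rfl)
    rw [Metric.continuousWithinAt_iff] at hc0
    obtain ⟨ε', hε', hball⟩ := hc0 (δ/2) (by linarith)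
    set ε : ℝ := ε'/2 with hε
    have hεpos : 0 < ε := by positivity
    have hsmall : ∀ u : ℝ, 0 ≤ u → u ≤ ε → |φ u| ≤ δ/2 := by
      intro u hu hu'
      have := hball (Set.mem_Ici.mpr hu) (by
        rw [Real.dist_eq, sub_zero, abs_of_nonneg hu]; linarith)
      rw [Real.dist_eq, hφ0, sub_zero] at this
      linarith [le_of_lt this]
    set k : ℝ := φ ε / ε with hk
    have hmain : ∀ u : ℝ, 0 ≤ u → k * u + (-δ) ≤ φ u := by
      intro u hu
      rcases le_or_gt u ε with h | h
      · have h1 : k * u ≤ |φ ε| := by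
          calc k * u ≤ |k * u| := le_abs_self _
            _ = |φ ε| * (u / ε) := by
                rw [abs_mul, hk, abs_div, abs_of_pos hεpos, abs_of_nonneg hu]
                ring
            _ ≤ |φ ε| * 1 := by
                apply mul_le_mul_of_nonneg_left _ (abs_nonneg _)
                rw [div_le_one hεpos]; exact h
            _ = |φ ε| := mul_one _
        have h2 : |φ ε| ≤ δ/2 := hsmall ε hεpos.le le_rfl
        have h3 : |φ u| ≤ δ/2 := hsmall u hu h
        have h4 : -(δ/2) ≤ φ u := neg_le_of_abs_le h3
        linarith
      · -- u > ε : slope(0,ε) ≤ slope(ε,u)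
        have hsl := hconv.slope_mono_adjacent (Set.mem_Ici.mpr le_rfl)
          (Set.mem_Ici.mpr hu) hεpos h
        rw [hφ0] at hsl
        have h5 : (φ ε - 0) / (ε - 0) = k := by rw [hk]; ring_nf
        rw [h5] at hsl
        have h7 : k * ε = φ ε := by rw [hk]; field_simp
        have h6 : k * (u - ε) ≤ φ u - φ ε := by
          rw [div_le_div_iff₀ (by linarith) (by linarith)] at hsl
          have h9 : 0 < u - ε := by linarith
          nlinarith [hsl, h7, hεpos]
        nlinarith
    have h8 := key k (-δ) hmain
    rw [← hseq] at h8
    nlinarith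
  · -- s > 0
    set S : Set ℝ := (fun u => (φ s - φ u) / (s - u)) '' Set.Ico 0 s with hS
    have hSne : S.Nonempty := ⟨_, ⟨0, ⟨le_rfl, hslt⟩, rfl⟩⟩
    have hSbdd : BddAbove S := by
      refine ⟨(φ (s+1) - φ s) / (s + 1 - s), ?_⟩
      rintro _ ⟨u, ⟨hu0, hus⟩, rfl⟩
      have := hconv.slope_mono_adjacent (Set.mem_Ici.mpr hu0)
        (Set.mem_Ici.mpr (by linarith : (0:ℝ) ≤ s + 1)) hus (by linarith)
      simpa using this
    set k : ℝ := sSup S with hk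
    have hks : φ s ≤ k * s := by
      have h0 : (φ s - φ 0) / (s - 0) ∈ S := ⟨0, ⟨le_rfl, hslt⟩, rfl⟩
      have h1 := le_csSup hSbdd h0
      rw [hφ0, sub_zero, sub_zero, div_le_iff₀ hslt] at h1
      linarith
    have hmain : ∀ u : ℝ, 0 ≤ u → k * u + (φ s - k * s) ≤ φ u := by
      intro u hu
      rcases lt_trichotomy u s with h | h | h
      · have h0 : (φ s - φ u) / (s - u) ∈ S := ⟨u, ⟨hu, h⟩, rfl⟩
        have h1 := le_csSup hSbdd h0
        rw [div_le_iff₀ (by linarith)] at h1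
        nlinarith
      · rw [h]; ring_nf; exact le_rfl
      · have h1 : k ≤ (φ u - φ s) / (u - s) := by
          apply csSup_le hSne
          rintro _ ⟨w, ⟨hw0, hws⟩, rfl⟩
          exact hconv.slope_mono_adjacent (Set.mem_Ici.mpr hw0)
            (Set.mem_Ici.mpr hu) hws h
        rw [le_div_iff₀ (by linarith)] at h1
        nlinarith
    have h8 := key k (φ s - k * s) hmain
    nlinarith
end
end

section
/- Let A be a unital C*-algebra, a a nonzero positive element of A, and f ∈ S_a(A). Let x, y ∈ A with ‖x‖_a < ∞. Then f(y* x* a x y) ≤ ‖x‖_a² · f(y* a y). -/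
open scoped ComplexOrder

section

variable {A : Type*} [CStarAlgebra A] [PartialOrder A] [StarOrderedRing A]

/-- The set of values whose supremum is the `a`-seminorm `‖x‖ₐ`. -/
def aNormSet (a x : A) : Set ℝ :=
  {r : ℝ | ∃ f : A →ₗ[ℂ] ℂ, MemSa a f ∧ r = Real.sqrt (f (star x * a * x)).re}

/-- The `a`-seminorm `‖x‖ₐ = sup {√(f(x* a x)) : f ∈ S_a(A)}`. -/
noncomputable def aNorm (a x : A) : ℝ := sSup (aNormSet a x)

lemma posLF_nonneg {f : A →ₗ[ℂ] ℂ} (hf : IsPosLF f) {z : A} (hz : 0 ≤ z) : 0 ≤ f z := by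
  rw [StarOrderedRing.nonneg_iff] at hz
  induction hz using AddSubmonoid.closure_induction with
  | mem w hw => obtain ⟨s, rfl⟩ := hw; exact hf s
  | zero => simp
  | add w₁ w₂ _ _ h₁ h₂ => rw [map_add]; exact add_nonneg h₁ h₂

noncomputable def pert (f : A →ₗ[ℂ] ℂ) (y : A) (c ε : ℝ) : A →ₗ[ℂ] ℂ where
  toFun z := (c:ℂ)⁻¹ * (f (star y * z * y) + ε * f z)
  map_add' z w := by simp only [mul_add, add_mul, map_add]; ring
  map_smul' c z := by
    simp only [mul_smul_comm, smul_mul_assoc, map_smul, smul_eq_mul, RingHom.id_apply]; ring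

/-- `f(y* x* a x y) ≤ ‖x‖ₐ² · f(y* a y)` for `f ∈ S_a(A)`. -/
theorem stmt2 (a : A) (ha : 0 ≤ a) (ha0 : a ≠ 0)
    (f : A →ₗ[ℂ] ℂ) (hf : MemSa a f) (x y : A)
    (hx : BddAbove (aNormSet a x)) :
    (f (star y * star x * a * x * y)).re ≤ aNorm a x ^ 2 * (f (star y * a * y)).re := by
  -- key: for any g ∈ S_a, (g (x* a x)).re ≤ aNorm²
  have key : ∀ g : A →ₗ[ℂ] ℂ, MemSa a g → (g (star x * a * x)).re ≤ aNorm a x ^ 2 := by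
    intro g hg
    have hnn : (0:ℂ) ≤ g (star x * a * x) := posLF_nonneg hg.1 (star_left_conjugate_nonneg ha x)
    have hre : 0 ≤ (g (star x * a * x)).re := by
      simpa using Complex.le_def.mp hnn |>.1
    have hmem : Real.sqrt (g (star x * a * x)).re ∈ aNormSet a x := ⟨g, hg, rfl⟩
    have hle := le_csSup hx hmem
    calc (g (star x * a * x)).re = Real.sqrt (g (star x * a * x)).re ^ 2 :=
          (Real.sq_sqrt hre).symm
      _ ≤ aNorm a x ^ 2 := by
          apply pow_le_pow_left₀ (Real.sqrt_nonneg _) hle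
  have hyay : (0:ℂ) ≤ f (star y * a * y) := posLF_nonneg hf.1 (star_left_conjugate_nonneg ha y)
  have hyay_eq : f (star y * a * y) = ((f (star y * a * y)).re : ℂ) :=
    Complex.eq_re_of_ofReal_le hyay
  have hyay_re : 0 ≤ (f (star y * a * y)).re := by simpa using Complex.le_def.mp hyay |>.1
  set N := aNorm a x ^ 2 with hN
  have hxax : (0:ℂ) ≤ f (star x * a * x) := posLF_nonneg hf.1 (star_left_conjugate_nonneg ha x)
  have hxax_eq : f (star x * a * x) = ((f (star x * a * x)).re : ℂ) :=
    Complex.eq_re_of_ofReal_le hxax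
  -- for every ε > 0 the perturbed functional is in S_a
  have main : ∀ ε : ℝ, 0 < ε →
      (f (star y * star x * a * x * y)).re + ε * (f (star x * a * x)).re
        ≤ N * ((f (star y * a * y)).re + ε) := by
    intro ε hε
    set c : ℝ := (f (star y * a * y)).re + ε with hc
    have hcpos : 0 < c := by positivity
    have hgmem : MemSa a (pert f y c ε) := by
      constructor
      · intro z
        have e1 : star y * (star z * z) * y = star (z * y) * (z * y) := by
          simp [star_mul, mul_assoc]
        have h1 : (0:ℂ) ≤ f (star y * (star z * z) * y) := by
          rw [e1]; exact hf.1 (z * y)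
        have h2 : (0:ℂ) ≤ f (star z * z) := hf.1 z
        show (0:ℂ) ≤ (c:ℂ)⁻¹ * (f (star y * (star z * z) * y) + ε * f (star z * z))
        apply mul_nonneg
        · rw [← Complex.ofReal_inv]
          exact_mod_cast (inv_nonneg.mpr hcpos.le)
        · apply add_nonneg h1
          apply mul_nonneg _ h2
          exact_mod_cast hε.le
      · show (c:ℂ)⁻¹ * (f (star y * a * y) + ε * f a) = 1
        rw [hf.2, hyay_eq, mul_one]
        rw [inv_mul_eq_one₀ (by exact_mod_cast hcpos.ne')]
        push_cast [hc]
        ring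
    have := key _ hgmem
    have hval : ((pert f y c ε) (star x * a * x)).re
        = c⁻¹ * ((f (star y * (star x * a * x) * y)).re + ε * (f (star x * a * x)).re) := by
      show ((c:ℂ)⁻¹ * (f (star y * (star x * a * x) * y) + ε * f (star x * a * x))).re = _
      rw [← Complex.ofReal_inv]
      simp [Complex.mul_re, Complex.add_re, Complex.ofReal_re, Complex.ofReal_im]
    rw [hval] at this
    have hassoc : star y * (star x * a * x) * y = star y * star x * a * x * y := by
      noncomm_ring
    rw [hassoc] at this
    rw [inv_mul_le_iff₀ hcpos] at this
    linarith [this]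
  -- take ε → 0
  by_contra hcon
  push_neg at hcon
  set L := (f (star y * star x * a * x * y)).re
  set R := N * (f (star y * a * y)).re
  have hgap : 0 < L - R := by simp only [L, R] at *; linarith
  set K : ℝ := |(f (star x * a * x)).re| + |N| + 1 with hK
  have hKpos : 0 < K := by positivity
  have hε : 0 < (L - R) / (2 * K) := by positivity
  have := main _ hε
  -- L + ε * fx ≤ N * fy + ε * N, i.e. L - R ≤ ε (N - fx) ≤ ε * K < ... contradiction
  have h2 : L - R ≤ (L - R) / (2 * K) * (N - (f (star x * a * x)).re) := by
    have : N * ((f (star y * a * y)).re + (L - R)/(2*K)) = R + (L-R)/(2*K) * N := by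
      simp only [R]; ring
    linarith [main _ hε]
  have h3 : N - (f (star x * a * x)).re ≤ K := by
    have := abs_nonneg (f (star x * a * x)).re
    have := le_abs_self N
    have := neg_abs_le (f (star x * a * x)).re
    simp only [hK]; linarith
  have h4 : (L - R) / (2 * K) * (N - (f (star x * a * x)).re) ≤ (L-R)/(2*K) * K :=
    mul_le_mul_of_nonneg_left h3 hε.le
  have h5 : (L-R)/(2*K) * K = (L-R)/2 := by field_simp
  linarith

end
end

section
/- Let A be a unital C*-algebra, a a nonzero positive element of A, and f ∈ S_a(A). Let x_1,…,x_n, y_1,…,y_n ∈ A such that each y_i admits an a-adjoint y_i^{#a}, and let p_1,…,p_n ≥ 0 with Σ_{i=1}^n p_i = 1. Then |Σ_{i=1}^n p_i f(a x_i)| · |Σ_{i=1}^n p_i f(a y_i)| ≤ (1/2)·√(Σ_{i=1}^n p_i f(a x_i^{#a} x_i)) · √(Σ_{i=1}^n p_i f(a y_i y_i^{#a})) + (1/2)·|Σ_{i=1}^n p_i f(a y_i x_i)|, where also each x_i admits an a-adjoint x_i^{#a}. -/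
open scoped ComplexOrder

section

variable {A : Type*} [CStarAlgebra A] [PartialOrder A] [StarOrderedRing A]

lemma posB (a : A) (ha : 0 ≤ a) (f : A →ₗ[ℂ] ℂ) (hf : IsPosLF f) (u : A) :
    0 ≤ f (star u * (a * u)) := by
  rw [StarOrderedRing.nonneg_iff] at ha
  induction ha using AddSubmonoid.closure_induction with
  | mem b hb =>
    obtain ⟨s, rfl⟩ := hb
    have h := hf (s * u)
    have e : star (s * u) * (s * u) = star u * (star s * s * u) := by
      simp [star_mul, mul_assoc]
    rw [e] at h
    simpa [mul_assoc] using h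
  | zero => simp
  | add b c _ _ hb hc =>
    have e : star u * ((b + c) * u) = star u * (b * u) + star u * (c * u) := by
      simp [add_mul, mul_add]
    rw [e, map_add]
    exact add_nonneg hb hc

lemma conjB (a : A) (ha : 0 ≤ a) (f : A →ₗ[ℂ] ℂ) (hf : IsPosLF f) (u v : A) :
    (starRingEnd ℂ) (f (star u * (a * v))) = f (star v * (a * u)) := by
  set g : A → A → ℂ := fun u v => f (star u * (a * v)) with hg
  have hreal : ∀ w : A, (starRingEnd ℂ) (g w w) = g w w := by
    intro w
    rw [Complex.conj_eq_iff_im]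
    exact (Complex.nonneg_iff.mp (posB a ha f hf w)).2.symm
  have hexp1 : g (u + v) (u + v) = g u u + g u v + g v u + g v v := by
    simp only [hg, star_add, add_mul, mul_add, map_add]
    ring
  have hexp2 : g (u + Complex.I • v) (u + Complex.I • v)
      = g u u + Complex.I * g u v - Complex.I * g v u + g v v := by
    simp only [hg, star_add, star_smul, add_mul, mul_add, smul_mul_assoc, mul_smul_comm,
      map_add, map_smul, Complex.star_def, Complex.conj_I, smul_eq_mul, neg_smul, neg_mul,
      map_neg]
    linear_combination (-(f (star v * (a * v)))) * Complex.I_sq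
  have h1 : (starRingEnd ℂ) (g u v + g v u) = g u v + g v u := by
    have e : g u v + g v u = g (u + v) (u + v) - g u u - g v v := by rw [hexp1]; ring
    rw [e, map_sub, map_sub, hreal, hreal, hreal]
  have h2 : (starRingEnd ℂ) (Complex.I * g u v - Complex.I * g v u)
      = Complex.I * g u v - Complex.I * g v u := by
    have e : Complex.I * g u v - Complex.I * g v u
        = g (u + Complex.I • v) (u + Complex.I • v) - g u u - g v v := by rw [hexp2]; ring
    rw [e, map_sub, map_sub, hreal, hreal, hreal]
  have h1' := h1
  have h2' := h2
  rw [map_add] at h1'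
  rw [map_sub, map_mul, map_mul, Complex.conj_I] at h2'
  show (starRingEnd ℂ) (g u v) = g v u
  linear_combination (h1' + Complex.I * h2') / 2
    + (((starRingEnd ℂ) (g u v) - (starRingEnd ℂ) (g v u) + g u v - g v u) / 2) * Complex.I_sq

attribute [local instance] InnerProductSpace.Core.toPreInner'

lemma buzano {F : Type*} [AddCommGroup F] [Module ℂ F]
    (c : PreInnerProductSpace.Core ℂ F) (e X Y : F) (he : c.inner e e = 1) :
    ‖c.inner e X‖ * ‖c.inner Y e‖ ≤
      1 / 2 * (Real.sqrt (c.inner X X).re * Real.sqrt (c.inner Y Y).re)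
        + 1 / 2 * ‖c.inner Y X‖ := by
  letI := c
  letI : Inner ℂ F := InnerProductSpace.Core.toPreInner'
  have hin : ∀ u v : F, (inner ℂ u v) = c.inner u v := fun _ _ => rfl
  set c0 : ℂ := c.inner e X with hc0
  set z : F := (2 * c0) • e - X with hz
  have hXe : (inner ℂ X e) = (starRingEnd ℂ) c0 := by
    rw [← InnerProductSpace.Core.inner_conj_symm]
  have hYz : (inner ℂ Y z) = 2 * c0 * c.inner Y e - c.inner Y X := by
    rw [hz, InnerProductSpace.Core.inner_sub_right, InnerProductSpace.Core.inner_smul_right,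
      hin, hin]
  have hzz : (inner ℂ z z) = c.inner X X := by
    rw [hz]
    rw [InnerProductSpace.Core.inner_sub_sub_self]
    rw [InnerProductSpace.Core.inner_smul_left, InnerProductSpace.Core.inner_smul_right,
      InnerProductSpace.Core.inner_smul_left, InnerProductSpace.Core.inner_smul_right]
    rw [hin, hin, hin, hin, he, ← hc0, hXe]
    rw [map_mul, map_ofNat]
    ring
  have hCS := InnerProductSpace.Core.inner_mul_inner_self_le (𝕜 := ℂ) Y z
  rw [InnerProductSpace.Core.norm_inner_symm z Y] at hCS
  rw [hzz] at hCS
  have hYY : (0:ℝ) ≤ (c.inner Y Y).re := c.re_inner_nonneg Y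
  have hXX : (0:ℝ) ≤ (c.inner X X).re := c.re_inner_nonneg X
  have hYzle : ‖(inner ℂ Y z)‖ ≤ Real.sqrt (c.inner X X).re * Real.sqrt (c.inner Y Y).re := by
    have h := hCS
    rw [hin Y Y] at h
    have : ‖(inner ℂ Y z)‖ = Real.sqrt (‖(inner ℂ Y z)‖ * ‖(inner ℂ Y z)‖) :=
      (Real.sqrt_mul_self (norm_nonneg _)).symm
    rw [this]
    calc Real.sqrt (‖(inner ℂ Y z)‖ * ‖(inner ℂ Y z)‖)
        ≤ Real.sqrt (Complex.re (c.inner Y Y) * Complex.re (c.inner X X)) :=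
          Real.sqrt_le_sqrt h
      _ = Real.sqrt (c.inner X X).re * Real.sqrt (c.inner Y Y).re := by
          rw [Real.sqrt_mul hYY, mul_comm]
  have htri : 2 * (‖c0‖ * ‖c.inner Y e‖) ≤ ‖(inner ℂ Y z)‖ + ‖c.inner Y X‖ := by
    have e1 : 2 * c0 * c.inner Y e = (inner ℂ Y z) + c.inner Y X := by rw [hYz]; ring
    have e2 : ‖2 * c0 * c.inner Y e‖ = 2 * (‖c0‖ * ‖c.inner Y e‖) := by
      rw [norm_mul, norm_mul, RCLike.norm_two]
      ring
    rw [← e2, e1]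
    exact norm_add_le _ _
  linarith

/-- Buzano-type inequality for convex combinations. -/
theorem stmt3 (a : A) (ha : 0 ≤ a) (ha0 : a ≠ 0)
    (f : A →ₗ[ℂ] ℂ) (hf : MemSa a f)
    (n : ℕ) (x y xadj yadj : Fin n → A)
    (hxadj : ∀ i, a * xadj i = star (x i) * a)
    (hyadj : ∀ i, a * yadj i = star (y i) * a)
    (p : Fin n → ℝ) (hp : ∀ i, 0 ≤ p i) (hp1 : ∑ i, p i = 1) :
    ‖∑ i, (p i : ℂ) * f (a * x i)‖ *
        ‖∑ i, (p i : ℂ) * f (a * y i)‖ ≤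
      (1 / 2) * (Real.sqrt (∑ i, p i * (f (a * (xadj i * x i))).re) *
          Real.sqrt (∑ i, p i * (f (a * (y i * yadj i))).re)) +
        (1 / 2) * ‖∑ i, (p i : ℂ) * f (a * (y i * x i))‖ := by
  have hsa : star a = a := (IsSelfAdjoint.of_nonneg ha)
  have hyadj' : ∀ i, star (yadj i) * a = a * y i := by
    intro i
    have := congrArg star (hyadj i)
    rw [star_mul, star_mul, star_star, hsa] at this
    exact this
  -- the sesquilinear form
  let c : PreInnerProductSpace.Core ℂ (Fin n → A) :=
    { inner := fun u v => ∑ i, (p i : ℂ) * f (star (u i) * (a * v i))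
      conj_inner_symm := by
        intro u v
        simp only [map_sum, map_mul, Complex.conj_ofReal, conjB a ha f hf.1]
      re_inner_nonneg := by
        intro u
        show 0 ≤ (∑ i, (p i : ℂ) * f (star (u i) * (a * u i))).re
        rw [Complex.re_sum]
        apply Finset.sum_nonneg
        intro i _
        have h := posB a ha f hf.1 (u i)
        have : ((p i : ℂ) * f (star (u i) * (a * u i))).re
            = p i * (f (star (u i) * (a * u i))).re := by
          simp [Complex.mul_re]
        rw [this]
        exact mul_nonneg (hp i) (Complex.nonneg_iff.mp h).1
      add_left := by
        intro u v w
        show (∑ i, (p i : ℂ) * f (star ((u + v) i) * (a * w i)))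
            = (∑ i, (p i : ℂ) * f (star (u i) * (a * w i)))
              + ∑ i, (p i : ℂ) * f (star (v i) * (a * w i))
        rw [← Finset.sum_add_distrib]
        refine Finset.sum_congr rfl fun i _ => ?_
        simp only [Pi.add_apply, star_add, add_mul, map_add]
        ring
      smul_left := by
        intro u v r
        show (∑ i, (p i : ℂ) * f (star ((r • u) i) * (a * v i)))
            = (starRingEnd ℂ) r * ∑ i, (p i : ℂ) * f (star (u i) * (a * v i))
        rw [Finset.mul_sum]
        refine Finset.sum_congr rfl fun i _ => ?_
        simp only [Pi.smul_apply, star_smul, smul_mul_assoc, map_smul, Complex.star_def,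
          smul_eq_mul]
        ring }
  have key := buzano c (fun _ => (1 : A)) x yadj ?_
  · have e1 : c.inner (fun _ => (1 : A)) x = ∑ i, (p i : ℂ) * f (a * x i) := by
      show (∑ i, (p i : ℂ) * f (star (1:A) * (a * x i))) = _
      simp
    have e2 : c.inner yadj (fun _ => (1 : A)) = ∑ i, (p i : ℂ) * f (a * y i) := by
      show (∑ i, (p i : ℂ) * f (star (yadj i) * (a * 1))) = _
      refine Finset.sum_congr rfl fun i _ => ?_
      rw [mul_one, hyadj' i]
    have e3 : (c.inner x x).re = ∑ i, p i * (f (a * (xadj i * x i))).re := by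
      show (∑ i, (p i : ℂ) * f (star (x i) * (a * x i))).re = _
      rw [Complex.re_sum]
      refine Finset.sum_congr rfl fun i _ => ?_
      have : star (x i) * (a * x i) = a * (xadj i * x i) := by
        rw [← mul_assoc, ← hxadj i, mul_assoc]
      rw [this]
      simp [Complex.mul_re]
    have e4 : (c.inner yadj yadj).re = ∑ i, p i * (f (a * (y i * yadj i))).re := by
      show (∑ i, (p i : ℂ) * f (star (yadj i) * (a * yadj i))).re = _
      rw [Complex.re_sum]
      refine Finset.sum_congr rfl fun i _ => ?_
      have : star (yadj i) * (a * yadj i) = a * (y i * yadj i) := by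
        rw [← mul_assoc, hyadj' i, mul_assoc]
      rw [this]
      simp [Complex.mul_re]
    have e5 : c.inner yadj x = ∑ i, (p i : ℂ) * f (a * (y i * x i)) := by
      show (∑ i, (p i : ℂ) * f (star (yadj i) * (a * x i))) = _
      refine Finset.sum_congr rfl fun i _ => ?_
      have : star (yadj i) * (a * x i) = a * (y i * x i) := by
        rw [← mul_assoc, hyadj' i, mul_assoc]
      rw [this]
    rw [e1, e2, e3, e4, e5] at key
    simpa using key
  · show (∑ i, (p i : ℂ) * f (star (1:A) * (a * 1))) = 1
    simp only [star_one, one_mul, mul_one, hf.2, mul_one]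
    rw [← Complex.ofReal_sum]
    norm_cast

end
end

section
/- Let A be a unital C*-algebra, a a nonzero positive element of A with a ≥ 1, and x ∈ A admitting an a-adjoint x^{#a}. Let φ be an Orlicz function, f ∈ S_a(A), and 0 ≤ α ≤ 1. Then φ(|f(a x)|²) ≤ α · f(φ(a x^{#a} x)) + (1 − α) · f(φ(a x x^{#a})), where a x^{#a} x = x* a x and a x x^{#a} = (x^{#a})* a x^{#a} are positive elements and φ is applied by continuous functional calculus. -/
open scoped ComplexOrder

section

variable {A : Type*} [CStarAlgebra A] [PartialOrder A] [StarOrderedRing A]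

/-- An Orlicz function: `φ : [0,∞) → [0,∞)` (modelled on `ℝ`) which is continuous, convex,
non-decreasing on `[0,∞)`, with `φ 0 = 0`, `φ u > 0` for `u > 0`, and `φ u → ∞` as `u → ∞`. -/
structure IsOrlicz (φ : ℝ → ℝ) : Prop where
  continuousOn : ContinuousOn φ (Set.Ici 0)
  convexOn : ConvexOn ℝ (Set.Ici 0) φ
  monotoneOn : MonotoneOn φ (Set.Ici 0)
  map_zero : φ 0 = 0
  pos : ∀ u : ℝ, 0 < u → 0 < φ u
  tendsto_atTop : Filter.Tendsto φ Filter.atTop Filter.atTop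

/-- Existence of a nonnegative subgradient slope at a point for a monotone convex function
on `[0,∞)` vanishing at `0`. -/
lemma exists_subgrad {φ : ℝ → ℝ} (hc : ConvexOn ℝ (Set.Ici 0) φ)
    (hm : MonotoneOn φ (Set.Ici 0)) (h0 : φ 0 = 0) {t : ℝ} (ht : 0 ≤ t) :
    ∃ k : ℝ, 0 ≤ k ∧ ∀ u, 0 ≤ u → φ t + k * (u - t) ≤ φ u := by
  rcases eq_or_lt_of_le ht with h | h
  · refine ⟨0, le_rfl, fun u hu => ?_⟩
    have h1 : φ 0 ≤ φ u := hm Set.self_mem_Ici (Set.mem_Ici.mpr hu) hu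
    rw [← h]
    rw [h0] at h1 ⊢
    linarith
  · set S : Set ℝ := (fun w => (φ t - φ w) / (t - w)) '' Set.Ico 0 t with hS
    have hmem0 : (φ t - φ 0) / (t - 0) ∈ S := ⟨0, ⟨le_rfl, h⟩, rfl⟩
    have hne : S.Nonempty := ⟨_, hmem0⟩
    have hbdd : BddAbove S := by
      refine ⟨(φ (t + 1) - φ t) / ((t + 1) - t), ?_⟩
      rintro s ⟨w, ⟨hw0, hwt⟩, rfl⟩
      exact hc.slope_mono_adjacent (Set.mem_Ici.mpr hw0)
        (Set.mem_Ici.mpr (by linarith)) hwt (by linarith)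
    set k := sSup S with hk
    have hk0 : 0 ≤ k := by
      have h1 : 0 ≤ (φ t - φ 0) / (t - 0) := by
        apply div_nonneg
        · have := hm Set.self_mem_Ici (Set.mem_Ici.mpr ht) ht
          linarith
        · linarith
      exact h1.trans (le_csSup hbdd hmem0)
    refine ⟨k, hk0, fun u hu => ?_⟩
    rcases lt_trichotomy u t with hut | hut | hut
    · have hle : (φ t - φ u) / (t - u) ≤ k := le_csSup hbdd ⟨u, ⟨hu, hut⟩, rfl⟩
      have htu : 0 < t - u := by linarith
      rw [div_le_iff₀ htu] at hle
      nlinarith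
    · rw [hut]; simp
    · have hk_le : k ≤ (φ u - φ t) / (u - t) := by
        apply csSup_le hne
        rintro s ⟨w, ⟨hw0, hwt⟩, rfl⟩
        exact hc.slope_mono_adjacent (Set.mem_Ici.mpr hw0) (Set.mem_Ici.mpr hu) hwt hut
      have htu : 0 < u - t := by linarith
      rw [le_div_iff₀ htu] at hk_le
      nlinarith

set_option maxHeartbeats 1000000 in
/-- Cauchy–Schwarz for the positive sesquilinear form `(u, v) ↦ g (u* (b v))`. -/
lemma my_cs (g : A →ₗ[ℂ] ℂ) (b : A) (hb : star b = b)
    (hq : ∀ u : A, 0 ≤ g (star u * (b * u)))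
    (hconj : ∀ z : A, g (star z) = starRingEnd ℂ (g z)) (u v : A) :
    ‖g (star u * (b * v))‖ ^ 2 ≤
      (g (star u * (b * u))).re * (g (star v * (b * v))).re := by
  letI core : PreInnerProductSpace.Core ℂ A :=
    { inner := fun p q => g (star p * (b * q))
      conj_inner_symm := by
        intro p q
        show starRingEnd ℂ (g (star q * (b * p))) = g (star p * (b * q))
        rw [← hconj]
        congr 1
        simp only [star_mul, star_star, hb, mul_assoc]
      re_inner_nonneg := fun p => by
        have := (Complex.le_def.mp (hq p)).1
        simpa using this
      add_left := fun p q r => by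
        show g (star (p + q) * (b * r)) = g (star p * (b * r)) + g (star q * (b * r))
        simp only [star_add, add_mul, map_add]
      smul_left := fun p q c => by
        show g (star (c • p) * (b * q)) = starRingEnd ℂ c * g (star p * (b * q))
        simp only [star_smul, smul_mul_assoc, map_smul, smul_eq_mul, RCLike.star_def] }
  have h : ‖g (star u * (b * v))‖ * ‖g (star v * (b * u))‖ ≤
      (g (star u * (b * u))).re * (g (star v * (b * v))).re :=
    InnerProductSpace.Core.inner_mul_inner_self_le (𝕜 := ℂ) (F := A) u v
  have hrel : g (star v * (b * u)) = starRingEnd ℂ (g (star u * (b * v))) := by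
    rw [← hconj]
    congr 1
    simp only [star_mul, star_star, hb, mul_assoc]
  rw [hrel, RCLike.norm_conj] at h
  rw [sq]
  exact h

/-- Orlicz-function bound for `φ(|f(a x)|²)`. -/
theorem stmt4 (a : A) (ha : 0 ≤ a) (ha0 : a ≠ 0) (ha1 : 1 ≤ a)
    (x xadj : A) (hadj : a * xadj = star x * a)
    (φ : ℝ → ℝ) (hφ : IsOrlicz φ)
    (f : A →ₗ[ℂ] ℂ) (hf : MemSa a f)
    (α : ℝ) (hα0 : 0 ≤ α) (hα1 : α ≤ 1) :
    φ (‖f (a * x)‖ ^ 2) ≤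
      α * (f (cfc φ (a * (xadj * x)))).re +
        (1 - α) * (f (cfc φ (a * (x * xadj)))).re := by
  have hsa : star a = a := (IsSelfAdjoint.of_nonneg ha).star_eq
  -- positivity of f on nonnegative elements
  have hpos : ∀ z : A, 0 ≤ z → 0 ≤ f z := by
    intro z hz
    have h1 : CFC.sqrt z * CFC.sqrt z = z := CFC.sqrt_mul_sqrt_self z hz
    have h2 : star (CFC.sqrt z) = CFC.sqrt z :=
      (IsSelfAdjoint.of_nonneg (CFC.sqrt_nonneg (a := z))).star_eq
    have := hf.1 (CFC.sqrt z)
    rwa [h2, h1] at this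
  have hq : ∀ u : A, 0 ≤ f (star u * (a * u)) := by
    intro u
    apply hpos
    rw [← mul_assoc]
    exact star_left_conjugate_nonneg ha u
  -- f is real on selfadjoint elements
  have hreal : ∀ w : A, IsSelfAdjoint w → starRingEnd ℂ (f w) = f w := by
    intro w hw
    have him : ∀ c : ℂ, 0 ≤ c → starRingEnd ℂ c = c := fun c hc =>
      Complex.conj_eq_iff_im.mpr ((Complex.le_def.mp hc).2.symm)
    have h1 := hpos _ (CFC.posPart_nonneg w)
    have h2 := hpos _ (CFC.negPart_nonneg w)
    have h3 := CFC.posPart_sub_negPart w hw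
    rw [← h3, map_sub, map_sub, him _ h1, him _ h2]
  -- f is a star map
  have hstar : ∀ z : A, f (star z) = starRingEnd ℂ (f z) := by
    intro z
    set s : A := (2⁻¹ : ℂ) • (z + star z) with hs
    set w : A := (2⁻¹ * Complex.I) • (star z - z) with hw
    have hss : IsSelfAdjoint s := by
      rw [IsSelfAdjoint, hs, star_smul, star_add, star_star]
      simp [add_comm, Complex.star_def, map_inv₀]
    have hws : IsSelfAdjoint w := by
      rw [IsSelfAdjoint, hw, star_smul, star_sub, star_star]
      simp only [Complex.star_def, map_mul, map_inv₀, Complex.conj_I, map_ofNat]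
      rw [mul_neg, neg_smul, ← smul_neg, neg_sub]
    have hIw' : Complex.I • w = (-(2⁻¹) : ℂ) • (star z - z) := by
      rw [hw, smul_smul]
      congr 1
      linear_combination Complex.I_mul_I * (2⁻¹ : ℂ)
    have hz1 : z = s + Complex.I • w := by
      rw [hs, hIw']
      module
    have hz2 : star z = s - Complex.I • w := by
      rw [hs, hIw']
      module
    have e1 : f (star z) = f s - Complex.I * f w := by
      rw [hz2]
      simp only [map_sub, map_smul, smul_eq_mul]
    have e2 : f z = f s + Complex.I * f w := by
      rw [hz1]
      simp only [map_add, map_smul, smul_eq_mul]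
    rw [e1, e2, map_add, map_mul, Complex.conj_I, hreal s hss, hreal w hws]
    ring
  -- monotonicity of re ∘ f
  have fmono : ∀ z w : A, z ≤ w → (f z).re ≤ (f w).re := by
    intro z w hzw
    have h1 := (Complex.le_def.mp (hpos (w - z) (sub_nonneg.mpr hzw))).1
    rw [map_sub] at h1
    simp only [Complex.zero_re, Complex.sub_re] at h1
    linarith
  -- the two Cauchy–Schwarz bounds
  have hy1 : a * (xadj * x) = star x * (a * x) := by
    rw [← mul_assoc, hadj, mul_assoc]
  have hadj' : star xadj * a = a * x := by
    have := congrArg star hadj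
    rwa [star_mul, star_mul, star_star, hsa] at this
  have hy2 : a * (x * xadj) = star xadj * (a * xadj) := by
    rw [← mul_assoc, ← hadj', mul_assoc]
  have hy1pos : 0 ≤ a * (xadj * x) := by
    rw [hy1, ← mul_assoc]
    exact star_left_conjugate_nonneg ha x
  have hy2pos : 0 ≤ a * (x * xadj) := by
    rw [hy2, ← mul_assoc]
    exact star_left_conjugate_nonneg ha xadj
  have hfa : (f a).re = 1 := by rw [hf.2]; simp
  have hcs1 := my_cs f a hsa hq hstar 1 x
  simp only [star_one, one_mul, mul_one] at hcs1
  have ht1 : ‖f (a * x)‖ ^ 2 ≤ (f (a * (xadj * x))).re := by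
    rw [hy1]
    calc ‖f (a * x)‖ ^ 2 ≤ (f a).re * (f (star x * (a * x))).re := hcs1
      _ = (f (star x * (a * x))).re := by rw [hfa, one_mul]
  have hcs2 := my_cs f a hsa hq hstar 1 xadj
  simp only [star_one, one_mul, mul_one] at hcs2
  have habs : ‖f (a * xadj)‖ = ‖f (a * x)‖ := by
    have h1 : a * xadj = star (a * x) := by
      rw [star_mul, hsa, hadj]
    rw [h1, hstar, RCLike.norm_conj]
  have ht2 : ‖f (a * x)‖ ^ 2 ≤ (f (a * (x * xadj))).re := by
    rw [hy2]
    calc ‖f (a * x)‖ ^ 2 = ‖f (a * xadj)‖ ^ 2 := by rw [habs]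
      _ ≤ (f a).re * (f (star xadj * (a * xadj))).re := hcs2
      _ = (f (star xadj * (a * xadj))).re := by rw [hfa, one_mul]
  -- the convexity argument
  set t : ℝ := ‖f (a * x)‖ ^ 2 with hts
  have ht0 : 0 ≤ t := by positivity
  obtain ⟨k, hk0, hsub⟩ := exists_subgrad hφ.convexOn hφ.monotoneOn hφ.map_zero ht0
  have hφtk : φ t ≤ k * t := by
    have := hsub 0 le_rfl
    rw [hφ.map_zero] at this
    nlinarith
  have h10 : 0 ≤ (f 1).re := by
    have h1 : (0 : A) ≤ 1 := by simpa using star_mul_self_nonneg (1 : A)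
    have := (Complex.le_def.mp (hpos 1 h1)).1
    simpa using this
  have h11 : (f 1).re ≤ 1 := by
    have := fmono 1 a ha1
    rwa [hfa] at this
  have key : ∀ y : A, 0 ≤ y → t ≤ (f y).re → φ t ≤ (f (cfc φ y)).re := by
    intro y hy hty
    have hspec : ∀ u ∈ spectrum ℝ y, (0 : ℝ) ≤ u := fun u hu =>
      spectrum_nonneg_of_nonneg hy hu
    have hsay : IsSelfAdjoint y := .of_nonneg hy
    have hcle : cfc (fun u => k * u + (φ t - k * t)) y ≤ cfc φ y :=
      cfc_mono (f := fun u => k * u + (φ t - k * t)) (g := φ) (a := y)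
        (fun u hu => by
          show k * u + (φ t - k * t) ≤ φ u
          have h1 := hsub u (hspec u hu)
          have h2 : k * (u - t) = k * u - k * t := by ring
          linarith)
        (((continuous_const.mul continuous_id).add continuous_const).continuousOn)
        (hφ.continuousOn.mono (fun u hu => Set.mem_Ici.mpr (hspec u hu)))
    have hceq : cfc (fun u => k * u + (φ t - k * t)) y =
        k • y + algebraMap ℝ A (φ t - k * t) := by
      rw [cfc_add_const (φ t - k * t) (fun u => k * u) y
        ((continuous_const.mul continuous_id).continuousOn) hsay,
        cfc_const_mul_id k y hsay]
    rw [hceq] at hcle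
    have hfm := fmono _ _ hcle
    have hval : (f (k • y + algebraMap ℝ A (φ t - k * t))).re =
        k * (f y).re + (φ t - k * t) * (f 1).re := by
      rw [map_add, Algebra.algebraMap_eq_smul_one, LinearMap.map_smul_of_tower,
        LinearMap.map_smul_of_tower]
      simp [Complex.real_smul, Complex.add_re, Complex.mul_re]
    rw [hval] at hfm
    nlinarith [mul_nonneg (by linarith : (0:ℝ) ≤ k * t - φ t)
        (by linarith : (0:ℝ) ≤ 1 - (f 1).re),
      mul_nonneg hk0 (by linarith : (0:ℝ) ≤ (f y).re - t)]
  have hR1 : φ t ≤ (f (cfc φ (a * (xadj * x)))).re := key _ hy1pos ht1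
  have hR2 : φ t ≤ (f (cfc φ (a * (x * xadj)))).re := key _ hy2pos ht2
  calc φ t = α * φ t + (1 - α) * φ t := by ring
    _ ≤ α * (f (cfc φ (a * (xadj * x)))).re + (1 - α) * (f (cfc φ (a * (x * xadj)))).re :=
      add_le_add (mul_le_mul_of_nonneg_left hR1 hα0)
        (mul_le_mul_of_nonneg_left hR2 (by linarith))

end
end

section
/- Let A be a unital C*-algebra, a a nonzero positive element of A, and x ∈ A admitting an a-adjoint x^{#a}, with ‖x‖_a < ∞ and ‖x^{#a}‖_a < ∞. Then for every 0 ≤ α ≤ 1, v_a(x)² ≤ ‖α·x^{#a}x + (1 − α)·x x^{#a}‖_a. -/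
open scoped ComplexOrder

section

variable {A : Type*} [CStarAlgebra A] [PartialOrder A] [StarOrderedRing A]

/-- The `a`-numerical radius `vₐ(x) = sup {|f(a x)| : f ∈ S_a(A)}`. -/
noncomputable def aNR (a x : A) : ℝ :=
  sSup {r : ℝ | ∃ f : A →ₗ[ℂ] ℂ, MemSa a f ∧ r = ‖f (a * x)‖}



lemma stmt5_posB {f : A →ₗ[ℂ] ℂ} (hf : IsPosLF f) {a : A} (ha : 0 ≤ a) (u : A) :
    0 ≤ f (star u * a * u) := by
  have hs : star (CFC.sqrt a) = CFC.sqrt a :=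
    (IsSelfAdjoint.of_nonneg (CFC.sqrt_nonneg a)).star_eq
  have key : star (CFC.sqrt a * u) * (CFC.sqrt a * u) = star u * a * u := by
    rw [star_mul, hs, mul_assoc, ← mul_assoc (CFC.sqrt a), CFC.sqrt_mul_sqrt_self a ha,
      ← mul_assoc]
  rw [← key]; exact hf _

lemma stmt5_im {f : A →ₗ[ℂ] ℂ} (hf : IsPosLF f) {a : A} (ha : 0 ≤ a) (u : A) :
    (f (star u * a * u)).im = 0 :=
  ((Complex.nonneg_iff.mp (stmt5_posB hf ha u)).2).symm

lemma stmt5_re_nonneg {f : A →ₗ[ℂ] ℂ} (hf : IsPosLF f) {a : A} (ha : 0 ≤ a) (u : A) :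
    0 ≤ (f (star u * a * u)).re :=
  (Complex.nonneg_iff.mp (stmt5_posB hf ha u)).1

lemma stmt5_expand {f : A →ₗ[ℂ] ℂ} (a u v : A) (s : ℂ) :
    f (star (u + s • v) * a * (u + s • v)) =
      f (star u * a * u) + s * f (star u * a * v) +
        (starRingEnd ℂ) s * f (star v * a * u) +
        (starRingEnd ℂ) s * s * f (star v * a * v) := by
  simp only [star_add, star_smul, add_mul, mul_add, smul_mul_assoc, mul_smul_comm, map_add,
    map_smul, smul_eq_mul, RCLike.star_def]
  ring

lemma stmt5_herm {f : A →ₗ[ℂ] ℂ} (hf : IsPosLF f) {a : A} (ha : 0 ≤ a) (u v : A) :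
    f (star v * a * u) = (starRingEnd ℂ) (f (star u * a * v)) := by
  have h1 := stmt5_im hf ha (u + (1 : ℂ) • v)
  have h2 := stmt5_im hf ha (u + Complex.I • v)
  rw [stmt5_expand a u v 1] at h1
  rw [stmt5_expand a u v Complex.I] at h2
  simp only [map_one, one_mul, mul_one, Complex.conj_I, Complex.add_im, Complex.mul_im,
    Complex.I_re, Complex.I_im, Complex.neg_im, Complex.neg_re, neg_mul,
    stmt5_im hf ha u, stmt5_im hf ha v] at h1 h2
  apply Complex.ext <;>
    simp only [Complex.conj_re, Complex.conj_im] <;> linarith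

lemma stmt5_CS {f : A →ₗ[ℂ] ℂ} (hf : IsPosLF f) {a : A} (ha : 0 ≤ a) (u v : A) :
    ‖f (star u * a * v)‖ ^ 2 ≤
      (f (star u * a * u)).re * (f (star v * a * v)).re := by
  set c := f (star u * a * v) with hc
  by_cases hc0 : c = 0
  · simp [hc0]
    exact mul_nonneg (stmt5_re_nonneg hf ha u) (stmt5_re_nonneg hf ha v)
  · set r0 := (f (star u * a * u)).re
    set r1 := (f (star v * a * v)).re
    have key : ∀ t : ℝ, 0 ≤ (Complex.normSq c * r1) * (t * t) +
        (2 * Complex.normSq c) * t + r0 := by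
      intro t
      have h0 := stmt5_re_nonneg hf ha (u + ((t : ℂ) * (starRingEnd ℂ) c) • v)
      rw [stmt5_expand a u v _] at h0
      rw [stmt5_herm hf ha u v] at h0
      have hexp : f (star u * a * u) + ((t : ℂ) * (starRingEnd ℂ) c) * c +
          (starRingEnd ℂ) ((t : ℂ) * (starRingEnd ℂ) c) * (starRingEnd ℂ) c +
          (starRingEnd ℂ) ((t : ℂ) * (starRingEnd ℂ) c) * ((t : ℂ) * (starRingEnd ℂ) c) *
            f (star v * a * v) =
          f (star u * a * u) + (2 * Complex.normSq c * t : ℝ) +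
            ((Complex.normSq c * (t * t) : ℝ)) * f (star v * a * v) := by
        simp only [map_mul, Complex.conj_conj, Complex.conj_ofReal]
        push_cast
        linear_combination (2 * (t : ℂ) + (t : ℂ) * (t : ℂ) * f (star v * a * v)) *
          Complex.mul_conj c
      rw [hexp] at h0
      have h1 : 0 ≤ r0 + 2 * Complex.normSq c * t + Complex.normSq c * (t * t) * r1 := by
        simpa [Complex.add_re, Complex.mul_re, Complex.ofReal_re, Complex.ofReal_im,
          stmt5_im hf ha v] using h0
      linarith
    have hd := discrim_le_zero key
    rw [discrim] at hd
    have hnormSq : 0 < Complex.normSq c := Complex.normSq_pos.mpr hc0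
    have : Complex.normSq c ≤ r0 * r1 := by nlinarith [sq_nonneg (Complex.normSq c)]
    calc ‖c‖ ^ 2 = Complex.normSq c := by
          rw [Complex.sq_norm]
      _ ≤ r0 * r1 := this
/-- The compression `u ↦ f (z* u z)` as a linear map. -/
noncomputable def stmt5_comp (f : A →ₗ[ℂ] ℂ) (z : A) : A →ₗ[ℂ] ℂ where
  toFun u := f (star z * u * z)
  map_add' u v := by
    show f (star z * (u + v) * z) = f (star z * u * z) + f (star z * v * z)
    rw [mul_add, add_mul, map_add]
  map_smul' c u := by
    show f (star z * (c • u) * z) = c * f (star z * u * z)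
    rw [mul_smul_comm, smul_mul_assoc, map_smul, smul_eq_mul]

lemma stmt5_comp_pos {f : A →ₗ[ℂ] ℂ} (hf : IsPosLF f) (z : A) :
    IsPosLF (stmt5_comp f z) := by
  intro u
  show 0 ≤ f (star z * (star u * u) * z)
  have : star z * (star u * u) * z = star (u * z) * (u * z) := by
    simp only [star_mul, mul_assoc]
  rw [this]; exact hf _

lemma stmt5_conj_bound {a : A} (ha : 0 ≤ a) {f : A →ₗ[ℂ] ℂ} (hf : MemSa a f)
    {w : A} {M : ℝ} (hM : 0 ≤ M) (hMb : ∀ r ∈ aNormSet a w, r ≤ M) (z : A) :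
    (f (star z * (star w * a * w) * z)).re ≤ M ^ 2 * (f (star z * a * z)).re := by
  set r : ℝ := (f (star z * a * z)).re with hr
  have hr0 : 0 ≤ r := stmt5_re_nonneg hf.1 ha z
  have hXnn : 0 ≤ (f (star w * a * w)).re := stmt5_re_nonneg hf.1 ha w
  have hcomp_a : (stmt5_comp f z) a = (r : ℂ) := by
    show f (star z * a * z) = (r : ℂ)
    have h := stmt5_posB hf.1 ha z
    have him := stmt5_im hf.1 ha z
    exact Complex.ext rfl him
  -- for every ε > 0, the normalized functional is in S_a
  have key : ∀ ε : ℝ, 0 < ε →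
      (f (star z * (star w * a * w) * z)).re ≤ r * M ^ 2 + ε * M ^ 2 := by
    intro ε hε
    have hrε : (0 : ℝ) < r + ε := by linarith
    set g : A →ₗ[ℂ] ℂ := ((r + ε : ℝ) : ℂ)⁻¹ • (stmt5_comp f z + (ε : ℂ) • f) with hg
    have hgpos : IsPosLF g := by
      intro u
      have h1 : 0 ≤ (stmt5_comp f z) (star u * u) := stmt5_comp_pos hf.1 z u
      have h2 : 0 ≤ f (star u * u) := hf.1 u
      have h3 : 0 ≤ ((ε : ℝ) : ℂ) := Complex.zero_le_real.mpr hε.le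
      have h4 : 0 ≤ (((r + ε : ℝ) : ℂ))⁻¹ := by
        rw [← Complex.ofReal_inv]
        exact Complex.zero_le_real.mpr (inv_nonneg.mpr hrε.le)
      show 0 ≤ ((r + ε : ℝ) : ℂ)⁻¹ * ((stmt5_comp f z) (star u * u) + (ε : ℂ) * f (star u * u))
      exact mul_nonneg h4 (add_nonneg h1 (mul_nonneg h3 h2))
    have hga : g a = 1 := by
      show ((r + ε : ℝ) : ℂ)⁻¹ * ((stmt5_comp f z) a + (ε : ℂ) * f a) = 1
      rw [hcomp_a, hf.2, mul_one, ← Complex.ofReal_add]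
      exact inv_mul_cancel₀ (Complex.ofReal_ne_zero.mpr (ne_of_gt hrε))
    have hmem : Real.sqrt ((g (star w * a * w)).re) ∈ aNormSet a w :=
      ⟨g, ⟨hgpos, hga⟩, rfl⟩
    have hle : Real.sqrt ((g (star w * a * w)).re) ≤ M := hMb _ hmem
    have hgre : (g (star w * a * w)).re =
        (r + ε)⁻¹ * ((f (star z * (star w * a * w) * z)).re + ε * (f (star w * a * w)).re) := by
      show ((((r + ε : ℝ) : ℂ))⁻¹ * ((stmt5_comp f z) (star w * a * w) +
        (ε : ℂ) * f (star w * a * w))).re = _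
      rw [← Complex.ofReal_inv]
      simp only [Complex.re_ofReal_mul, Complex.add_re, Complex.re_ofReal_mul]
      rfl
    have hG : 0 ≤ (f (star w * a * w)).re := hXnn
    have hF : 0 ≤ (f (star z * (star w * a * w) * z)).re :=
      stmt5_re_nonneg (stmt5_comp_pos hf.1 z) ha w
    have htM : (g (star w * a * w)).re ≤ M ^ 2 := (Real.sqrt_le_iff.mp hle).2
    rw [hgre] at htM
    rw [inv_mul_le_iff₀ hrε] at htM
    nlinarith [mul_nonneg (le_of_lt hε) hG]
  set F := (f (star z * (star w * a * w) * z)).re with hF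
  by_contra hcon
  push_neg at hcon
  have hε : 0 < (F - M ^ 2 * r) / (M ^ 2 + 1) := div_pos (by linarith) (by positivity)
  have hk := key _ hε
  have hfrac : (F - M ^ 2 * r) / (M ^ 2 + 1) * M ^ 2 < F - M ^ 2 * r := by
    rw [div_mul_eq_mul_div, div_lt_iff₀ (by positivity)]
    nlinarith [sq_nonneg M]
  linarith

/-- `p_f(w z) ≤ M p_f(z)` where `M` bounds `aNormSet a w`. -/
lemma stmt5_mul_bound {a : A} (ha : 0 ≤ a) {f : A →ₗ[ℂ] ℂ} (hf : MemSa a f)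
    {w : A} {M : ℝ} (hM : 0 ≤ M) (hMb : ∀ r ∈ aNormSet a w, r ≤ M) (z : A) :
    Real.sqrt (f (star (w * z) * a * (w * z))).re ≤
      M * Real.sqrt (f (star z * a * z)).re := by
  have hkey : star (w * z) * a * (w * z) = star z * (star w * a * w) * z := by
    simp only [star_mul, mul_assoc]
  rw [hkey]
  calc Real.sqrt (f (star z * (star w * a * w) * z)).re
      ≤ Real.sqrt (M ^ 2 * (f (star z * a * z)).re) :=
        Real.sqrt_le_sqrt (stmt5_conj_bound ha hf hM hMb z)
    _ = M * Real.sqrt (f (star z * a * z)).re := by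
        rw [Real.sqrt_mul (sq_nonneg M), Real.sqrt_sq hM]

/-- Scaling: `p_f(t • u) = t p_f(u)` for real `t ≥ 0`. -/
lemma stmt5_smul {f : A →ₗ[ℂ] ℂ} (a u : A) (t : ℝ) (ht : 0 ≤ t) :
    Real.sqrt (f (star ((t : ℂ) • u) * a * ((t : ℂ) • u))).re =
      t * Real.sqrt (f (star u * a * u)).re := by
  have h : f (star ((t : ℂ) • u) * a * ((t : ℂ) • u)) =
      ((t ^ 2 : ℝ) : ℂ) * f (star u * a * u) := by
    simp only [star_smul, smul_mul_assoc, mul_smul_comm, map_smul, smul_eq_mul,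
      Complex.star_def, Complex.conj_ofReal]
    push_cast
    ring
  rw [h, Complex.re_ofReal_mul, Real.sqrt_mul (sq_nonneg t), Real.sqrt_sq ht]

/-- Triangle inequality for the seminorm `p_f`. -/
lemma stmt5_triangle {f : A →ₗ[ℂ] ℂ} (hf : IsPosLF f) {a : A} (ha : 0 ≤ a) (u v : A) :
    Real.sqrt (f (star (u + v) * a * (u + v))).re ≤
      Real.sqrt (f (star u * a * u)).re + Real.sqrt (f (star v * a * v)).re := by
  set ru := (f (star u * a * u)).re
  set rv := (f (star v * a * v)).re
  have hru : 0 ≤ ru := stmt5_re_nonneg hf ha u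
  have hrv : 0 ≤ rv := stmt5_re_nonneg hf ha v
  have habs : (f (star u * a * v)).re ≤ Real.sqrt ru * Real.sqrt rv := by
    have h1 : (f (star u * a * v)).re ≤ ‖f (star u * a * v)‖ :=
      Complex.re_le_norm _
    have h2 : ‖f (star u * a * v)‖ ≤ Real.sqrt (ru * rv) := by
      rw [← Real.sqrt_sq (norm_nonneg _)]
      exact Real.sqrt_le_sqrt (stmt5_CS hf ha u v)
    rw [Real.sqrt_mul hru] at h2
    linarith
  have hexp : (f (star (u + v) * a * (u + v))).re = ru + 2 * (f (star u * a * v)).re + rv := by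
    have h := stmt5_expand (f := f) a u v 1
    simp only [one_smul, map_one, one_mul, mul_one] at h
    rw [stmt5_herm hf ha u v] at h
    rw [h]
    simp [Complex.add_re, Complex.conj_re]
    ring
  have hsum : (f (star (u + v) * a * (u + v))).re ≤
      (Real.sqrt ru + Real.sqrt rv) ^ 2 := by
    rw [hexp]
    have := Real.sq_sqrt hru
    have := Real.sq_sqrt hrv
    nlinarith [Real.sqrt_nonneg ru, Real.sqrt_nonneg rv]
  calc Real.sqrt (f (star (u + v) * a * (u + v))).re
      ≤ Real.sqrt ((Real.sqrt ru + Real.sqrt rv) ^ 2) := Real.sqrt_le_sqrt hsum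
    _ = Real.sqrt ru + Real.sqrt rv :=
        Real.sqrt_sq (by positivity)


/-- `vₐ(x)² ≤ ‖α x^{#a} x + (1-α) x x^{#a}‖ₐ`. -/
theorem stmt5 (a : A) (ha : 0 ≤ a) (ha0 : a ≠ 0)
    (x xadj : A) (hadj : a * xadj = star x * a)
    (hx : BddAbove (aNormSet a x)) (hxadj : BddAbove (aNormSet a xadj))
    (α : ℝ) (hα0 : 0 ≤ α) (hα1 : α ≤ 1) :
    aNR a x ^ 2 ≤ aNorm a ((α : ℂ) • (xadj * x) + ((1 - α : ℝ) : ℂ) • (x * xadj)) := by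
  have hastar : star a = a := (IsSelfAdjoint.of_nonneg ha).star_eq
  have hadj' : star xadj * a = a * x := by
    have h : star (a * xadj) = star (star x * a) := by rw [hadj]
    simpa [star_mul, hastar] using h
  set β : ℝ := 1 - α with hβ
  have hβ0 : 0 ≤ β := by rw [hβ]; linarith
  set y : A := (α : ℂ) • (xadj * x) + ((β : ℝ) : ℂ) • (x * xadj) with hy
  -- nonnegative upper bounds for the two aNormSets
  obtain ⟨Mx0, hMx0⟩ := hx
  obtain ⟨My0, hMy0⟩ := hxadj
  set Mx : ℝ := max Mx0 0 with hMx
  set My : ℝ := max My0 0 with hMy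
  have hMxnn : 0 ≤ Mx := le_max_right _ _
  have hMynn : 0 ≤ My := le_max_right _ _
  have hMxb : ∀ r ∈ aNormSet a x, r ≤ Mx := fun r hr =>
    le_trans (hMx0 hr) (le_max_left _ _)
  have hMyb : ∀ r ∈ aNormSet a xadj, r ≤ My := fun r hr =>
    le_trans (hMy0 hr) (le_max_left _ _)
  -- the aNormSet of y is bounded above by Mx * My
  have hybound : ∀ r ∈ aNormSet a y, r ≤ Mx * My := by
    rintro r ⟨f, hf, rfl⟩
    have htr := stmt5_triangle hf.1 ha ((α : ℂ) • (xadj * x)) (((β : ℝ) : ℂ) • (x * xadj))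
    have h1 : Real.sqrt (f (star ((α : ℂ) • (xadj * x)) * a * ((α : ℂ) • (xadj * x)))).re =
        α * Real.sqrt (f (star (xadj * x) * a * (xadj * x))).re := stmt5_smul a _ α hα0
    have h2 : Real.sqrt (f (star (((β : ℝ) : ℂ) • (x * xadj)) * a *
        (((β : ℝ) : ℂ) • (x * xadj)))).re =
        β * Real.sqrt (f (star (x * xadj) * a * (x * xadj))).re := stmt5_smul a _ β hβ0
    have hxmem : Real.sqrt (f (star x * a * x)).re ∈ aNormSet a x := ⟨f, hf, rfl⟩
    have hxadjmem : Real.sqrt (f (star xadj * a * xadj)).re ∈ aNormSet a xadj := ⟨f, hf, rfl⟩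
    have h3 : Real.sqrt (f (star (xadj * x) * a * (xadj * x))).re ≤ My * Mx := by
      calc Real.sqrt (f (star (xadj * x) * a * (xadj * x))).re
          ≤ My * Real.sqrt (f (star x * a * x)).re := stmt5_mul_bound ha hf hMynn hMyb x
        _ ≤ My * Mx := mul_le_mul_of_nonneg_left (hMxb _ hxmem) hMynn
    have h4 : Real.sqrt (f (star (x * xadj) * a * (x * xadj))).re ≤ Mx * My := by
      calc Real.sqrt (f (star (x * xadj) * a * (x * xadj))).re
          ≤ Mx * Real.sqrt (f (star xadj * a * xadj)).re := stmt5_mul_bound ha hf hMxnn hMxb xadj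
        _ ≤ Mx * My := mul_le_mul_of_nonneg_left (hMyb _ hxadjmem) hMxnn
    have hr1 : 0 ≤ Real.sqrt (f (star (xadj * x) * a * (xadj * x))).re := Real.sqrt_nonneg _
    have hr2 : 0 ≤ Real.sqrt (f (star (x * xadj) * a * (x * xadj))).re := Real.sqrt_nonneg _
    rw [h1, h2] at htr
    have hαβ : α + β = 1 := by rw [hβ]; ring
    nlinarith [mul_le_mul_of_nonneg_left h3 hα0, mul_le_mul_of_nonneg_left h4 hβ0]
  have hybdd : BddAbove (aNormSet a y) := ⟨Mx * My, hybound⟩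
  have hNnn : 0 ≤ aNorm a y :=
    Real.sSup_nonneg (by rintro r ⟨f, hf, rfl⟩; exact Real.sqrt_nonneg _)
  -- per-functional bound
  have hmain : ∀ f : A →ₗ[ℂ] ℂ, MemSa a f →
      ‖f (a * x)‖ ^ 2 ≤ aNorm a y := by
    intro f hf
    have hone : star (1 : A) * a * (1 : A) = a := by simp
    have hone_re : (f (star (1 : A) * a * (1 : A))).re = 1 := by
      rw [hone, hf.2]; simp
    have hP1 : ‖f (a * x)‖ ^ 2 ≤ (f (star x * a * x)).re := by
      have h := stmt5_CS hf.1 ha (1 : A) x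
      have h1ax : star (1 : A) * a * x = a * x := by simp
      rw [h1ax, hone_re, one_mul] at h
      exact h
    have hP2 : ‖f (a * x)‖ ^ 2 ≤ (f (star xadj * a * xadj)).re := by
      have h := stmt5_CS hf.1 ha xadj (1 : A)
      have hax1 : star xadj * a * (1 : A) = a * x := by rw [mul_one, hadj']
      rw [hax1, hone_re, mul_one] at h
      exact h
    set P := ‖f (a * x)‖ ^ 2 with hP
    have hPnn : 0 ≤ P := by positivity
    have hr1 : 0 ≤ (f (star x * a * x)).re := stmt5_re_nonneg hf.1 ha x
    have hr2 : 0 ≤ (f (star xadj * a * xadj)).re := stmt5_re_nonneg hf.1 ha xadj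
    have hay : f (a * y) = (α : ℂ) * f (star x * a * x) +
        ((β : ℝ) : ℂ) * f (star xadj * a * xadj) := by
      have hmul : a * y = (α : ℂ) • (star x * a * x) +
          ((β : ℝ) : ℂ) • (star xadj * a * xadj) := by
        rw [hy, mul_add, mul_smul_comm, mul_smul_comm, ← mul_assoc, hadj, ← mul_assoc, ← hadj']
      rw [hmul, map_add, map_smul, map_smul, smul_eq_mul, smul_eq_mul]
    have hayre : (f (a * y)).re = α * (f (star x * a * x)).re +
        β * (f (star xadj * a * xadj)).re := by
      rw [hay]
      simp [Complex.add_re, Complex.re_ofReal_mul]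
    have hPle : P ≤ (f (a * y)).re := by
      rcases eq_or_lt_of_le hPnn with h0 | hPpos
      · rw [hayre]
        nlinarith [mul_nonneg hα0 hr1, mul_nonneg hβ0 hr2]
      · have hrw : P = P ^ α * P ^ β := by
          rw [← Real.rpow_add hPpos, hβ, show α + (1 - α) = 1 by ring, Real.rpow_one]
        have ha1 : P ^ α ≤ (f (star x * a * x)).re ^ α := Real.rpow_le_rpow hPnn hP1 hα0
        have ha2 : P ^ β ≤ (f (star xadj * a * xadj)).re ^ β := Real.rpow_le_rpow hPnn hP2 hβ0
        have hgm := Real.geom_mean_le_arith_mean2_weighted hα0 hβ0 hr1 hr2 (by rw [hβ]; ring)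
        have hmul2 : P ^ α * P ^ β ≤
            (f (star x * a * x)).re ^ α * (f (star xadj * a * xadj)).re ^ β :=
          mul_le_mul ha1 ha2 (Real.rpow_nonneg hPnn β) (Real.rpow_nonneg hr1 α)
        rw [hayre]
        calc P = P ^ α * P ^ β := hrw
          _ ≤ (f (star x * a * x)).re ^ α * (f (star xadj * a * xadj)).re ^ β := hmul2
          _ ≤ α * (f (star x * a * x)).re + β * (f (star xadj * a * xadj)).re := hgm
    have hCSy := stmt5_CS hf.1 ha (1 : A) y
    have h1ay : star (1 : A) * a * y = a * y := by simp
    rw [h1ay, hone_re, one_mul] at hCSy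
    have habs_le : ‖f (a * y)‖ ≤ Real.sqrt ((f (star y * a * y)).re) :=
      Real.le_sqrt_of_sq_le hCSy
    have hymem : Real.sqrt ((f (star y * a * y)).re) ∈ aNormSet a y := ⟨f, hf, rfl⟩
    calc P ≤ (f (a * y)).re := hPle
      _ ≤ ‖f (a * y)‖ := Complex.re_le_norm _
      _ ≤ Real.sqrt ((f (star y * a * y)).re) := habs_le
      _ ≤ aNorm a y := le_csSup hybdd hymem
  have hsup : aNR a x ≤ Real.sqrt (aNorm a y) := by
    apply Real.sSup_le _ (Real.sqrt_nonneg _)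
    rintro r ⟨f, hf, rfl⟩
    exact Real.le_sqrt_of_sq_le (hmain f hf)
  have hNRnn : 0 ≤ aNR a x :=
    Real.sSup_nonneg (by rintro r ⟨f, hf, rfl⟩; exact norm_nonneg _)
  calc aNR a x ^ 2 ≤ Real.sqrt (aNorm a y) ^ 2 := by
        exact pow_le_pow_left₀ hNRnn hsup 2
    _ = aNorm a y := Real.sq_sqrt hNnn

end
end

section
/- Let A be a unital C*-algebra, x ∈ A, φ an Orlicz function, and 0 ≤ α ≤ 1. Then φ(v(x)²) ≤ ‖α·φ(x*x) + (1 − α)·φ(x x*)‖, where φ(x*x) and φ(x x*) are defined by continuous functional calculus on the positive elements x*x and x x*. -/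
open scoped ComplexOrder

section

variable {A : Type*} [CStarAlgebra A] [PartialOrder A] [StarOrderedRing A]

/-- A state on `A`: a positive linear functional with `g 1 = 1`. -/
def IsState (g : A →ₗ[ℂ] ℂ) : Prop := IsPosLF g ∧ g 1 = 1

/-- The (algebraic) numerical radius `v(x) = sup {|g x| : g a state on A}`. -/
noncomputable def nr (x : A) : ℝ :=
  sSup {r : ℝ | ∃ g : A →ₗ[ℂ] ℂ, IsState g ∧ r = ‖g x‖}

lemma exists_support {φ : ℝ → ℝ} (hconv : ConvexOn ℝ (Set.Ici 0) φ)
    (hmono : MonotoneOn φ (Set.Ici 0)) {t₀ : ℝ} (ht₀ : 0 ≤ t₀) :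
    ∃ c : ℝ, ∀ t ∈ Set.Ici (0 : ℝ), φ t₀ + c * (t - t₀) ≤ φ t := by
  rcases eq_or_lt_of_le ht₀ with h0 | h0
  · exact ⟨0, fun t ht => by
      simpa [← h0] using hmono (le_refl (0:ℝ)) ht ht⟩
  · set T := (fun s => (φ t₀ - φ s) / (t₀ - s)) '' Set.Ico 0 t₀ with hT
    have hne : T.Nonempty := ⟨_, ⟨0, ⟨le_refl 0, h0⟩, rfl⟩⟩
    have hub0 : ∀ r ∈ T, r ≤ (φ (t₀ + 1) - φ t₀) / (t₀ + 1 - t₀) := by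
      rintro r ⟨s, ⟨hs0, hst⟩, rfl⟩
      exact hconv.slope_mono_adjacent hs0 (by linarith : (0:ℝ) ≤ t₀ + 1) hst (by linarith)
    have hbdd : BddAbove T := ⟨_, hub0⟩
    refine ⟨sSup T, fun t ht => ?_⟩
    rcases lt_trichotomy t t₀ with hlt | heq | hgt
    · have h1 : (φ t₀ - φ t) / (t₀ - t) ≤ sSup T := le_csSup hbdd ⟨t, ⟨ht, hlt⟩, rfl⟩
      rw [div_le_iff₀ (by linarith)] at h1
      nlinarith [h1]
    · simp [heq]
    · have hub : ∀ r ∈ T, r ≤ (φ t - φ t₀) / (t - t₀) := by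
        rintro r ⟨s, ⟨hs0, hst⟩, rfl⟩
        exact hconv.slope_mono_adjacent hs0 ht hst hgt
      have h1 := csSup_le hne hub
      rw [le_div_iff₀ (by linarith)] at h1
      nlinarith [h1]

variable {g : A →ₗ[ℂ] ℂ}

lemma IsPosLF.apply_nonneg (hg : IsPosLF g) {a : A} (ha : 0 ≤ a) : 0 ≤ g a := by
  have h1 : star (CFC.sqrt a) * CFC.sqrt a = a := by
    rw [(IsSelfAdjoint.of_nonneg (CFC.sqrt_nonneg (a := a))).star_eq,
      CFC.sqrt_mul_sqrt_self a ha]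
  simpa [h1] using hg (CFC.sqrt a)

lemma IsPosLF.mono (hg : IsPosLF g) {a b : A} (h : a ≤ b) : g a ≤ g b := by
  have := hg.apply_nonneg (sub_nonneg.mpr h)
  rw [map_sub] at this
  exact sub_nonneg.mp this

lemma IsPosLF.im_eq_zero (hg : IsPosLF g) {a : A} (ha : IsSelfAdjoint a) : (g a).im = 0 := by
  have h1 := hg.apply_nonneg (CFC.posPart_nonneg a)
  have h2 := hg.apply_nonneg (CFC.negPart_nonneg a)
  rw [Complex.nonneg_iff] at h1 h2
  have h3 : g a = g (a⁺) - g (a⁻) := by rw [← map_sub, CFC.posPart_sub_negPart a ha]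
  rw [h3, Complex.sub_im, ← h1.2, ← h2.2]
  ring

lemma IsPosLF.map_star (hg : IsPosLF g) (a : A) :
    g (star a) = starRingEnd ℂ (g a) := by
  have hb := hg.im_eq_zero (IsSelfAdjoint.add_star_self a)
  rw [map_add] at hb
  have hd : IsSelfAdjoint (Complex.I • (a - star a)) := by
    rw [IsSelfAdjoint, star_smul, star_sub, star_star, Complex.star_def, Complex.conj_I,
      neg_smul, smul_sub, smul_sub]
    abel
  have hd' := hg.im_eq_zero hd
  rw [map_smul, map_sub, smul_eq_mul] at hd'
  set z := g a
  set s := g (star a)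
  apply Complex.ext
  · have h' : z.re - s.re = 0 := by simpa [Complex.mul_im] using hd'
    simp only [Complex.conj_re]
    linarith
  · have h' : z.im + s.im = 0 := by simpa using hb
    simp only [Complex.conj_im]
    linarith

lemma IsPosLF.cauchy_schwarz (hg : IsPosLF g) (hone : g 1 = 1) (x : A) :
    ‖g x‖ ^ 2 ≤ (g (star x * x)).re := by
  set c := g x with hcdef
  have h := hg (x - c • 1)
  have expand : star (x - c • 1) * (x - c • 1)
      = star x * x - c • star x - (starRingEnd ℂ c) • x + (c * starRingEnd ℂ c) • 1 := by
    simp only [star_sub, star_smul, star_one, Complex.star_def, sub_mul, mul_sub,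
      smul_mul_assoc, mul_smul_comm, smul_smul, smul_sub, mul_one, one_mul]
    abel
  rw [expand] at h
  simp only [map_add, map_sub, map_smul, hone, smul_eq_mul, mul_one] at h
  rw [hg.map_star x, ← hcdef] at h
  rw [show g (star x * x) - c * starRingEnd ℂ c - starRingEnd ℂ c * c + c * starRingEnd ℂ c
      = g (star x * x) - (Complex.normSq c : ℝ) by
      rw [show (starRingEnd ℂ) c * c = (Complex.normSq c : ℂ) by rw [mul_comm, Complex.mul_conj]]
      ring,
    Complex.nonneg_iff] at h
  have h1 := h.1
  rw [Complex.sub_re, Complex.ofReal_re] at h1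
  rw [Complex.sq_norm]
  linarith

lemma IsPosLF.algebraMap_apply (hg : IsPosLF g) (hone : g 1 = 1) (r : ℝ) :
    g (algebraMap ℝ A r) = (r : ℂ) := by
  rw [Algebra.algebraMap_eq_smul_one, g.map_smul_of_tower, hone, Complex.real_smul, mul_one]

lemma IsPosLF.jensen (hg : IsPosLF g) (hone : g 1 = 1) {a : A} (ha : 0 ≤ a)
    {φ : ℝ → ℝ} (hconv : ConvexOn ℝ (Set.Ici 0) φ) (hmono : MonotoneOn φ (Set.Ici 0))
    (hcont : ContinuousOn φ (Set.Ici 0)) :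
    φ ((g a).re) ≤ (g (cfc φ a)).re := by
  have hsa : IsSelfAdjoint a := .of_nonneg ha
  have hspec : spectrum ℝ a ⊆ Set.Ici 0 := fun t ht => spectrum_nonneg_of_nonneg ha ht
  have ht₀ : 0 ≤ (g a).re := ((Complex.nonneg_iff).mp (hg.apply_nonneg ha)).1
  set t₀ := (g a).re with ht₀def
  obtain ⟨c, hc⟩ := exists_support hconv hmono ht₀
  have haff : cfc (fun t : ℝ => (φ t₀ - c * t₀) + c * t) a
      = algebraMap ℝ A (φ t₀ - c * t₀) + c • a := by
    rw [cfc_const_add _ _ a (by fun_prop) hsa, cfc_const_mul_id c a hsa]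
  have hle : cfc (fun t : ℝ => (φ t₀ - c * t₀) + c * t) a ≤ cfc φ a := by
    refine cfc_mono (fun t ht => ?_) (by fun_prop) (hcont.mono hspec)
    have := hc t (hspec ht)
    linarith
  rw [haff] at hle
  have hmle := hg.mono hle
  rw [map_add, hg.algebraMap_apply hone, g.map_smul_of_tower] at hmle
  have := ((Complex.le_def).mp hmle).1
  rw [Complex.add_re, Complex.ofReal_re, Complex.real_smul, Complex.mul_re,
    Complex.ofReal_re, Complex.ofReal_im] at this
  have him : (g a).im = 0 := hg.im_eq_zero hsa
  rw [him] at this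
  rw [← ht₀def] at this
  linarith

/-- `φ(v(x)²) ≤ ‖α φ(x* x) + (1-α) φ(x x*)‖`. -/
theorem stmt6 (x : A) (φ : ℝ → ℝ) (hφ : IsOrlicz φ)
    (α : ℝ) (hα0 : 0 ≤ α) (hα1 : α ≤ 1) :
    φ (nr x ^ 2) ≤
      ‖(α : ℂ) • cfc φ (star x * x) + ((1 - α : ℝ) : ℂ) • cfc φ (x * star x)‖ := by
  set p := cfc φ (star x * x) with hp
  set q := cfc φ (x * star x) with hq
  set z : A := (α : ℂ) • p + ((1 - α : ℝ) : ℂ) • q with hz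
  have hxx : (0:A) ≤ star x * x := star_mul_self_nonneg x
  have hxx' : (0:A) ≤ x * star x := mul_star_self_nonneg x
  have hpsa : IsSelfAdjoint p := cfc_predicate φ (star x * x)
  have hqsa : IsSelfAdjoint q := cfc_predicate φ (x * star x)
  have hzsa : IsSelfAdjoint z := by
    rw [hz, ← Complex.coe_algebraMap, algebraMap_smul, algebraMap_smul]
    exact ((show IsSelfAdjoint α from star_trivial α).smul hpsa).add ((show IsSelfAdjoint (1 - α : ℝ) from star_trivial _).smul hqsa)
  have key : ∀ g : A →ₗ[ℂ] ℂ, IsState g → φ (‖g x‖ ^ 2) ≤ ‖z‖ := by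
    rintro g ⟨hgp, hg1⟩
    have h1 : ‖g x‖ ^ 2 ≤ (g (star x * x)).re := hgp.cauchy_schwarz hg1 x
    have h2 : ‖g x‖ ^ 2 ≤ (g (x * star x)).re := by
      have h := hgp.cauchy_schwarz hg1 (star x)
      rwa [star_star, hgp.map_star, Complex.norm_conj] at h
    set u := (g (star x * x)).re with hu
    set w := (g (x * star x)).re with hw
    have hu0 : 0 ≤ u := ((Complex.nonneg_iff).mp (hgp.apply_nonneg hxx)).1
    have hw0 : 0 ≤ w := ((Complex.nonneg_iff).mp (hgp.apply_nonneg hxx')).1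
    have hcomb : ‖g x‖ ^ 2 ≤ α * u + (1 - α) * w := by nlinarith
    have hmem : α * u + (1 - α) * w ∈ Set.Ici (0:ℝ) :=
      Set.mem_Ici.mpr (add_nonneg (mul_nonneg hα0 hu0) (mul_nonneg (by linarith) hw0))
    have s1 : φ (‖g x‖ ^ 2) ≤ φ (α * u + (1 - α) * w) :=
      hφ.monotoneOn (Set.mem_Ici.mpr (sq_nonneg _)) hmem hcomb
    have s2 : φ (α * u + (1 - α) * w) ≤ α * φ u + (1 - α) * φ w := by
      have := hφ.convexOn.2 (Set.mem_Ici.mpr hu0) (Set.mem_Ici.mpr hw0) hα0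
        (by linarith : (0:ℝ) ≤ 1 - α) (by ring)
      simpa [smul_eq_mul] using this
    have s3 : φ u ≤ (g p).re :=
      hgp.jensen hg1 hxx hφ.convexOn hφ.monotoneOn hφ.continuousOn
    have s4 : φ w ≤ (g q).re :=
      hgp.jensen hg1 hxx' hφ.convexOn hφ.monotoneOn hφ.continuousOn
    have s5 : (g z).re = α * (g p).re + (1 - α) * (g q).re := by
      rw [hz, map_add, map_smul, map_smul]
      simp only [smul_eq_mul, Complex.add_re, Complex.mul_re, Complex.ofReal_re,
        Complex.ofReal_im]
      ring
    have s6 : (g z).re ≤ ‖z‖ := by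
      have hle := hgp.mono (hzsa.le_algebraMap_norm_self)
      rw [hgp.algebraMap_apply hg1] at hle
      have := ((Complex.le_def).mp hle).1
      simpa using this
    calc φ (‖g x‖ ^ 2) ≤ α * φ u + (1 - α) * φ w := le_trans s1 s2
      _ ≤ α * (g p).re + (1 - α) * (g q).re :=
        add_le_add (mul_le_mul_of_nonneg_left s3 hα0)
          (mul_le_mul_of_nonneg_left s4 (by linarith))
      _ = (g z).re := s5.symm
      _ ≤ ‖z‖ := s6
  set S := {r : ℝ | ∃ g : A →ₗ[ℂ] ℂ, IsState g ∧ r = ‖g x‖} with hS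
  have hnr : nr x = sSup S := rfl
  rcases S.eq_empty_or_nonempty with hSe | hSne
  · rw [hnr, hSe, Real.sSup_empty]
    simpa [hφ.map_zero] using norm_nonneg z
  · have hbdd : BddAbove S := by
      refine ⟨‖x‖, ?_⟩
      rintro r ⟨g, ⟨hgp, hg1⟩, rfl⟩
      have h1 := hgp.cauchy_schwarz hg1 x
      have h2 : (g (star x * x)).re ≤ ‖star x * x‖ := by
        have hle := hgp.mono ((IsSelfAdjoint.star_mul_self x).le_algebraMap_norm_self)
        rw [hgp.algebraMap_apply hg1] at hle
        simpa using ((Complex.le_def).mp hle).1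
      have h3 : ‖star x * x‖ = ‖x‖ ^ 2 := by
        rw [CStarRing.norm_star_mul_self]; ring
      nlinarith [norm_nonneg (g x), norm_nonneg x]
    obtain ⟨us, hmonou, htend, hmem⟩ := exists_seq_tendsto_sSup hSne hbdd
    have t1 : Filter.Tendsto (fun n => (us n) ^ 2) Filter.atTop (nhds ((sSup S) ^ 2)) :=
      htend.pow 2
    have t2 : Filter.Tendsto (fun n => (us n) ^ 2) Filter.atTop
        (nhdsWithin ((sSup S) ^ 2) (Set.Ici 0)) :=
      tendsto_nhdsWithin_of_tendsto_nhds_of_eventually_within _ t1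
        (Filter.Eventually.of_forall fun n => Set.mem_Ici.mpr (sq_nonneg _))
    have t3 : Filter.Tendsto (fun n => φ ((us n) ^ 2)) Filter.atTop
        (nhds (φ ((sSup S) ^ 2))) :=
      Filter.Tendsto.comp (hφ.continuousOn _ (Set.mem_Ici.mpr (sq_nonneg _))) t2
    rw [hnr]
    refine le_of_tendsto t3 (Filter.Eventually.of_forall fun n => ?_)
    obtain ⟨g, hg, hgu⟩ := hmem n
    rw [hgu]
    exact key g hg


end
end

section
/- Let A be a unital C*-algebra, a a nonzero positive element of A, and x ∈ A admitting an a-adjoint x^{#a}, with ‖x‖_a < ∞ and ‖x^{#a}‖_a < ∞. Then for every Orlicz function φ, φ(v_a(x)²) ≤ (1/2)·φ(v_a(x²)) + (1/2)·φ(‖x x^{#a} + x^{#a} x‖_a / 2). -/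
open scoped ComplexOrder

section

variable {A : Type*} [CStarAlgebra A] [PartialOrder A] [StarOrderedRing A]

namespace Stmt8Aux

lemma im_zero {f : A →ₗ[ℂ] ℂ} (hf : IsPosLF f) (u : A) : (f (star u * u)).im = 0 :=
  ((Complex.nonneg_iff).mp (hf u)).2.symm

lemma re_nonneg {f : A →ₗ[ℂ] ℂ} (hf : IsPosLF f) (u : A) : 0 ≤ (f (star u * u)).re :=
  ((Complex.nonneg_iff).mp (hf u)).1

lemma herm {f : A →ₗ[ℂ] ℂ} (hf : IsPosLF f) (y z : A) :
    f (star z * y) = starRingEnd ℂ (f (star y * z)) := by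
  have e1 : star (y + z) * (y + z)
      = star y * y + (star y * z + (star z * y + star z * z)) := by
    rw [star_add]; noncomm_ring
  have h1 := im_zero hf (y + z)
  rw [e1, map_add, map_add, map_add] at h1
  simp only [Complex.add_im, im_zero hf y, im_zero hf z] at h1
  have e2 : star (y + Complex.I • z) * (y + Complex.I • z)
      = star y * y + (Complex.I • (star y * z) +
        ((-Complex.I) • (star z * y) + star z * z)) := by
    rw [star_add, star_smul, Complex.star_def, Complex.conj_I]
    simp only [add_mul, mul_add, smul_mul_assoc, mul_smul_comm, smul_smul, smul_add,
      smul_neg, neg_smul, neg_mul, Complex.I_mul_I, neg_neg, one_smul]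
    abel
  have h2 := im_zero hf (y + Complex.I • z)
  rw [e2, map_add, map_add, map_add, map_smul, map_smul] at h2
  simp only [Complex.add_im, im_zero hf y, im_zero hf z, smul_eq_mul,
    Complex.mul_im, Complex.I_re, Complex.I_im, Complex.neg_re, Complex.neg_im,
    zero_mul, one_mul, zero_add, add_zero, neg_zero, neg_mul] at h2
  apply Complex.ext <;> simp only [Complex.conj_re, Complex.conj_im]
  · linarith
  · linarith

/-- The positive semidefinite sesquilinear form attached to a positive functional. -/
noncomputable def core {f : A →ₗ[ℂ] ℂ} (hf : IsPosLF f) : PreInnerProductSpace.Core ℂ A :=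
{ inner := fun y z => f (star y * z)
  conj_inner_symm := fun x y => (herm hf y x).symm
  re_inner_nonneg := fun x => re_nonneg hf x
  add_left := fun x y z => by
    show f (star (x + y) * z) = f (star x * z) + f (star y * z)
    rw [star_add, add_mul, map_add]
  smul_left := fun x y r => by
    show f (star (r • x) * y) = starRingEnd ℂ r * f (star x * y)
    rw [star_smul, smul_mul_assoc, map_smul, smul_eq_mul]; rfl }

lemma cs {f : A →ₗ[ℂ] ℂ} (hf : IsPosLF f) (y z : A) :
    ‖f (star y * z)‖ ^ 2 ≤ (f (star y * y)).re * (f (star z * z)).re := by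
  have h := @InnerProductSpace.Core.inner_mul_inner_self_le ℂ A _ _ _ (core hf) y z
  calc ‖f (star y * z)‖ ^ 2
      = ‖f (star y * z)‖ * ‖f (star z * y)‖ := by
        rw [pow_two, herm hf y z, Complex.norm_conj]
    _ ≤ (f (star y * y)).re * (f (star z * z)).re := h

lemma herm1 {f : A →ₗ[ℂ] ℂ} (hf : IsPosLF f) (w : A) :
    f (star w) = starRingEnd ℂ (f w) := by
  have := herm hf (1 : A) w
  simpa using this

lemma tri {f : A →ₗ[ℂ] ℂ} (hf : IsPosLF f) (y z : A) :
    Real.sqrt (f (star (y + z) * (y + z))).re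
      ≤ Real.sqrt (f (star y * y)).re + Real.sqrt (f (star z * z)).re := by
  set py := Real.sqrt (f (star y * y)).re with hpy
  set pz := Real.sqrt (f (star z * z)).re with hpz
  have hpy0 : 0 ≤ py := Real.sqrt_nonneg _
  have hpz0 : 0 ≤ pz := Real.sqrt_nonneg _
  have hy2 : (f (star y * y)).re = py ^ 2 := (Real.sq_sqrt (re_nonneg hf y)).symm
  have hz2 : (f (star z * z)).re = pz ^ 2 := (Real.sq_sqrt (re_nonneg hf z)).symm
  have hcross : (f (star y * z)).re ≤ py * pz := by
    have h1 : (f (star y * z)).re ≤ ‖f (star y * z)‖ := Complex.re_le_norm _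
    have h2 := cs hf y z
    rw [hy2, hz2] at h2
    have habs : ‖f (star y * z)‖ ≤ py * pz := by
      nlinarith [norm_nonneg (f (star y * z)), mul_nonneg hpy0 hpz0]
    linarith
  have hexp : (f (star (y + z) * (y + z))).re
      = py ^ 2 + 2 * (f (star y * z)).re + pz ^ 2 := by
    have e : star (y + z) * (y + z)
        = star y * y + (star y * z + (star z * y + star z * z)) := by
      rw [star_add]; noncomm_ring
    rw [e, map_add, map_add, map_add]
    have hc : (f (star z * y)).re = (f (star y * z)).re := by
      rw [herm hf y z, Complex.conj_re]
    simp only [Complex.add_re, hc, hy2, hz2]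
    ring
  have hle : (f (star (y + z) * (y + z))).re ≤ (py + pz) ^ 2 := by
    rw [hexp]; nlinarith
  calc Real.sqrt (f (star (y + z) * (y + z))).re
      ≤ Real.sqrt ((py + pz) ^ 2) := Real.sqrt_le_sqrt hle
    _ = py + pz := Real.sqrt_sq (by positivity)

section AForm

variable {a : A} (ha : 0 ≤ a)

lemma asqrt (y z : A) (ha : 0 ≤ a) :
    star (CFC.sqrt a * z) * (CFC.sqrt a * y) = star z * a * y := by
  set c := CFC.sqrt a with hc
  have hcs : star c = c := (IsSelfAdjoint.of_nonneg (CFC.sqrt_nonneg a)).star_eq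
  have hcc : c * c = a := CFC.sqrt_mul_sqrt_self a ha
  rw [star_mul, hcs, mul_assoc (star z) c, ← mul_assoc c c y, hcc, ← mul_assoc]

lemma aform_re_nonneg {f : A →ₗ[ℂ] ℂ} (hf : IsPosLF f) (ha : 0 ≤ a) (y : A) :
    0 ≤ (f (star y * a * y)).re := by
  rw [← asqrt y y ha]; exact re_nonneg hf _

lemma aform_im_zero {f : A →ₗ[ℂ] ℂ} (hf : IsPosLF f) (ha : 0 ≤ a) (y : A) :
    (f (star y * a * y)).im = 0 := by
  rw [← asqrt y y ha]; exact im_zero hf _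

lemma aform_cs {f : A →ₗ[ℂ] ℂ} (hf : IsPosLF f) (ha : 0 ≤ a) (y z : A) :
    ‖f (star z * a * y)‖ ^ 2
      ≤ (f (star z * a * z)).re * (f (star y * a * y)).re := by
  rw [← asqrt y z ha, ← asqrt z z ha, ← asqrt y y ha]
  exact cs hf _ _

lemma atri {f : A →ₗ[ℂ] ℂ} (hf : IsPosLF f) (ha : 0 ≤ a) (y z : A) :
    Real.sqrt (f (star (y + z) * a * (y + z))).re
      ≤ Real.sqrt (f (star y * a * y)).re + Real.sqrt (f (star z * a * z)).re := by
  rw [← asqrt (y + z) (y + z) ha, ← asqrt y y ha, ← asqrt z z ha, mul_add]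
  exact tri hf _ _

lemma acs_one {f : A →ₗ[ℂ] ℂ} (hf : IsPosLF f) (ha : 0 ≤ a) (y : A) :
    ‖f (a * y)‖ ^ 2 ≤ (f a).re * (f (star y * a * y)).re := by
  have := aform_cs hf ha y (1 : A)
  simpa using this

lemma aform_eq_re {f : A →ₗ[ℂ] ℂ} (hf : IsPosLF f) (ha : 0 ≤ a) (u : A) :
    f (star u * a * u) = (((f (star u * a * u)).re : ℝ) : ℂ) := by
  apply Complex.ext
  · rfl
  · simp [aform_im_zero hf ha u]

end AForm

section Bounds

variable {a : A}

lemma aNorm_nonneg (a b : A) : 0 ≤ aNorm a b :=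
  Real.sSup_nonneg (by rintro r ⟨f, hf, rfl⟩; exact Real.sqrt_nonneg _)

lemma sq_le_of_mem (ha : 0 ≤ a) {b : A} (hbB : BddAbove (aNormSet a b)) {f : A →ₗ[ℂ] ℂ}
    (hf : MemSa a f) : (f (star b * a * b)).re ≤ (aNorm a b) ^ 2 := by
  have hv : 0 ≤ (f (star b * a * b)).re := aform_re_nonneg hf.1 ha b
  have hmem : Real.sqrt (f (star b * a * b)).re ∈ aNormSet a b := ⟨f, hf, rfl⟩
  have hle : Real.sqrt (f (star b * a * b)).re ≤ aNorm a b := le_csSup hbB hmem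
  nlinarith [Real.sq_sqrt hv, Real.sqrt_nonneg (f (star b * a * b)).re]

lemma conj_bound (ha : 0 ≤ a) {b b' : A} (hb' : a * b' = star b * a)
    (hbB : BddAbove (aNormSet a b)) {f : A →ₗ[ℂ] ℂ} (hf : MemSa a f) (u : A) :
    (f (star (b * u) * a * (b * u))).re ≤ (aNorm a b) ^ 2 * (f (star u * a * u)).re := by
  set t := (f (star u * a * u)).re with hts
  have ht0 : 0 ≤ t := aform_re_nonneg hf.1 ha u
  rcases ht0.eq_or_lt with h0 | hpos
  · -- degenerate case t = 0
    have key : star (b * u) * a * (b * u) = star u * a * (b' * (b * u)) := by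
      calc star (b * u) * a * (b * u) = (star u * star b) * a * (b * u) := by rw [star_mul]
        _ = star u * (star b * a) * (b * u) := by rw [mul_assoc (star u)]
        _ = star u * (a * b') * (b * u) := by rw [← hb']
        _ = star u * a * (b' * (b * u)) := by
            rw [← mul_assoc (star u) a b', mul_assoc (star u * a)]
    have hcs := aform_cs hf.1 ha (b' * (b * u)) u
    have hle0 : ‖f (star u * a * (b' * (b * u)))‖ ^ 2 ≤ 0 := by
      calc ‖f (star u * a * (b' * (b * u)))‖ ^ 2
          ≤ t * (f (star (b' * (b * u)) * a * (b' * (b * u)))).re := hcs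
        _ = 0 := by rw [← h0]; ring
    have habs : ‖f (star u * a * (b' * (b * u)))‖ = 0 := by
      nlinarith [norm_nonneg (f (star u * a * (b' * (b * u))))]
    rw [key]
    have hre := Complex.re_le_norm (f (star u * a * (b' * (b * u))))
    rw [habs] at hre
    rw [← h0]
    linarith
  · -- main case t > 0
    set g : A →ₗ[ℂ] ℂ :=
      (((t : ℝ) : ℂ))⁻¹ • (f ∘ₗ LinearMap.mulLeft ℂ (star u) ∘ₗ LinearMap.mulRight ℂ u) with hg
    have hgapp : ∀ y, g y = ((t : ℂ))⁻¹ * f (star u * (y * u)) := fun y => rfl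
    have hgpos : IsPosLF g := by
      intro y
      rw [hgapp]
      have e : star u * ((star y * y) * u) = star (y * u) * (y * u) := by
        simp only [star_mul, mul_assoc]
      rw [e]
      have hv := hf.1 (y * u)
      rw [Complex.nonneg_iff] at hv ⊢
      obtain ⟨h1, h2⟩ := hv
      rw [← Complex.ofReal_inv, Complex.re_ofReal_mul, Complex.im_ofReal_mul]
      constructor
      · positivity
      · rw [← h2]; ring
    have hteq : f (star u * a * u) = ((t : ℝ) : ℂ) := aform_eq_re hf.1 ha u
    have hga : g a = 1 := by
      rw [hgapp, ← mul_assoc, hteq, ← Complex.ofReal_inv, ← Complex.ofReal_mul,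
        inv_mul_cancel₀ hpos.ne', Complex.ofReal_one]
    have hle : Real.sqrt (g (star b * a * b)).re ≤ aNorm a b :=
      le_csSup hbB ⟨g, ⟨hgpos, hga⟩, rfl⟩
    have h2 : (g (star b * a * b)).re ≤ (aNorm a b) ^ 2 := by
      have h0' : 0 ≤ (g (star b * a * b)).re := aform_re_nonneg hgpos ha b
      nlinarith [Real.sq_sqrt h0', Real.sqrt_nonneg (g (star b * a * b)).re]
    have e2 : star u * ((star b * a * b) * u) = star (b * u) * a * (b * u) := by
      simp only [star_mul, mul_assoc]
    rw [hgapp, e2, ← Complex.ofReal_inv, Complex.re_ofReal_mul] at h2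
    have h3 := mul_le_mul_of_nonneg_left h2 ht0
    rw [← mul_assoc, mul_inv_cancel₀ hpos.ne', one_mul] at h3
    linarith [h3]

end Bounds

end Stmt8Aux

open Stmt8Aux

/-- `φ(vₐ(x)²) ≤ ½ φ(vₐ(x²)) + ½ φ(‖x x^{#a} + x^{#a} x‖ₐ / 2)`. -/
theorem stmt8 (a : A) (ha : 0 ≤ a) (ha0 : a ≠ 0)
    (x xadj : A) (hadj : a * xadj = star x * a)
    (hx : BddAbove (aNormSet a x)) (hxadj : BddAbove (aNormSet a xadj))
    (φ : ℝ → ℝ) (hφ : IsOrlicz φ) :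
    φ (aNR a x ^ 2) ≤
      (1 / 2) * φ (aNR a (x * x)) + (1 / 2) * φ (aNorm a (x * xadj + xadj * x) / 2) := by
  have hsa : star a = a := (IsSelfAdjoint.of_nonneg ha).star_eq
  have hstar : star xadj * a = a * x := by
    have h := congrArg star hadj
    rw [star_mul, star_mul, hsa, star_star] at h
    exact h
  set S := x * xadj + xadj * x with hS
  set N1 := aNorm a x with hN1
  set N2 := aNorm a xadj with hN2
  have hN1' : 0 ≤ N1 := aNorm_nonneg a x
  have hN2' : 0 ≤ N2 := aNorm_nonneg a xadj
  -- boundedness of the `aNormSet` of `S`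
  have hNS_bdd : BddAbove (aNormSet a S) := by
    refine ⟨N1 * N2 + N2 * N1, ?_⟩
    rintro r ⟨f, hf, rfl⟩
    have h1 : Real.sqrt (f (star (x * xadj) * a * (x * xadj))).re ≤ N1 * N2 := by
      have hc := conj_bound ha hadj hx hf xadj
      have hc2 := sq_le_of_mem ha hxadj hf
      have : (f (star (x * xadj) * a * (x * xadj))).re ≤ (N1 * N2) ^ 2 := by
        calc (f (star (x * xadj) * a * (x * xadj))).re
            ≤ N1 ^ 2 * (f (star xadj * a * xadj)).re := hc
          _ ≤ N1 ^ 2 * N2 ^ 2 := by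
              exact mul_le_mul_of_nonneg_left hc2 (sq_nonneg N1)
          _ = (N1 * N2) ^ 2 := by ring
      calc Real.sqrt (f (star (x * xadj) * a * (x * xadj))).re
          ≤ Real.sqrt ((N1 * N2) ^ 2) := Real.sqrt_le_sqrt this
        _ = N1 * N2 := Real.sqrt_sq (by positivity)
    have h2 : Real.sqrt (f (star (xadj * x) * a * (xadj * x))).re ≤ N2 * N1 := by
      have hc := conj_bound ha hstar.symm hxadj hf x
      have hc2 := sq_le_of_mem ha hx hf
      have : (f (star (xadj * x) * a * (xadj * x))).re ≤ (N2 * N1) ^ 2 := by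
        calc (f (star (xadj * x) * a * (xadj * x))).re
            ≤ N2 ^ 2 * (f (star x * a * x)).re := hc
          _ ≤ N2 ^ 2 * N1 ^ 2 := by
              exact mul_le_mul_of_nonneg_left hc2 (sq_nonneg N2)
          _ = (N2 * N1) ^ 2 := by ring
      calc Real.sqrt (f (star (xadj * x) * a * (xadj * x))).re
          ≤ Real.sqrt ((N2 * N1) ^ 2) := Real.sqrt_le_sqrt this
        _ = N2 * N1 := Real.sqrt_sq (by positivity)
    have htri := atri hf.1 ha (x * xadj) (xadj * x)
    calc Real.sqrt (f (star S * a * S)).re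
        ≤ Real.sqrt (f (star (x * xadj) * a * (x * xadj))).re
          + Real.sqrt (f (star (xadj * x) * a * (xadj * x))).re := htri
      _ ≤ N1 * N2 + N2 * N1 := add_le_add h1 h2
  -- boundedness of the numerical-radius set of x*x
  have hW_bdd : BddAbove {r : ℝ | ∃ f : A →ₗ[ℂ] ℂ, MemSa a f ∧
      r = ‖f (a * (x * x))‖} := by
    refine ⟨N2 * N1, ?_⟩
    rintro r ⟨f, hf, rfl⟩
    have e : a * (x * x) = star xadj * a * x := by
      rw [hstar, mul_assoc]
    have hcs := aform_cs hf.1 ha x xadj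
    have hb1 := sq_le_of_mem ha hx hf
    have hb2 := sq_le_of_mem ha hxadj hf
    have habs2 : ‖f (star xadj * a * x)‖ ^ 2 ≤ (N2 * N1) ^ 2 := by
      calc ‖f (star xadj * a * x)‖ ^ 2
          ≤ (f (star xadj * a * xadj)).re * (f (star x * a * x)).re := hcs
        _ ≤ N2 ^ 2 * N1 ^ 2 := by
            exact mul_le_mul hb2 hb1 (aform_re_nonneg hf.1 ha x) (sq_nonneg N2)
        _ = (N2 * N1) ^ 2 := by ring
    rw [e]
    nlinarith [norm_nonneg (f (star xadj * a * x)), mul_nonneg hN2' hN1']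
  set W := aNR a (x * x) with hWdef
  set NS := aNorm a S with hNSdef
  have hW0 : 0 ≤ W :=
    Real.sSup_nonneg (by rintro r ⟨f, hf, rfl⟩; exact norm_nonneg _)
  have hNS0 : 0 ≤ NS := aNorm_nonneg a S
  set R2 : ℝ := (1 / 2) * W + (1 / 4) * NS with hR2def
  have hR20 : 0 ≤ R2 := by positivity
  -- the per-functional inequality
  have claim : ∀ f : A →ₗ[ℂ] ℂ, MemSa a f → ‖f (a * x)‖ ^ 2 ≤ R2 := by
    intro f hf
    rcases eq_or_ne (f (a * x)) 0 with hs0 | hs0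
    · rw [hs0]; simpa using hR20
    set s := f (a * x) with hsdef
    set lam : ℂ := (starRingEnd ℂ) s / (‖s‖ : ℂ) with hlamdef
    have habs_ne : (‖s‖ : ℝ) ≠ 0 := norm_ne_zero_iff.mpr hs0
    have hlam_s : lam * s = ((‖s‖ : ℝ) : ℂ) := by
      rw [hlamdef, div_mul_eq_mul_div]
      rw [mul_comm ((starRingEnd ℂ) s) s, Complex.mul_conj, Complex.normSq_eq_norm_sq]
      push_cast
      field_simp
    have habs_lam : ‖lam‖ = 1 := by
      rw [hlamdef, norm_div, Complex.norm_conj, Complex.norm_real, Real.norm_eq_abs,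
        abs_of_nonneg (norm_nonneg s), div_self habs_ne]
    have hlam_norm : lam * (starRingEnd ℂ) lam = 1 := by
      rw [Complex.mul_conj, Complex.normSq_eq_norm_sq, habs_lam]
      norm_num
    have hlam_norm' : (starRingEnd ℂ) lam * lam = 1 := by
      rw [mul_comm]; exact hlam_norm
    set H : A := (2:ℂ)⁻¹ • (lam • x + (starRingEnd ℂ) lam • xadj) with hHdef
    have hfadj : f (a * xadj) = (starRingEnd ℂ) s := by
      have e : a * xadj = star (a * x) := by rw [star_mul, hsa, ← hadj]
      rw [e, herm1 hf.1]
    -- value of f at a * H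
    have hfaH : f (a * H) = ((‖s‖ : ℝ) : ℂ) := by
      have haH : a * H = (2:ℂ)⁻¹ • (lam • (a * x) + (starRingEnd ℂ) lam • (a * xadj)) := by
        rw [hHdef]; simp only [mul_smul_comm, mul_add]
      rw [haH, map_smul, map_add, map_smul, map_smul, hfadj]
      have hconj : (starRingEnd ℂ) lam * (starRingEnd ℂ) s = ((‖s‖ : ℝ) : ℂ) := by
        rw [← map_mul, hlam_s, Complex.conj_ofReal]
      rw [smul_eq_mul, smul_eq_mul, smul_eq_mul, ← hsdef, hlam_s, hconj]
      ring
    -- H is a-selfadjoint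
    have hstarH : star H * a = a * H := by
      have hH2 : star H = (2:ℂ)⁻¹ • ((starRingEnd ℂ) lam • star x + lam • star xadj) := by
        rw [hHdef, star_smul, star_add, star_smul, star_smul]
        simp [Complex.star_def, map_inv₀]
      rw [hH2]
      rw [smul_mul_assoc, add_mul, smul_mul_assoc, smul_mul_assoc]
      rw [← hadj, hstar]
      rw [hHdef]
      simp only [mul_smul_comm, mul_add, smul_add]
      rw [add_comm]
    have hHaH : star H * a * H = a * (H * H) := by rw [hstarH, mul_assoc]
    -- expansion of H * H
    have hHH : H * H = (4:ℂ)⁻¹ • ((lam * lam) • (x * x) +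
        ((x * xadj + xadj * x) + ((starRingEnd ℂ) lam * (starRingEnd ℂ) lam) • (xadj * xadj))) := by
      have step1 : H * H = (4:ℂ)⁻¹ • ((lam * lam) • (x * x) +
          (((lam * (starRingEnd ℂ) lam) • (x * xadj) + ((starRingEnd ℂ) lam * lam) • (xadj * x)) +
            ((starRingEnd ℂ) lam * (starRingEnd ℂ) lam) • (xadj * xadj))) := by
        rw [hHdef]
        simp only [add_mul, mul_add, smul_mul_assoc, mul_smul_comm, smul_smul, smul_add]
        module
      rw [step1, hlam_norm, hlam_norm', one_smul, one_smul]
    -- value of f at a * (H * H)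
    set z := f (a * (x * x)) with hzdef
    have hfadj2 : f (a * (xadj * xadj)) = (starRingEnd ℂ) z := by
      have e1 : star (a * (x * x)) = star x * (star x * a) := by
        rw [star_mul, star_mul, hsa, mul_assoc]
      have e : a * (xadj * xadj) = star (a * (x * x)) := by
        rw [e1]
        calc a * (xadj * xadj) = (a * xadj) * xadj := (mul_assoc _ _ _).symm
          _ = (star x * a) * xadj := by rw [hadj]
          _ = star x * (a * xadj) := mul_assoc _ _ _
          _ = star x * (star x * a) := by rw [hadj]
      rw [e, herm1 hf.1]
    have hfaHH : f (a * (H * H)) = ((4:ℂ))⁻¹ * ((lam * lam) * z +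
        (f (a * S) + (starRingEnd ℂ) (lam * lam) * (starRingEnd ℂ) z)) := by
      rw [hHH]
      rw [mul_smul_comm, mul_add, mul_add, mul_smul_comm, mul_smul_comm]
      rw [map_smul, map_add, map_add, map_smul, map_smul]
      rw [hfadj2, ← hzdef]
      have : f (a * (x * xadj)) + f (a * (xadj * x)) = f (a * S) := by
        rw [hS, mul_add, map_add]
      rw [smul_eq_mul, smul_eq_mul, smul_eq_mul, map_mul (starRingEnd ℂ) lam lam, ← this]
    -- real part computation
    set u : ℂ := (lam * lam) * z with hudef
    have hre : (f (a * (H * H))).re = (1 / 4) * (2 * u.re + (f (a * S)).re) := by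
      rw [hfaHH]
      have h4 : ((4:ℂ))⁻¹ = (((1/4 : ℝ)) : ℂ) := by norm_num
      rw [h4, Complex.re_ofReal_mul]
      have : ((starRingEnd ℂ) (lam * lam) * (starRingEnd ℂ) z) = (starRingEnd ℂ) u := by
        rw [hudef, ← map_mul]
      rw [this]
      simp only [Complex.add_re, Complex.conj_re, ← hudef]
      ring
    -- bounds on the two parts
    have hu_le : u.re ≤ W := by
      have h1 : u.re ≤ ‖u‖ := Complex.re_le_norm u
      have h2 : ‖u‖ = ‖z‖ := by
        rw [hudef, norm_mul, norm_mul, habs_lam]; ring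
      have h3 : ‖z‖ ≤ W :=
        le_csSup hW_bdd ⟨f, hf, rfl⟩
      linarith
    have hSre : (f (a * S)).re ≤ NS := by
      have h1 := acs_one hf.1 ha S
      rw [hf.2] at h1
      simp only [Complex.one_re, one_mul] at h1
      have h0 : 0 ≤ (f (star S * a * S)).re := aform_re_nonneg hf.1 ha S
      have h2 : ‖f (a * S)‖ ≤ Real.sqrt (f (star S * a * S)).re := by
        nlinarith [Real.sq_sqrt h0, Real.sqrt_nonneg (f (star S * a * S)).re,
          norm_nonneg (f (a * S))]
      have h3 : Real.sqrt (f (star S * a * S)).re ≤ NS :=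
        le_csSup hNS_bdd ⟨f, hf, rfl⟩
      have h4 := Complex.re_le_norm (f (a * S))
      linarith
    -- Cauchy-Schwarz for H
    have hCS : ‖f (a * H)‖ ^ 2 ≤ (f (a * (H * H))).re := by
      have h1 := acs_one hf.1 ha H
      rw [hf.2] at h1
      simp only [Complex.one_re, one_mul] at h1
      rw [hHaH] at h1
      exact h1
    have habsH : ‖f (a * H)‖ = ‖s‖ := by
      rw [hfaH, Complex.norm_real, Real.norm_eq_abs, abs_of_nonneg (norm_nonneg s)]
    calc ‖f (a * x)‖ ^ 2 = ‖f (a * H)‖ ^ 2 := by rw [habsH]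
      _ ≤ (f (a * (H * H))).re := hCS
      _ = (1 / 4) * (2 * u.re + (f (a * S)).re) := hre
      _ ≤ (1 / 4) * (2 * W + NS) := by
          have : 2 * u.re + (f (a * S)).re ≤ 2 * W + NS := by linarith
          linarith
      _ = R2 := by rw [hR2def]; ring
  -- conclude for the supremum
  set v := aNR a x with hvdef
  have hv0 : 0 ≤ v :=
    Real.sSup_nonneg (by rintro r ⟨f, hf, rfl⟩; exact norm_nonneg _)
  have hv_le : v ≤ Real.sqrt R2 := by
    apply Real.sSup_le
    · rintro r ⟨f, hf, rfl⟩
      nlinarith [claim f hf, Real.sq_sqrt hR20, Real.sqrt_nonneg R2,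
        norm_nonneg (f (a * x))]
    · exact Real.sqrt_nonneg _
  have hvsq : v ^ 2 ≤ R2 := by
    nlinarith [Real.sq_sqrt hR20, Real.sqrt_nonneg R2]
  -- apply the Orlicz function
  set n := NS / 2 with hndef
  have hn0 : 0 ≤ n := by positivity
  have hmono : φ (v ^ 2) ≤ φ R2 :=
    hφ.monotoneOn (Set.mem_Ici.2 (sq_nonneg v)) (Set.mem_Ici.2 hR20) hvsq
  have hR2eq : R2 = (1/2 : ℝ) • W + (1/2 : ℝ) • n := by
    rw [hR2def, hndef]; simp [smul_eq_mul]; ring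
  have hconv := hφ.convexOn.2 (Set.mem_Ici.2 hW0) (Set.mem_Ici.2 hn0)
    (by norm_num : (0:ℝ) ≤ 1/2) (by norm_num : (0:ℝ) ≤ 1/2)
    (by norm_num : (1:ℝ)/2 + 1/2 = 1)
  rw [hR2eq] at hmono
  calc φ (v ^ 2) ≤ (1/2 : ℝ) • φ W + (1/2 : ℝ) • φ n := le_trans hmono hconv
    _ = (1 / 2) * φ W + (1 / 2) * φ n := by simp [smul_eq_mul]

end
end

section
/- Let A be a unital C*-algebra, a a nonzero positive element of A, and x ∈ A admitting an a-adjoint x^{#a}, with ‖x‖_a < ∞ and ‖x^{#a}‖_a < ∞. Then for every real r ≥ 1, v_a(x)^{2r} ≤ (1/2)·v_a(x²)^r + (1/2^{r+1})·‖x x^{#a} + x^{#a} x‖_a^r. -/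
open scoped ComplexOrder

section

variable {A : Type*} [CStarAlgebra A] [PartialOrder A] [StarOrderedRing A]

/-! ### Auxiliary lemmas -/

open ComplexConjugate

set_option linter.unusedSectionVars false

lemma im_eq_zero {f : A →ₗ[ℂ] ℂ} (hf : IsPosLF f) (u : A) : (f (star u * u)).im = 0 := by
  have := hf u
  rw [Complex.nonneg_iff] at this
  exact this.2.symm

lemma re_nonneg {f : A →ₗ[ℂ] ℂ} (hf : IsPosLF f) (u : A) : 0 ≤ (f (star u * u)).re := by
  have := hf u
  rw [Complex.nonneg_iff] at this
  exact this.1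

/-- positive functionals are star-preserving -/
lemma starlf {f : A →ₗ[ℂ] ℂ} (hf : IsPosLF f) (w : A) : f (star w) = conj (f w) := by
  have h1 : (f 1 + f w + f (star w) + f (star w * w)).im = 0 := by
    have e : star (1 + w) * (1 + w) = 1 + w + star w + star w * w := by
      simp only [star_add, star_one, add_mul, mul_add, one_mul, mul_one]
      abel
    have := im_eq_zero hf (1 + w)
    rw [e] at this
    simpa [map_add] using this
  have h2 : (f 1 + Complex.I * f w - Complex.I * f (star w) + f (star w * w)).im = 0 := by
    have h0 : star (Complex.I • w) = -(Complex.I • star w) := by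
      simp [star_smul, Complex.conj_I]
    have hmul : (Complex.I • star w) * (Complex.I • w) = -(star w * w) := by
      rw [smul_mul_assoc, mul_smul_comm, smul_smul, Complex.I_mul_I, neg_one_smul]
    have e : star (1 + Complex.I • w) * (1 + Complex.I • w)
        = 1 + Complex.I • w - Complex.I • star w + star w * w := by
      rw [star_add, star_one, h0]
      calc (1 + -(Complex.I • star w)) * (1 + Complex.I • w)
          = 1 + Complex.I • w - Complex.I • star w
              - (Complex.I • star w) * (Complex.I • w) := by
            simp only [add_mul, mul_add, one_mul, mul_one, neg_mul]; abel
        _ = 1 + Complex.I • w - Complex.I • star w + star w * w := by rw [hmul]; abel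
    have := im_eq_zero hf (1 + Complex.I • w)
    rw [e] at this
    simpa [map_add, map_sub, map_smul, smul_eq_mul] using this
  have him1 : (f 1).im = 0 := by simpa using im_eq_zero hf 1
  have him2 : (f (star w * w)).im = 0 := im_eq_zero hf w
  simp only [Complex.add_im, Complex.sub_im, Complex.mul_im, Complex.I_re, Complex.I_im,
    him1, him2] at h1 h2
  apply Complex.ext
  · simp only [Complex.conj_re]; linarith
  · simp only [Complex.conj_im]; linarith

lemma quad {f : A →ₗ[ℂ] ℂ} (hf : IsPosLF f) (u v : A) (t : ℝ) :
    0 ≤ t ^ 2 * Complex.normSq (f (star u * v)) * (f (star v * v)).re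
        + 2 * t * Complex.normSq (f (star u * v)) + (f (star u * u)).re := by
  set m := f (star u * v) with hm
  set c : ℂ := (t : ℂ) * conj m with hc
  have hvu : f (star v * u) = conj m := by
    rw [hm, ← starlf hf (star u * v), star_mul, star_star]
  have e : star (c • v + u) * (c • v + u)
      = (conj c * c) • (star v * v) + conj c • (star v * u) + c • (star u * v)
          + star u * u := by
    simp only [star_add, star_smul, add_mul, mul_add, smul_mul_assoc, mul_smul_comm, smul_smul,
      RCLike.star_def, smul_add]
    module
  have hpos := re_nonneg hf (c • v + u)
  rw [e] at hpos
  have hexp : f ((conj c * c) • (star v * v) + conj c • (star v * u) + c • (star u * v)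
      + star u * u) = (conj c * c) * f (star v * v) + conj c * conj m + c * m
      + f (star u * u) := by
    simp only [map_add, map_smul, smul_eq_mul, hvu, hm]
  rw [hexp] at hpos
  have h1 : conj c * c = ((t ^ 2 * Complex.normSq m : ℝ) : ℂ) := by
    rw [hc, map_mul, Complex.conj_ofReal, Complex.conj_conj]
    push_cast
    linear_combination ((t : ℂ) ^ 2) * Complex.mul_conj m
  have hBC : c * m = ((t * Complex.normSq m : ℝ) : ℂ) := by
    rw [hc]
    push_cast
    linear_combination (t : ℂ) * Complex.mul_conj m
  have hB : conj c * conj m = conj (c * m) := (map_mul _ _ _).symm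
  rw [h1, hB, hBC, Complex.conj_ofReal] at hpos
  simp only [Complex.add_re, Complex.re_ofReal_mul, Complex.ofReal_re] at hpos
  linarith

lemma quad_to_cs {n p q : ℝ} (hn : 0 ≤ n) (hp : 0 ≤ p) (hq : 0 ≤ q)
    (h : ∀ t : ℝ, 0 ≤ t ^ 2 * n * q + 2 * t * n + p) : n ≤ p * q := by
  rcases eq_or_lt_of_le hq with hq0 | hq0
  · rcases eq_or_lt_of_le hn with hn0 | hn0
    · nlinarith
    · have h2n : (2 * n) ≠ 0 := by positivity
      have e2 : 2 * (-(p + 1) / (2 * n)) * n = -(p + 1) := by field_simp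
      have := h (-(p + 1) / (2 * n))
      rw [← hq0, e2] at this
      nlinarith
  · have := h (-(1 / q))
    have hq' : q ≠ 0 := ne_of_gt hq0
    have e1 : (-(1/q)) ^ 2 * n * q = n / q := by field_simp
    have e2 : 2 * (-(1/q)) * n = -(2 * n / q) := by field_simp
    rw [e1, e2] at this
    have : 0 ≤ n - 2 * n + p * q := by
      have := mul_le_mul_of_nonneg_left this (le_of_lt hq0)
      calc (0:ℝ) = q * 0 := by ring
        _ ≤ q * (n / q + -(2 * n / q) + p) := this
        _ = n - 2 * n + p * q := by field_simp; ring
    linarith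

/-- Cauchy–Schwarz for positive linear functionals. -/
lemma cs {f : A →ₗ[ℂ] ℂ} (hf : IsPosLF f) (u v : A) :
    Complex.normSq (f (star u * v)) ≤ (f (star u * u)).re * (f (star v * v)).re :=
  quad_to_cs (Complex.normSq_nonneg _) (re_nonneg hf u) (re_nonneg hf v) (quad hf u v)

lemma cs_abs {f : A →ₗ[ℂ] ℂ} (hf : IsPosLF f) (u v : A) :
    ‖f (star u * v)‖
      ≤ Real.sqrt (f (star u * u)).re * Real.sqrt (f (star v * v)).re := by
  rw [← Real.sqrt_mul (re_nonneg hf u), Complex.norm_def]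
  exact Real.sqrt_le_sqrt (cs hf u v)

/-- Buzano-type inequality for positive linear functionals. -/
lemma buzano_s9 {f : A →ₗ[ℂ] ℂ} (hf : IsPosLF f) (e u v : A) (he : f (star e * e) = 1) :
    2 * (‖f (star e * u)‖ * ‖f (star v * e)‖)
      ≤ ‖f (star v * u)‖
        + Real.sqrt (f (star u * u)).re * Real.sqrt (f (star v * v)).re := by
  set c := f (star e * u) with hc
  set w := (2 * c) • e - u with hwdef
  have hue : f (star u * e) = conj c := by
    rw [hc, ← starlf hf (star e * u), star_mul, star_star]
  have hw1 : f (star v * w) = 2 * c * f (star v * e) - f (star v * u) := by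
    rw [hwdef, mul_sub, mul_smul_comm, map_sub, map_smul, smul_eq_mul]
  have hw2 : f (star w * w) = f (star u * u) := by
    have e2 : star w * w = (conj (2 * c) * (2 * c)) • (star e * e)
        - conj (2 * c) • (star e * u) - (2 * c) • (star u * e) + star u * u := by
      rw [hwdef]
      simp only [star_sub, star_smul, sub_mul, mul_sub, smul_mul_assoc, mul_smul_comm,
        smul_smul, RCLike.star_def, smul_add, smul_sub]
      module
    rw [e2]
    simp only [map_add, map_sub, map_smul, smul_eq_mul, he, hue, ← hc, map_mul]
    have : conj (2 : ℂ) = 2 := Complex.conj_ofNat 2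
    rw [this]
    ring
  have hcs : ‖f (star v * w)‖
      ≤ Real.sqrt (f (star u * u)).re * Real.sqrt (f (star v * v)).re := by
    have := cs_abs hf v w
    rw [hw2] at this
    calc ‖f (star v * w)‖
        ≤ Real.sqrt (f (star v * v)).re * Real.sqrt (f (star u * u)).re := this
      _ = Real.sqrt (f (star u * u)).re * Real.sqrt (f (star v * v)).re := mul_comm _ _
  have key : ‖2 * c * f (star v * e)‖
      ≤ ‖f (star v * u)‖ + ‖f (star v * w)‖ := by
    have : 2 * c * f (star v * e) = f (star v * u) + f (star v * w) := by
      rw [hw1]; ring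
    rw [this]
    exact norm_add_le _ _
  have habs : ‖2 * c * f (star v * e)‖
      = 2 * (‖c‖ * ‖f (star v * e)‖) := by
    rw [norm_mul, norm_mul, Complex.norm_two]; ring
  rw [habs] at key
  linarith

/-- Triangle inequality for the seminorm induced by a positive functional. -/
lemma tri {f : A →ₗ[ℂ] ℂ} (hf : IsPosLF f) (u v : A) :
    Real.sqrt (f (star (u + v) * (u + v))).re
      ≤ Real.sqrt (f (star u * u)).re + Real.sqrt (f (star v * v)).re := by
  have e : star (u + v) * (u + v) = star u * u + star u * v + star v * u + star v * v := by
    simp only [star_add, add_mul, mul_add]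
    abel
  have hvu : f (star v * u) = conj (f (star u * v)) := by
    rw [← starlf hf (star u * v), star_mul, star_star]
  have hre : (f (star (u + v) * (u + v))).re
      = (f (star u * u)).re + 2 * (f (star u * v)).re + (f (star v * v)).re := by
    rw [e]
    simp only [map_add, Complex.add_re, hvu, Complex.conj_re]
    ring
  have hm : (f (star u * v)).re ≤ Real.sqrt (f (star u * u)).re
      * Real.sqrt (f (star v * v)).re :=
    le_trans (Complex.re_le_norm _) (cs_abs hf u v)
  rw [hre]
  have hb : (f (star u * u)).re + 2 * (f (star u * v)).re + (f (star v * v)).re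
      ≤ (Real.sqrt (f (star u * u)).re + Real.sqrt (f (star v * v)).re) ^ 2 := by
    have h1 : Real.sqrt (f (star u * u)).re ^ 2 = (f (star u * u)).re :=
      Real.sq_sqrt (re_nonneg hf u)
    have h2 : Real.sqrt (f (star v * v)).re ^ 2 = (f (star v * v)).re :=
      Real.sq_sqrt (re_nonneg hf v)
    nlinarith [hm]
  calc Real.sqrt ((f (star u * u)).re + 2 * (f (star u * v)).re + (f (star v * v)).re)
      ≤ Real.sqrt ((Real.sqrt (f (star u * u)).re + Real.sqrt (f (star v * v)).re) ^ 2) :=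
        Real.sqrt_le_sqrt hb
    _ = Real.sqrt (f (star u * u)).re + Real.sqrt (f (star v * v)).re := by
        rw [Real.sqrt_sq (by positivity)]

lemma cmul_nonneg {z w : ℂ} (hz : 0 ≤ z) (hw : 0 ≤ w) : 0 ≤ z * w := by
  rw [Complex.nonneg_iff] at hz hw ⊢
  obtain ⟨hz1, hz2⟩ := hz
  obtain ⟨hw1, hw2⟩ := hw
  constructor
  · simp only [Complex.mul_re, ← hz2, ← hw2, mul_zero, sub_zero]
    exact mul_nonneg hz1 hw1
  · simp [Complex.mul_im, ← hz2, ← hw2]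

lemma bshape {a b : A} (hb : star b = b) (hbb : b * b = a) (w : A) :
    star (b * w) * (b * w) = star w * a * w := by
  rw [star_mul, hb, mul_assoc (star w) b (b * w), ← mul_assoc b b w, hbb, ← mul_assoc]

lemma bshape2 {a b : A} (hb : star b = b) (hbb : b * b = a) (w : A) :
    star b * (b * w) = a * w := by
  rw [hb, ← mul_assoc, hbb]

lemma submul {a : A} {b : A} (hb : star b = b) (hbb : b * b = a)
    (y y' : A) (hy : star y * a = a * y')
    (B : ℝ) (hB : ∀ g : A →ₗ[ℂ] ℂ, MemSa a g → Real.sqrt (g (star y * a * y)).re ≤ B)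
    {f : A →ₗ[ℂ] ℂ} (hf : MemSa a f) (z : A) :
    (f (star (y * z) * a * (y * z))).re ≤ B ^ 2 * (f (star z * a * z)).re := by
  set G : A →ₗ[ℂ] ℂ :=
    f.comp ((LinearMap.mulLeft ℂ (star z)).comp (LinearMap.mulRight ℂ z)) with hG
  have hGapp : ∀ w : A, G w = f (star z * (w * z)) := fun w => rfl
  have hGpos : IsPosLF G := by
    intro t
    rw [hGapp]
    have : star z * (star t * t * z) = star (t * z) * (t * z) := by
      rw [star_mul, mul_assoc (star z) (star t) (t * z), ← mul_assoc (star t) t z]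
    rw [this]
    exact hf.1 (t * z)
  have hGa : G a = f (star z * a * z) := by rw [hGapp, ← mul_assoc]
  have hGa_nn : 0 ≤ G a := by
    rw [hGa, ← bshape hb hbb z]
    exact hf.1 (b * z)
  have hkey : f (star (y * z) * a * (y * z)) = G (star y * a * y) := by
    rw [hGapp]
    congr 1
    simp only [star_mul, mul_assoc]
  have hGyay_nn : 0 ≤ G (star y * a * y) := by
    rw [← hkey, ← bshape hb hbb (y * z)]
    exact hf.1 (b * (y * z))
  rcases eq_or_ne (G a) 0 with h0 | h0
  · have hfz0 : (f (star z * a * z)).re = 0 := by rw [← hGa, h0]; simp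
    have harg : star y * a * y = a * (y' * y) := by
      rw [hy, mul_assoc]
    have hzero : G (star y * a * y) = 0 := by
      have hform : G (star y * a * y) = f (star (b * z) * (b * (y' * (y * z)))) := by
        rw [hGapp, star_mul, hb, harg]
        congr 1
        rw [mul_assoc (star z) b (b * (y' * (y * z))), ← mul_assoc b b _, hbb]
        simp only [mul_assoc]
      have hcs := cs hf.1 (b * z) (b * (y' * (y * z)))
      rw [bshape hb hbb z] at hcs
      have h2 : Complex.normSq (f (star (b * z) * (b * (y' * (y * z))))) ≤ 0 := by
        calc Complex.normSq (f (star (b * z) * (b * (y' * (y * z)))))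
            ≤ (f (star z * a * z)).re * (f (star (b * (y' * (y * z)))
                * (b * (y' * (y * z))))).re := hcs
          _ = 0 := by rw [hfz0, zero_mul]
      rw [hform]
      exact Complex.normSq_eq_zero.mp (le_antisymm h2 (Complex.normSq_nonneg _))
    rw [hkey, hzero, hfz0]
    simp
  · set r : ℝ := (G a).re with hr
    have hGar : G a = (r : ℝ) := by
      rw [Complex.nonneg_iff] at hGa_nn
      exact Complex.ext rfl hGa_nn.2.symm
    have hr0 : 0 < r := by
      rcases lt_or_eq_of_le ((Complex.nonneg_iff.mp hGa_nn).1) with h | h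
      · exact h
      · exfalso; apply h0; rw [hGar, hr, ← h]; simp
    set G' : A →ₗ[ℂ] ℂ := ((r⁻¹ : ℝ) : ℂ) • G with hG'
    have hG'app : ∀ w : A, G' w = ((r⁻¹ : ℝ) : ℂ) * G w := fun w => rfl
    have hG'mem : MemSa a G' := by
      constructor
      · intro t
        rw [hG'app]
        exact cmul_nonneg (by rw [Complex.zero_le_real]; positivity) (hGpos t)
      · rw [hG'app, hGar, ← Complex.ofReal_mul, inv_mul_cancel₀ (ne_of_gt hr0)]
        simp
    have hle := hB G' hG'mem
    have hG're : (G' (star y * a * y)).re = r⁻¹ * (G (star y * a * y)).re := by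
      rw [hG'app, Complex.re_ofReal_mul]
    have h1 : r⁻¹ * (G (star y * a * y)).re ≤ B ^ 2 := by
      have hnn : 0 ≤ r⁻¹ * (G (star y * a * y)).re :=
        mul_nonneg (by positivity) (Complex.nonneg_iff.mp hGyay_nn).1
      have := pow_le_pow_left₀ (Real.sqrt_nonneg _) hle 2
      rw [Real.sq_sqrt (by rw [hG're]; exact hnn)] at this
      rw [hG're] at this
      exact this
    have h2 : (G (star y * a * y)).re ≤ B ^ 2 * r := by
      have := mul_le_mul_of_nonneg_left h1 (le_of_lt hr0)
      calc (G (star y * a * y)).re = r * (r⁻¹ * (G (star y * a * y)).re) := by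
            field_simp
        _ ≤ r * B ^ 2 := this
        _ = B ^ 2 * r := mul_comm _ _
    rw [hkey]
    calc (G (star y * a * y)).re ≤ B ^ 2 * r := h2
      _ = B ^ 2 * (f (star z * a * z)).re := by rw [hr, hGa]

lemma jensen2 {z1 z2 : ℝ} (h1 : 0 ≤ z1) (h2 : 0 ≤ z2) {p : ℝ} (hp : 1 ≤ p) :
    ((1/2) * z1 + (1/2) * z2) ^ p ≤ (1/2) * z1 ^ p + (1/2) * z2 ^ p := by
  have := Real.rpow_arith_mean_le_arith_mean_rpow (Finset.univ : Finset (Fin 2))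
    ![1/2, 1/2] ![z1, z2]
    (by intro i _; fin_cases i <;> norm_num)
    (by simp [Fin.sum_univ_two]; norm_num)
    (by intro i _; fin_cases i <;> assumption) hp
  simpa [Fin.sum_univ_two] using this

/-- `vₐ(x)^{2r} ≤ ½ vₐ(x²)^r + (1/2^{r+1}) ‖x x^{#a} + x^{#a} x‖ₐ^r`. -/
theorem stmt9 (a : A) (ha : 0 ≤ a) (ha0 : a ≠ 0)
    (x xadj : A) (hadj : a * xadj = star x * a)
    (hx : BddAbove (aNormSet a x)) (hxadj : BddAbove (aNormSet a xadj))
    (r : ℝ) (hr : 1 ≤ r) :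
    aNR a x ^ (2 * r) ≤
      (1 / 2) * aNR a (x * x) ^ r +
        (1 / (2 : ℝ) ^ (r + 1)) * aNorm a (x * xadj + xadj * x) ^ r := by
  classical
  set b := CFC.sqrt a with hbdef
  have hb : star b = b := IsSelfAdjoint.of_nonneg (CFC.sqrt_nonneg a)
  have hbb : b * b = a := CFC.sqrt_mul_sqrt_self a ha
  have hsa : star a = a := IsSelfAdjoint.of_nonneg ha
  have hadj1 : star x * a = a * xadj := hadj.symm
  have hadj2 : star xadj * a = a * x := by
    calc star xadj * a = star (a * xadj) := by rw [star_mul, hsa]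
      _ = star (star x * a) := by rw [hadj]
      _ = a * x := by rw [star_mul, star_star, hsa]
  obtain ⟨Bx0, hBx0⟩ := hx
  obtain ⟨Bxa0, hBxa0⟩ := hxadj
  set Bx := max Bx0 0 with hBxdef
  set Bxa := max Bxa0 0 with hBxadef
  have hBxnn : 0 ≤ Bx := le_max_right _ _
  have hBxann : 0 ≤ Bxa := le_max_right _ _
  have hBx : ∀ g : A →ₗ[ℂ] ℂ, MemSa a g → Real.sqrt (g (star x * a * x)).re ≤ Bx :=
    fun g hg => le_trans (hBx0 ⟨g, hg, rfl⟩) (le_max_left _ _)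
  have hBxa : ∀ g : A →ₗ[ℂ] ℂ, MemSa a g →
      Real.sqrt (g (star xadj * a * xadj)).re ≤ Bxa :=
    fun g hg => le_trans (hBxa0 ⟨g, hg, rfl⟩) (le_max_left _ _)
  have posre : ∀ (f : A →ₗ[ℂ] ℂ), MemSa a f → ∀ w : A, 0 ≤ (f (star w * a * w)).re := by
    intro f hf w
    rw [← bshape hb hbb w]
    exact re_nonneg hf.1 (b * w)
  set c := x * xadj + xadj * x with hcdef
  -- Step A : the `a`-norm set of `c` is bounded above
  have hKbdd : BddAbove (aNormSet a c) := by
    refine ⟨2 * (Bx * Bxa), ?_⟩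
    rintro s ⟨f, hf, rfl⟩
    have htri := tri hf.1 (b * (x * xadj)) (b * (xadj * x))
    rw [show b * (x * xadj) + b * (xadj * x) = b * c from (mul_add b _ _).symm] at htri
    rw [bshape hb hbb c, bshape hb hbb (x * xadj), bshape hb hbb (xadj * x)] at htri
    have h1 := submul hb hbb x xadj hadj1 Bx hBx hf xadj
    have hq2 : (f (star xadj * a * xadj)).re ≤ Bxa ^ 2 := by
      have h := hBxa f hf
      have hp := posre f hf xadj
      have h2 := mul_self_le_mul_self (Real.sqrt_nonneg _) h
      rw [Real.mul_self_sqrt hp] at h2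
      nlinarith
    have hp2 : (f (star x * a * x)).re ≤ Bx ^ 2 := by
      have h := hBx f hf
      have hp := posre f hf x
      have h2 := mul_self_le_mul_self (Real.sqrt_nonneg _) h
      rw [Real.mul_self_sqrt hp] at h2
      nlinarith
    have h1' : (f (star (x * xadj) * a * (x * xadj))).re ≤ Bx ^ 2 * Bxa ^ 2 := by
      refine le_trans h1 ?_
      have := mul_le_mul_of_nonneg_left hq2 (by positivity : (0:ℝ) ≤ Bx ^ 2)
      linarith
    have h2 := submul hb hbb xadj x hadj2 Bxa hBxa hf x
    have h2' : (f (star (xadj * x) * a * (xadj * x))).re ≤ Bx ^ 2 * Bxa ^ 2 := by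
      refine le_trans h2 ?_
      have := mul_le_mul_of_nonneg_left hp2 (by positivity : (0:ℝ) ≤ Bxa ^ 2)
      nlinarith
    have s1 : Real.sqrt (f (star (x * xadj) * a * (x * xadj))).re ≤ Bx * Bxa := by
      rw [show Bx * Bxa = Real.sqrt ((Bx * Bxa) ^ 2) from (Real.sqrt_sq (by positivity)).symm]
      apply Real.sqrt_le_sqrt
      nlinarith
    have s2 : Real.sqrt (f (star (xadj * x) * a * (xadj * x))).re ≤ Bx * Bxa := by
      rw [show Bx * Bxa = Real.sqrt ((Bx * Bxa) ^ 2) from (Real.sqrt_sq (by positivity)).symm]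
      apply Real.sqrt_le_sqrt
      nlinarith
    calc Real.sqrt (f (star c * a * c)).re
        ≤ Real.sqrt (f (star (x * xadj) * a * (x * xadj))).re
          + Real.sqrt (f (star (xadj * x) * a * (xadj * x))).re := htri
      _ ≤ Bx * Bxa + Bx * Bxa := add_le_add s1 s2
      _ = 2 * (Bx * Bxa) := by ring
  -- Step B : the numerical-radius set of `x * x` is bounded above
  have hM2bdd : BddAbove {t : ℝ | ∃ f : A →ₗ[ℂ] ℂ, MemSa a f
      ∧ t = ‖f (a * (x * x))‖} := by
    refine ⟨Bxa * Bx, ?_⟩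
    rintro s ⟨f, hf, rfl⟩
    have hform : star (b * xadj) * (b * x) = a * (x * x) := by
      rw [star_mul, hb, mul_assoc (star xadj) b (b * x), ← mul_assoc b b x, hbb,
        ← mul_assoc, hadj2, mul_assoc]
    have h := cs_abs hf.1 (b * xadj) (b * x)
    rw [hform, bshape hb hbb xadj, bshape hb hbb x] at h
    exact le_trans h (mul_le_mul (hBxa f hf) (hBx f hf) (Real.sqrt_nonneg _) hBxann)
  set M2 := aNR a (x * x) with hM2def
  set K := aNorm a c with hKdef
  have hM2nn : 0 ≤ M2 :=
    Real.sSup_nonneg (by rintro t ⟨f, hf, rfl⟩; exact norm_nonneg _)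
  have hKnn : 0 ≤ K :=
    Real.sSup_nonneg (by rintro t ⟨f, hf, rfl⟩; exact Real.sqrt_nonneg _)
  set D := (1/2) * M2 + (1/4) * K with hDdef
  have hD : 0 ≤ D := by positivity
  -- Step C : the per-functional inequality
  have hmain : ∀ s ∈ {t : ℝ | ∃ f : A →ₗ[ℂ] ℂ, MemSa a f
      ∧ t = ‖f (a * x)‖}, s ^ 2 ≤ D := by
    rintro s ⟨f, hf, rfl⟩
    have he : f (star b * b) = 1 := by rw [hb, hbb]; exact hf.2
    have hbuz := buzano_s9 hf.1 b (b * x) (b * xadj) he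
    have r1 : star b * (b * x) = a * x := bshape2 hb hbb x
    have r2 : star (b * xadj) * b = a * x := by
      rw [star_mul, hb, mul_assoc, hbb, hadj2]
    have r3 : star (b * xadj) * (b * x) = a * (x * x) := by
      rw [star_mul, hb, mul_assoc (star xadj) b (b * x), ← mul_assoc b b x, hbb,
        ← mul_assoc, hadj2, mul_assoc]
    rw [r1, r2, r3, bshape hb hbb x, bshape hb hbb xadj] at hbuz
    set p := (f (star x * a * x)).re with hpdef
    set q := (f (star xadj * a * xadj)).re with hqdef
    have hpq : p + q ≤ K := by
      have hxid : star x * a * x = a * (xadj * x) := by rw [hadj1, mul_assoc]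
      have hyid : star xadj * a * xadj = a * (x * xadj) := by rw [hadj2, mul_assoc]
      have hsum : p + q = (f (a * c)).re := by
        rw [hpdef, hqdef, hxid, hyid, hcdef, mul_add, map_add, Complex.add_re]
        ring
      have hcs2 : ‖f (a * c)‖ ≤ Real.sqrt (f (star c * a * c)).re := by
        have h := cs_abs hf.1 b (b * c)
        rw [bshape2 hb hbb c, bshape hb hbb c,
          show star b * b = a from by rw [hb, hbb], hf.2] at h
        simpa using h
      have hmem : Real.sqrt (f (star c * a * c)).re ∈ aNormSet a c := ⟨f, hf, rfl⟩
      calc p + q = (f (a * c)).re := hsum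
        _ ≤ ‖f (a * c)‖ := Complex.re_le_norm _
        _ ≤ Real.sqrt (f (star c * a * c)).re := hcs2
        _ ≤ K := le_csSup hKbdd hmem
    have hM2mem : ‖f (a * (x * x))‖ ≤ M2 :=
      le_csSup hM2bdd ⟨f, hf, rfl⟩
    have hsq : Real.sqrt p * Real.sqrt q ≤ (p + q) / 2 := by
      have h1 : Real.sqrt p ^ 2 = p := Real.sq_sqrt (posre f hf x)
      have h2 : Real.sqrt q ^ 2 = q := Real.sq_sqrt (posre f hf xadj)
      nlinarith [two_mul_le_add_sq (Real.sqrt p) (Real.sqrt q)]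
    have hfin : 2 * (‖f (a * x)‖ * ‖f (a * x)‖) ≤ M2 + K / 2 := by
      calc 2 * (‖f (a * x)‖ * ‖f (a * x)‖)
          ≤ ‖f (a * (x * x))‖ + Real.sqrt p * Real.sqrt q := hbuz
        _ ≤ M2 + (p + q) / 2 := add_le_add hM2mem hsq
        _ ≤ M2 + K / 2 := by linarith
    rw [sq]
    rw [hDdef]
    linarith
  -- Step D : conclude
  have hNle : aNR a x ≤ Real.sqrt D := by
    apply Real.sSup_le
    · rintro s hs
      exact Real.le_sqrt_of_sq_le (hmain s hs)
    · exact Real.sqrt_nonneg _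
  have hN0 : 0 ≤ aNR a x :=
    Real.sSup_nonneg (by rintro t ⟨f, hf, rfl⟩; exact norm_nonneg _)
  have hN2 : aNR a x ^ (2 : ℕ) ≤ D := by
    calc aNR a x ^ (2 : ℕ) ≤ Real.sqrt D ^ (2 : ℕ) := pow_le_pow_left₀ hN0 hNle 2
      _ = D := Real.sq_sqrt hD
  have hr0 : (0 : ℝ) ≤ r := le_trans zero_le_one hr
  have h2pos : (0 : ℝ) < (2 : ℝ) ^ r := Real.rpow_pos_of_pos (by norm_num) r
  calc aNR a x ^ (2 * r) = (aNR a x ^ (2 : ℕ)) ^ r := by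
        rw [Real.rpow_mul hN0, show ((2 : ℝ)) = ((2 : ℕ) : ℝ) by norm_num,
          Real.rpow_natCast]
    _ ≤ D ^ r := Real.rpow_le_rpow (by positivity) hN2 hr0
    _ = ((1/2) * M2 + (1/2) * (K / 2)) ^ r := by
        rw [show D = (1/2) * M2 + (1/2) * (K / 2) from by rw [hDdef]; ring]
    _ ≤ (1/2) * M2 ^ r + (1/2) * (K / 2) ^ r := jensen2 hM2nn (by positivity) hr
    _ = (1/2) * M2 ^ r + (1 / (2 : ℝ) ^ (r + 1)) * K ^ r := by
        rw [Real.div_rpow hKnn (by norm_num : (0:ℝ) ≤ 2),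
          Real.rpow_add (by norm_num : (0:ℝ) < 2), Real.rpow_one]
        field_simp

end
end

section
/- Let A be a unital C*-algebra, a a nonzero positive element of A, and x ∈ A admitting an a-adjoint x^{#a}, with ‖x‖_a < ∞ and ‖x^{#a}‖_a < ∞. Then for every 0 ≤ α ≤ 1, v_a(x)² ≤ (α/2)·v_a(x²) + ‖(α/4)·x x^{#a} + (1 − 3α/4)·x^{#a} x‖_a. -/
open scoped ComplexOrder

section

variable {A : Type*} [CStarAlgebra A] [PartialOrder A] [StarOrderedRing A]

namespace Stmt10Aux

/-- The sesquilinear form attached to `f` and `a`. -/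
noncomputable def B (a : A) (f : A →ₗ[ℂ] ℂ) (u v : A) : ℂ := f (star v * a * u)

lemma B_def (a : A) (f : A →ₗ[ℂ] ℂ) (u v : A) : B a f u v = f (star v * a * u) := rfl

variable {a : A} {f : A →ₗ[ℂ] ℂ}

lemma B_add_left (u u' v : A) : B a f (u + u') v = B a f u v + B a f u' v := by
  simp [B, mul_add, map_add]

lemma B_add_right (u v v' : A) : B a f u (v + v') = B a f u v + B a f u v' := by
  simp [B, star_add, add_mul, map_add]

lemma B_smul_left (c : ℂ) (u v : A) : B a f (c • u) v = c * B a f u v := by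
  simp [B, mul_smul_comm, map_smul, smul_eq_mul]

lemma B_smul_right (c : ℂ) (u v : A) :
    B a f u (c • v) = (starRingEnd ℂ) c * B a f u v := by
  simp [B, star_smul, smul_mul_assoc, map_smul, smul_eq_mul, Complex.star_def]

lemma B_neg_left (u v : A) : B a f (-u) v = -B a f u v := by
  simp [B, mul_neg, map_neg]

lemma B_neg_right (u v : A) : B a f u (-v) = -B a f u v := by
  simp [B, star_neg, neg_mul, map_neg]

lemma B_diag_nonneg (ha : 0 ≤ a) (hf : IsPosLF f) (u : A) : 0 ≤ B a f u u := by
  obtain ⟨s, hstar, hmul⟩ : ∃ s : A, star s = s ∧ s * s = a :=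
    ⟨CFC.sqrt a, (IsSelfAdjoint.of_nonneg (CFC.sqrt_nonneg a)).star_eq,
      CFC.sqrt_mul_sqrt_self a ha⟩
  have key : star u * a * u = star (s * u) * (s * u) := by
    rw [star_mul, hstar, ← hmul]
    simp [mul_assoc]
  rw [B_def, key]
  exact hf _

lemma B_diag_im (ha : 0 ≤ a) (hf : IsPosLF f) (u : A) : (B a f u u).im = 0 := by
  simpa using (Complex.le_def.mp (B_diag_nonneg ha hf u)).2.symm

lemma B_diag_re (ha : 0 ≤ a) (hf : IsPosLF f) (u : A) : 0 ≤ (B a f u u).re := by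
  simpa using (Complex.le_def.mp (B_diag_nonneg ha hf u)).1

lemma B_conj (ha : 0 ≤ a) (hf : IsPosLF f) (u v : A) :
    B a f v u = (starRingEnd ℂ) (B a f u v) := by
  have h1 : B a f (u + v) (u + v) = B a f u u + B a f u v + B a f v u + B a f v v := by
    simp only [B_add_left, B_add_right]; ring
  have h2 : B a f (u + (Complex.I : ℂ) • v) (u + (Complex.I : ℂ) • v)
      = B a f u u + (-Complex.I) * B a f u v + Complex.I * B a f v u + B a f v v := by
    simp only [B_add_left, B_add_right, B_smul_left, B_smul_right, Complex.conj_I]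
    linear_combination (-(B a f v v)) * Complex.I_sq
  have i1 := B_diag_im ha hf (u + v)
  rw [h1] at i1
  have i2 := B_diag_im ha hf (u + (Complex.I : ℂ) • v)
  rw [h2] at i2
  have iu := B_diag_im ha hf u
  have iv := B_diag_im ha hf v
  simp only [Complex.add_im, Complex.mul_im, Complex.neg_re, Complex.neg_im,
    Complex.I_re, Complex.I_im, iu, iv] at i1 i2
  apply Complex.ext
  · simp only [Complex.conj_re]; nlinarith [i2]
  · simp only [Complex.conj_im]; nlinarith [i1]

lemma B_sub_expand (ha : 0 ≤ a) (hf : IsPosLF f) (u v : A) (t : ℂ) :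
    B a f (u - t • v) (u - t • v)
      = B a f u u - (starRingEnd ℂ) t * B a f u v - t * (starRingEnd ℂ) (B a f u v)
        + (t * (starRingEnd ℂ) t) * B a f v v := by
  have hsub : u - t • v = u + (-t) • v := by rw [neg_smul, ← sub_eq_add_neg]
  rw [hsub]
  simp only [B_add_left, B_add_right, B_smul_left, B_smul_right, map_neg,
    B_conj ha hf u v]
  ring

lemma B_cs (ha : 0 ≤ a) (hf : IsPosLF f) (u v : A) :
    ‖B a f u v‖ ^ 2 ≤ (B a f u u).re * (B a f v v).re := by
  set z := B a f u v with hz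
  set p := (B a f u u).re with hp'
  set q := (B a f v v).re with hq'
  have hp : 0 ≤ p := B_diag_re ha hf u
  have hq : 0 ≤ q := B_diag_re ha hf v
  have hBuu : B a f u u = (p : ℂ) := Complex.ext rfl (by simpa using B_diag_im ha hf u)
  have hBvv : B a f v v = (q : ℂ) := Complex.ext rfl (by simpa using B_diag_im ha hf v)
  have key : ∀ s : ℝ, 0 ≤ p - 2 * s * Complex.normSq z + s ^ 2 * Complex.normSq z * q := by
    intro s
    have h := B_diag_nonneg ha hf (u - ((s : ℂ) * z) • v)
    rw [B_sub_expand ha hf u v ((s : ℂ) * z), hBuu, hBvv, ← hz] at h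
    have heq : (p : ℂ) - (starRingEnd ℂ) ((s : ℂ) * z) * z - ((s : ℂ) * z) * (starRingEnd ℂ) z
        + (((s : ℂ) * z) * (starRingEnd ℂ) ((s : ℂ) * z)) * (q : ℂ)
        = ((p - 2 * s * Complex.normSq z + s ^ 2 * Complex.normSq z * q : ℝ) : ℂ) := by
      rw [map_mul, Complex.conj_ofReal]
      push_cast
      linear_combination ((s : ℂ) ^ 2 * (q : ℂ) * Complex.normSq z - 2 * (s : ℂ) * Complex.normSq z
        - (s : ℂ) ^ 2 * (q : ℂ) * (z * (starRingEnd ℂ) z) + 2 * (s : ℂ) * (z * (starRingEnd ℂ) z)) * (1 : ℂ)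
          + ((s : ℂ) ^ 2 * (q : ℂ) - 2 * (s : ℂ)) * Complex.mul_conj z
    rw [heq] at h
    exact Complex.zero_le_real.mp h
  rcases eq_or_lt_of_le (Complex.normSq_nonneg z) with hn | hn
  · rw [Complex.sq_norm, ← hn]
    positivity
  · rcases eq_or_lt_of_le hq with h0 | h0
    · exfalso
      have hthis := key ((p + 1) / (2 * Complex.normSq z))
      rw [← h0] at hthis
      simp only [mul_zero, add_zero] at hthis
      have h2 : 2 * ((p + 1) / (2 * Complex.normSq z)) * Complex.normSq z = p + 1 := by
        field_simp
      rw [h2] at hthis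
      linarith
    · have hthis := key (1 / q)
      have hq0 : q ≠ 0 := ne_of_gt h0
      have h6 : 2 * (1 / q) * Complex.normSq z = 2 * (Complex.normSq z / q) := by ring
      have h7 : (1 / q) ^ 2 * Complex.normSq z * q = Complex.normSq z / q := by
        field_simp
      rw [h6, h7] at hthis
      have h8 : Complex.normSq z / q ≤ p := by linarith
      have h9 : Complex.normSq z ≤ p * q := by
        have := (div_le_iff₀ h0).mp h8
        linarith
      rw [Complex.sq_norm]
      exact h9

lemma B_abs_le (ha : 0 ≤ a) (hf : IsPosLF f) (u v : A) :
    ‖B a f u v‖ ≤ Real.sqrt ((B a f u u).re * (B a f v v).re) := by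
  have h := Real.sqrt_le_sqrt (B_cs ha hf u v)
  rwa [Real.sqrt_sq (norm_nonneg _)] at h

lemma B_scale (c : ℂ) (u : A) :
    (B a f (c • u) (c • u)).re = Complex.normSq c * (B a f u u).re := by
  rw [B_smul_left, B_smul_right, ← mul_assoc, Complex.mul_conj]
  exact Complex.re_ofReal_mul _ _

lemma B_triangle (ha : 0 ≤ a) (hf : IsPosLF f) (u v : A) :
    Real.sqrt ((B a f (u + v) (u + v)).re)
      ≤ Real.sqrt ((B a f u u).re) + Real.sqrt ((B a f v v).re) := by
  set p := (B a f u u).re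
  set q := (B a f v v).re
  have hp : 0 ≤ p := B_diag_re ha hf u
  have hq : 0 ≤ q := B_diag_re ha hf v
  have habs : (B a f u v).re ≤ Real.sqrt p * Real.sqrt q := by
    calc (B a f u v).re ≤ ‖B a f u v‖ := Complex.re_le_norm _
    _ ≤ Real.sqrt (p * q) := B_abs_le ha hf u v
    _ = Real.sqrt p * Real.sqrt q := Real.sqrt_mul hp q
  have hexp : (B a f (u + v) (u + v)).re = p + q + 2 * (B a f u v).re := by
    have : B a f (u + v) (u + v) = B a f u u + B a f v v
        + (B a f u v + (starRingEnd ℂ) (B a f u v)) := by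
      simp only [B_add_left, B_add_right, B_conj ha hf u v]
      ring
    rw [this]
    simp [Complex.add_re, Complex.conj_re]
    ring
  have hle : (B a f (u + v) (u + v)).re ≤ (Real.sqrt p + Real.sqrt q) ^ 2 := by
    rw [hexp]
    have h1 : Real.sqrt p ^ 2 = p := Real.sq_sqrt hp
    have h2 : Real.sqrt q ^ 2 = q := Real.sq_sqrt hq
    nlinarith [habs]
  calc Real.sqrt ((B a f (u + v) (u + v)).re) ≤ Real.sqrt ((Real.sqrt p + Real.sqrt q) ^ 2) :=
        Real.sqrt_le_sqrt hle
  _ = Real.sqrt p + Real.sqrt q := Real.sqrt_sq (by positivity)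

lemma buzano (ha : 0 ≤ a) (hf : IsPosLF f) {e : A} (he : B a f e e = 1) (u v : A) :
    ‖B a f u e * B a f e v‖ ≤
      (‖B a f u v‖ + Real.sqrt ((B a f u u).re * (B a f v v).re)) / 2 := by
  set c := B a f u e with hc
  set u' := (2 * c) • e - u with hu'
  have h1 : B a f u' v = 2 * c * B a f e v - B a f u v := by
    rw [hu', sub_eq_add_neg, B_add_left, B_neg_left, B_smul_left]
    ring
  have h2 : B a f u' u' = B a f u u := by
    have hneg : u' = -(u - (2 * c) • e) := by rw [hu']; abel
    have hBneg : B a f u' u' = B a f (u - (2 * c) • e) (u - (2 * c) • e) := by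
      rw [hneg, B_neg_left, B_neg_right, neg_neg]
    rw [hBneg, B_sub_expand ha hf u e (2 * c), he, ← hc]
    have hconj : (starRingEnd ℂ) (2 * c) = 2 * (starRingEnd ℂ) c := by
      rw [map_mul, map_ofNat]
    rw [hconj]
    ring
  have h3 : ‖2 * (B a f u e * B a f e v)‖
      ≤ ‖B a f u v‖ + ‖B a f u' v‖ := by
    have heq : 2 * (B a f u e * B a f e v) = B a f u v + B a f u' v := by
      rw [h1, hc]; ring
    rw [heq]
    exact norm_add_le _ _
  have h4 : ‖B a f u' v‖ ≤ Real.sqrt ((B a f u u).re * (B a f v v).re) := by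
    have h := B_abs_le ha hf u' v
    rwa [h2] at h
  have h5 : ‖2 * (B a f u e * B a f e v)‖
      = 2 * ‖B a f u e * B a f e v‖ := by
    rw [norm_mul]
    norm_num
  rw [h5] at h3
  linarith

lemma re_le_sq {a x : A} (ha : 0 ≤ a) {M : ℝ}
    (hM : ∀ r ∈ aNormSet a x, r ≤ M) {f : A →ₗ[ℂ] ℂ} (hf : MemSa a f) :
    (f (star x * a * x)).re ≤ M ^ 2 := by
  have h0 : 0 ≤ (f (star x * a * x)).re := B_diag_re ha hf.1 x
  have h1 : Real.sqrt ((f (star x * a * x)).re) ≤ M := hM _ ⟨f, hf, rfl⟩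
  have h2 := pow_le_pow_left₀ (Real.sqrt_nonneg _) h1 2
  rwa [Real.sq_sqrt h0] at h2

lemma prod_bound {a x : A} (ha : 0 ≤ a) {M : ℝ} (hM0 : 0 ≤ M)
    (hM : ∀ r ∈ aNormSet a x, r ≤ M) {f : A →ₗ[ℂ] ℂ} (hf : MemSa a f) (y : A) :
    (f (star (x * y) * a * (x * y))).re ≤ M ^ 2 * (f (star y * a * y)).re := by
  set m : A →ₗ[ℂ] A := (LinearMap.mulLeft ℂ (star y)).comp (LinearMap.mulRight ℂ y) with hm
  set φ : A →ₗ[ℂ] ℂ := f.comp m with hφ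
  have hφ_apply : ∀ z : A, φ z = f (star y * z * y) := by
    intro z
    simp [hφ, hm, mul_assoc]
  have hφpos : IsPosLF φ := by
    intro z
    have hzz : star y * (star z * z) * y = star (z * y) * (z * y) := by
      simp [star_mul, mul_assoc]
    rw [hφ_apply, hzz]
    exact hf.1 _
  have hLHS : f (star (x * y) * a * (x * y)) = φ (star x * a * x) := by
    rw [hφ_apply]
    congr 1
    simp [star_mul, mul_assoc]
  have hφa : φ a = f (star y * a * y) := hφ_apply a
  have hca : 0 ≤ B a f y y := B_diag_nonneg ha hf.1 y
  have hcre : 0 ≤ (f (star y * a * y)).re := B_diag_re ha hf.1 y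
  have hcim : (f (star y * a * y)).im = 0 := B_diag_im ha hf.1 y
  have hφd : 0 ≤ (φ (star x * a * x)).re := B_diag_re ha hφpos x
  rw [hLHS]
  rcases eq_or_lt_of_le hcre with hc | hc
  · -- f (star y * a * y) = 0
    have hφa0 : φ a = 0 := by
      rw [hφa]
      exact Complex.ext (by simp [← hc]) (by simp [hcim])
    have hkill : ∀ t : ℝ, 0 ≤ t →
        (f (star x * a * x)).re + t * (φ (star x * a * x)).re ≤ M ^ 2 := by
      intro t ht
      set g : A →ₗ[ℂ] ℂ := f + (t : ℂ) • φ with hg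
      have hgpos : IsPosLF g := by
        intro z
        have h1 := hf.1 z
        have h2 := hφpos z
        have h3 : 0 ≤ (t : ℂ) * φ (star z * z) :=
          mul_nonneg (by exact_mod_cast Complex.zero_le_real.mpr ht) h2
        simpa [hg] using add_nonneg h1 h3
      have hga : g a = 1 := by
        simp [hg, hf.2, hφa0]
      have := re_le_sq ha hM (⟨hgpos, hga⟩ : MemSa a g)
      have hre : (g (star x * a * x)).re
          = (f (star x * a * x)).re + t * (φ (star x * a * x)).re := by
        simp [hg, Complex.add_re, Complex.re_ofReal_mul]
      linarith [this, hre.symm.le, hre.le]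
    have hφ0 : (φ (star x * a * x)).re ≤ 0 := by
      by_contra hpos
      push_neg at hpos
      have hfx : 0 ≤ (f (star x * a * x)).re := B_diag_re ha hf.1 x
      have ht : (0:ℝ) ≤ (M ^ 2 + 1) / (φ (star x * a * x)).re := by positivity
      have := hkill _ ht
      rw [div_mul_cancel₀ _ (ne_of_gt hpos)] at this
      linarith
    have : (φ (star x * a * x)).re = 0 := le_antisymm hφ0 hφd
    rw [this, ← hc]
    simp
  · -- 0 < (f (star y * a * y)).re
    set c : ℝ := (f (star y * a * y)).re with hcdef
    have hφac : φ a = (c : ℂ) := by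
      rw [hφa]
      exact Complex.ext rfl (by simp [hcim])
    set g : A →ₗ[ℂ] ℂ := ((c⁻¹ : ℝ) : ℂ) • φ with hg
    have hgpos : IsPosLF g := by
      intro z
      have h2 := hφpos z
      have : 0 ≤ ((c⁻¹ : ℝ) : ℂ) * φ (star z * z) :=
        mul_nonneg (Complex.zero_le_real.mpr (by positivity)) h2
      simpa [hg] using this
    have hga : g a = 1 := by
      have hgav : g a = ((c⁻¹ : ℝ) : ℂ) * φ a := by simp [hg]
      rw [hgav, hφac, ← Complex.ofReal_mul, inv_mul_cancel₀ (ne_of_gt hc), Complex.ofReal_one]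
    have hle := re_le_sq ha hM (⟨hgpos, hga⟩ : MemSa a g)
    have hre : (g (star x * a * x)).re = c⁻¹ * (φ (star x * a * x)).re := by
      simp [hg, Complex.re_ofReal_mul]
    rw [hre] at hle
    calc (φ (star x * a * x)).re = c * (c⁻¹ * (φ (star x * a * x)).re) := by
          field_simp
    _ ≤ c * M ^ 2 := by
          apply mul_le_mul_of_nonneg_left hle (le_of_lt hc)
    _ = M ^ 2 * c := by ring

lemma perstate {a x xadj : A} (ha : 0 ≤ a) (hadj : a * xadj = star x * a)
    {f : A →ₗ[ℂ] ℂ} (hf : MemSa a f) {α : ℝ} (hα0 : 0 ≤ α) (hα1 : α ≤ 1) :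
    ‖f (a * x)‖ ^ 2 ≤
      (α / 2) * ‖f (a * (x * x))‖
        + ((α / 4) * (f (star xadj * a * xadj)).re
          + (1 - 3 * α / 4) * (f (star x * a * x)).re) := by
  have hsa : star xadj * a = a * x := by
    simpa [star_mul, (IsSelfAdjoint.of_nonneg ha).star_eq] using congrArg star hadj
  have hBx1 : B a f x 1 = f (a * x) := by simp [B_def]
  have hB1v : B a f 1 xadj = f (a * x) := by simp [B_def, hsa]
  have hB11 : B a f 1 1 = (1 : ℂ) := by simp [B_def, hf.2]
  have hBxv : B a f x xadj = f (a * (x * x)) := by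
    rw [B_def, hsa, mul_assoc]
  have hBxx : (B a f x x).re = (f (star x * a * x)).re := rfl
  have hBvv : (B a f xadj xadj).re = (f (star xadj * a * xadj)).re := rfl
  have hp : 0 ≤ (f (star x * a * x)).re := B_diag_re ha hf.1 x
  have hq : 0 ≤ (f (star xadj * a * xadj)).re := B_diag_re ha hf.1 xadj
  have htriv : ‖f (a * x)‖ ^ 2 ≤ (f (star x * a * x)).re := by
    have h := B_cs ha hf.1 x 1
    rw [hBx1, hB11, hBxx] at h
    simpa using h
  have hbuz := buzano ha hf.1 hB11 x xadj
  rw [hBx1, hB1v, hBxv, hBxx, hBvv] at hbuz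
  have habs2 : ‖f (a * x) * f (a * x)‖ = ‖f (a * x)‖ ^ 2 := by
    rw [norm_mul]; ring
  rw [habs2] at hbuz
  have hamgm : Real.sqrt ((f (star x * a * x)).re * (f (star xadj * a * xadj)).re)
      ≤ ((f (star x * a * x)).re + (f (star xadj * a * xadj)).re) / 2 := by
    have h1 : (f (star x * a * x)).re * (f (star xadj * a * xadj)).re
        ≤ (((f (star x * a * x)).re + (f (star xadj * a * xadj)).re) / 2) ^ 2 := by
      nlinarith [sq_nonneg ((f (star x * a * x)).re - (f (star xadj * a * xadj)).re)]
    calc Real.sqrt ((f (star x * a * x)).re * (f (star xadj * a * xadj)).re)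
        ≤ Real.sqrt ((((f (star x * a * x)).re + (f (star xadj * a * xadj)).re) / 2) ^ 2) :=
          Real.sqrt_le_sqrt h1
    _ = ((f (star x * a * x)).re + (f (star xadj * a * xadj)).re) / 2 :=
          Real.sqrt_sq (by positivity)
  calc ‖f (a * x)‖ ^ 2
      = α * (‖f (a * x)‖ ^ 2) + (1 - α) * (‖f (a * x)‖ ^ 2) := by ring
  _ ≤ α * ((‖f (a * (x * x))‖
        + Real.sqrt ((f (star x * a * x)).re * (f (star xadj * a * xadj)).re)) / 2)
      + (1 - α) * (f (star x * a * x)).re := by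
        apply add_le_add
        · exact mul_le_mul_of_nonneg_left hbuz hα0
        · exact mul_le_mul_of_nonneg_left htriv (by linarith)
  _ ≤ α * ((‖f (a * (x * x))‖
        + ((f (star x * a * x)).re + (f (star xadj * a * xadj)).re) / 2) / 2)
      + (1 - α) * (f (star x * a * x)).re := by
        gcongr
  _ = (α / 2) * ‖f (a * (x * x))‖
        + ((α / 4) * (f (star xadj * a * xadj)).re
          + (1 - 3 * α / 4) * (f (star x * a * x)).re) := by ring

end Stmt10Aux

open Stmt10Aux

/-- `vₐ(x)² ≤ (α/2) vₐ(x²) + ‖(α/4) x x^{#a} + (1 - 3α/4) x^{#a} x‖ₐ`. -/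
theorem stmt10 (a : A) (ha : 0 ≤ a) (ha0 : a ≠ 0)
    (x xadj : A) (hadj : a * xadj = star x * a)
    (hx : BddAbove (aNormSet a x)) (hxadj : BddAbove (aNormSet a xadj))
    (α : ℝ) (hα0 : 0 ≤ α) (hα1 : α ≤ 1) :
    aNR a x ^ 2 ≤
      (α / 2) * aNR a (x * x) +
        aNorm a (((α / 4 : ℝ) : ℂ) • (x * xadj) +
          ((1 - 3 * α / 4 : ℝ) : ℂ) • (xadj * x)) := by
  obtain ⟨Mx0, hMx0⟩ := hx
  obtain ⟨My0, hMy0⟩ := hxadj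
  set Mx := max Mx0 0 with hMxdef
  set My := max My0 0 with hMydef
  have hMx : ∀ r ∈ aNormSet a x, r ≤ Mx := fun r hr => le_trans (hMx0 hr) (le_max_left _ _)
  have hMy : ∀ r ∈ aNormSet a xadj, r ≤ My := fun r hr => le_trans (hMy0 hr) (le_max_left _ _)
  have hMxnn : (0:ℝ) ≤ Mx := le_max_right _ _
  have hMynn : (0:ℝ) ≤ My := le_max_right _ _
  set w : A := ((α / 4 : ℝ) : ℂ) • (x * xadj) + ((1 - 3 * α / 4 : ℝ) : ℂ) • (xadj * x) with hw
  have hsa : star xadj * a = a * x := by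
    simpa [star_mul, (IsSelfAdjoint.of_nonneg ha).star_eq] using congrArg star hadj
  -- boundedness of the numerical-radius set for x * x
  have hNRb : BddAbove {r : ℝ | ∃ f : A →ₗ[ℂ] ℂ, MemSa a f ∧ r = ‖f (a * (x * x))‖} := by
    refine ⟨Mx * My, ?_⟩
    rintro r ⟨f, hf, rfl⟩
    have hBxv : B a f x xadj = f (a * (x * x)) := by rw [B_def, hsa, mul_assoc]
    have h := B_cs ha hf.1 x xadj
    rw [hBxv] at h
    have hpx : (B a f x x).re ≤ Mx ^ 2 := re_le_sq ha hMx hf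
    have hqx : (B a f xadj xadj).re ≤ My ^ 2 := re_le_sq ha hMy hf
    have hpnn : 0 ≤ (B a f x x).re := B_diag_re ha hf.1 x
    have hqnn : 0 ≤ (B a f xadj xadj).re := B_diag_re ha hf.1 xadj
    have h2 : ‖f (a * (x * x))‖ ^ 2 ≤ (Mx * My) ^ 2 := by
      nlinarith [h, hpx, hqx, hpnn, hqnn]
    exact le_of_pow_le_pow_left₀ two_ne_zero (by positivity) h2
  -- boundedness of the seminorm set for w
  have hWb : BddAbove (aNormSet a w) := by
    refine ⟨|α / 4| * (Mx * My) + |1 - 3 * α / 4| * (Mx * My), ?_⟩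
    rintro r ⟨f, hf, rfl⟩
    have htri := B_triangle ha hf.1 (((α / 4 : ℝ) : ℂ) • (x * xadj))
      (((1 - 3 * α / 4 : ℝ) : ℂ) • (xadj * x))
    have hscale : ∀ (c : ℝ) (u : A), Real.sqrt ((B a f (((c : ℝ) : ℂ) • u) (((c : ℝ) : ℂ) • u)).re)
        = |c| * Real.sqrt ((B a f u u).re) := by
      intro c u
      rw [B_scale, Complex.normSq_ofReal, Real.sqrt_mul (mul_self_nonneg c),
        Real.sqrt_mul_self_eq_abs]
    have hb1 : (f (star (x * xadj) * a * (x * xadj))).re ≤ (Mx * My) ^ 2 := by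
      have h1 := prod_bound ha hMxnn hMx hf xadj
      have h2 : (f (star xadj * a * xadj)).re ≤ My ^ 2 := re_le_sq ha hMy hf
      nlinarith [h1, h2, B_diag_re ha hf.1 xadj]
    have hb2 : (f (star (xadj * x) * a * (xadj * x))).re ≤ (Mx * My) ^ 2 := by
      have h1 := prod_bound ha hMynn hMy hf x
      have h2 : (f (star x * a * x)).re ≤ Mx ^ 2 := re_le_sq ha hMx hf
      nlinarith [h1, h2, B_diag_re ha hf.1 x]
    have hsb1 : Real.sqrt ((B a f (x * xadj) (x * xadj)).re) ≤ Mx * My := by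
      have h := Real.sqrt_le_sqrt hb1
      rwa [Real.sqrt_sq (by positivity)] at h
    have hsb2 : Real.sqrt ((B a f (xadj * x) (xadj * x)).re) ≤ Mx * My := by
      have h := Real.sqrt_le_sqrt hb2
      rwa [Real.sqrt_sq (by positivity)] at h
    calc Real.sqrt ((f (star w * a * w)).re)
        = Real.sqrt ((B a f w w).re) := rfl
    _ ≤ Real.sqrt ((B a f (((α / 4 : ℝ) : ℂ) • (x * xadj)) (((α / 4 : ℝ) : ℂ) • (x * xadj))).re)
          + Real.sqrt ((B a f (((1 - 3 * α / 4 : ℝ) : ℂ) • (xadj * x)) (((1 - 3 * α / 4 : ℝ) : ℂ) • (xadj * x))).re) := by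
          rw [hw]
          exact htri
    _ = |α / 4| * Real.sqrt ((B a f (x * xadj) (x * xadj)).re)
          + |1 - 3 * α / 4| * Real.sqrt ((B a f (xadj * x) (xadj * x)).re) := by
          rw [hscale, hscale]
    _ ≤ |α / 4| * (Mx * My) + |1 - 3 * α / 4| * (Mx * My) := by
          apply add_le_add
          · exact mul_le_mul_of_nonneg_left hsb1 (abs_nonneg _)
          · exact mul_le_mul_of_nonneg_left hsb2 (abs_nonneg _)
  -- nonnegativity facts
  have hNRnn : 0 ≤ aNR a (x * x) := Real.sSup_nonneg (by
    rintro r ⟨f, hf, rfl⟩; exact norm_nonneg _)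
  have hWnn : 0 ≤ aNorm a w := Real.sSup_nonneg (by
    rintro r ⟨f, hf, rfl⟩; exact Real.sqrt_nonneg _)
  have hRnn : 0 ≤ (α / 2) * aNR a (x * x) + aNorm a w :=
    add_nonneg (mul_nonneg (by linarith) hNRnn) hWnn
  -- every element of the numerical radius set for x is at most √R
  have hkey : ∀ r ∈ {r : ℝ | ∃ f : A →ₗ[ℂ] ℂ, MemSa a f ∧ r = ‖f (a * x)‖},
      r ≤ Real.sqrt ((α / 2) * aNR a (x * x) + aNorm a w) := by
    rintro r ⟨f, hf, rfl⟩
    have hps := perstate ha hadj hf hα0 hα1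
    have h1 : ‖f (a * (x * x))‖ ≤ aNR a (x * x) := le_csSup hNRb ⟨f, hf, rfl⟩
    have e1 : a * (x * xadj) = star xadj * a * xadj := by rw [hsa, mul_assoc]
    have e2 : a * (xadj * x) = star x * a * x := by rw [← hadj, mul_assoc]
    have hfaw : f (a * w) = ((α / 4 : ℝ) : ℂ) * f (star xadj * a * xadj)
        + ((1 - 3 * α / 4 : ℝ) : ℂ) * f (star x * a * x) := by
      rw [hw, mul_add, mul_smul_comm, mul_smul_comm, map_add, map_smul, map_smul,
        e1, e2, smul_eq_mul, smul_eq_mul]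
    have hre : (f (a * w)).re = (α / 4) * (f (star xadj * a * xadj)).re
        + (1 - 3 * α / 4) * (f (star x * a * x)).re := by
      rw [hfaw]
      simp [Complex.add_re, Complex.re_ofReal_mul]
    have h2 : (f (a * w)).re ≤ Real.sqrt ((f (star w * a * w)).re) := by
      have hB11 : B a f 1 1 = (1 : ℂ) := by simp [B_def, hf.2]
      have hcs := B_abs_le ha hf.1 w 1
      have hBw1 : B a f w 1 = f (a * w) := by simp [B_def]
      rw [hBw1, hB11] at hcs
      calc (f (a * w)).re ≤ ‖f (a * w)‖ := Complex.re_le_norm _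
      _ ≤ Real.sqrt ((B a f w w).re * (1 : ℂ).re) := hcs
      _ = Real.sqrt ((f (star w * a * w)).re) := by norm_num [B_def]
    have h3 : Real.sqrt ((f (star w * a * w)).re) ≤ aNorm a w := le_csSup hWb ⟨f, hf, rfl⟩
    have h4 : ‖f (a * x)‖ ^ 2 ≤ (α / 2) * aNR a (x * x) + aNorm a w := by
      calc ‖f (a * x)‖ ^ 2
          ≤ (α / 2) * ‖f (a * (x * x))‖
            + ((α / 4) * (f (star xadj * a * xadj)).re
              + (1 - 3 * α / 4) * (f (star x * a * x)).re) := hps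
      _ = (α / 2) * ‖f (a * (x * x))‖ + (f (a * w)).re := by rw [hre]
      _ ≤ (α / 2) * aNR a (x * x) + aNorm a w := by
            apply add_le_add
            · exact mul_le_mul_of_nonneg_left h1 (by linarith)
            · exact le_trans h2 h3
    have h5 := Real.sqrt_le_sqrt h4
    rwa [Real.sqrt_sq (norm_nonneg _)] at h5
  have hsup : aNR a x ≤ Real.sqrt ((α / 2) * aNR a (x * x) + aNorm a w) :=
    Real.sSup_le hkey (Real.sqrt_nonneg _)
  have hnn : 0 ≤ aNR a x := Real.sSup_nonneg (by
    rintro r ⟨f, hf, rfl⟩; exact norm_nonneg _)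
  calc aNR a x ^ 2 ≤ Real.sqrt ((α / 2) * aNR a (x * x) + aNorm a w) ^ 2 :=
        pow_le_pow_left₀ hnn hsup 2
  _ = (α / 2) * aNR a (x * x) + aNorm a w := Real.sq_sqrt hRnn

end
end

section
/- Let A be a unital C*-algebra, x ∈ A, φ an Orlicz function, and 0 ≤ α ≤ 1. Then φ(v(x)²) ≤ (α/2)·φ(v(x²)) + ‖(α/4)·φ(x x*) + (1 − 3α/4)·φ(x*x)‖, where φ(x x*) and φ(x*x) are defined by continuous functional calculus on the positive elements x x* and x*x. -/
open scoped ComplexOrder ComplexStarModule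

section

variable {A : Type*} [CStarAlgebra A] [PartialOrder A] [StarOrderedRing A]

variable {g : A →ₗ[ℂ] ℂ}

lemma state_nonneg (hg : IsState g) {a : A} (ha : 0 ≤ a) : 0 ≤ g a := by
  rw [StarOrderedRing.nonneg_iff] at ha
  induction ha using AddSubmonoid.closure_induction with
  | mem x hx => obtain ⟨s, rfl⟩ := hx; exact hg.1 s
  | zero => simpa using le_refl (0:ℂ)
  | add x y _ _ hx hy => rw [map_add]; exact add_nonneg hx hy

lemma state_im_of_selfAdjoint (hg : IsState g) {a : A} (ha : IsSelfAdjoint a) :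
    (g a).im = 0 := by
  have h1 : 0 ≤ g (a⁺) := state_nonneg hg (CFC.posPart_nonneg a)
  have h2 : 0 ≤ g (a⁻) := state_nonneg hg (CFC.negPart_nonneg a)
  have := CFC.posPart_sub_negPart a ha
  rw [Complex.nonneg_iff] at h1 h2
  have : g a = g (a⁺) - g (a⁻) := by rw [← map_sub, this]
  rw [this, Complex.sub_im, ← h1.2, ← h2.2, sub_zero]

lemma state_star (hg : IsState g) (x : A) : g (star x) = starRingEnd ℂ (g x) := by
  have h : x = (ℜ x : A) + Complex.I • (ℑ x : A) := (realPart_add_I_smul_imaginaryPart x).symm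
  have hsx : star x = (ℜ x : A) - Complex.I • (ℑ x : A) := by
    conv_lhs => rw [h]
    rw [star_add, star_smul, (ℜ x).2, (ℑ x).2]
    simp [sub_eq_add_neg]
  have hre : (g (ℜ x : A)).im = 0 := state_im_of_selfAdjoint hg (ℜ x).2
  have him : (g (ℑ x : A)).im = 0 := state_im_of_selfAdjoint hg (ℑ x).2
  rw [hsx, map_sub, map_smul]
  conv_rhs => rw [h, map_add, map_smul]
  apply Complex.ext <;> simp [hre, him]

lemma state_mono (hg : IsState g) {a b : A} (hab : a ≤ b) : g a ≤ g b := by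
  have := state_nonneg hg (sub_nonneg.mpr hab)
  rw [map_sub] at this
  exact sub_nonneg.mp this

lemma state_one (hg : IsState g) : g 1 = 1 := hg.2

lemma state_re_le_norm (hg : IsState g) {a : A} (ha : IsSelfAdjoint a) :
    (g a).re ≤ ‖a‖ := by
  have h := state_mono hg ha.le_algebraMap_norm_self
  have : g (algebraMap ℝ A ‖a‖) = (‖a‖ : ℂ) := by
    rw [Algebra.algebraMap_eq_smul_one, ← Complex.coe_smul, map_smul, hg.2]
    simp
  rw [Complex.le_def, this] at h
  simpa using h.1

lemma state_cs (hg : IsState g) (x : A) :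
    ‖g x‖ ^ 2 ≤ (g (star x * x)).re := by
  set t : ℂ := g x with ht
  have key : (0:ℂ) ≤ g (star x * x) - (‖t‖ ^ 2 : ℝ) := by
    have h0 : 0 ≤ g (star (x - t • 1) * (x - t • 1)) := hg.1 _
    have hexp : star (x - t • 1) * (x - t • 1)
        = star x * x - t • star x - (starRingEnd ℂ t) • x + (t * starRingEnd ℂ t) • (1:A) := by
      rw [star_sub, star_smul, star_one, RCLike.star_def]
      rw [sub_mul, mul_sub, mul_sub]
      simp only [smul_mul_assoc, mul_smul_comm, mul_one, one_mul, smul_smul]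
      abel
    rw [hexp] at h0
    simp only [map_add, map_sub, map_smul, smul_eq_mul, hg.2, mul_one] at h0
    have hstar : g (star x) = starRingEnd ℂ t := state_star hg x
    rw [hstar] at h0
    have habs : (starRingEnd ℂ) t * g x = ((‖t‖ ^ 2 : ℝ) : ℂ) := by
      rw [← ht, mul_comm, Complex.mul_conj, Complex.normSq_eq_norm_sq]
    rw [habs] at h0
    convert h0 using 1
    ring
  rw [Complex.nonneg_iff] at key
  have := key.1
  simpa [← Complex.ofReal_pow] using this

lemma state_abs_le_norm (hg : IsState g) (x : A) : ‖g x‖ ≤ ‖x‖ := by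
  have h1 := state_cs hg x
  have h2 := state_re_le_norm hg (IsSelfAdjoint.star_mul_self x)
  have h3 : ‖star x * x‖ = ‖x‖ ^ 2 := by
    rw [CStarRing.norm_star_mul_self]; ring
  nlinarith [norm_nonneg (g x), norm_nonneg x]

lemma support_line {φ : ℝ → ℝ} (hc : ConvexOn ℝ (Set.Ici 0) φ) {t₀ : ℝ} (ht₀ : 0 < t₀) :
    ∃ c : ℝ, ∀ t, 0 ≤ t → φ t₀ + c * (t - t₀) ≤ φ t := by
  set S : Set ℝ := (fun s => (φ t₀ - φ s) / (t₀ - s)) '' (Set.Ico 0 t₀) with hS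
  have hne : S.Nonempty := ⟨_, ⟨0, ⟨le_refl 0, ht₀⟩, rfl⟩⟩
  have hub : ∀ m ∈ S, m ≤ (φ (t₀ + 1) - φ t₀) / (t₀ + 1 - t₀) := by
    rintro m ⟨s, hs, rfl⟩
    exact hc.slope_mono_adjacent hs.1 (by simp; linarith) hs.2 (lt_add_one t₀)
  have hbdd : BddAbove S := ⟨_, hub⟩
  refine ⟨sSup S, fun t ht => ?_⟩
  rcases lt_trichotomy t t₀ with h | h | h
  · have hmem : (φ t₀ - φ t) / (t₀ - t) ∈ S := ⟨t, ⟨ht, h⟩, rfl⟩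
    have hle := le_csSup hbdd hmem
    have h1 : 0 < t₀ - t := by linarith
    rw [div_le_iff₀ h1] at hle
    ring_nf at hle ⊢
    linarith
  · subst h; simp
  · have hle : sSup S ≤ (φ t - φ t₀) / (t - t₀) := by
      refine csSup_le hne ?_
      rintro m ⟨s, hs, rfl⟩
      exact hc.slope_mono_adjacent hs.1 (le_trans hs.1 (le_of_lt (hs.2.trans h))) hs.2 h
    have h1 : 0 < t - t₀ := by linarith
    rw [le_div_iff₀ h1] at hle
    have h2 : sSup S * (t - t₀) ≤ (φ t - φ t₀) := hle
    nlinarith [mul_le_mul_of_nonneg_right hle (le_of_lt h1)]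

lemma spectrum_subset_Ici {p : A} (hp : 0 ≤ p) : spectrum ℝ p ⊆ Set.Ici 0 :=
  fun t ht => spectrum_nonneg_of_nonneg hp ht

lemma orlicz_nonneg {φ : ℝ → ℝ} (hφ : IsOrlicz φ) {t : ℝ} (ht : 0 ≤ t) : 0 ≤ φ t := by
  have := hφ.monotoneOn (Set.self_mem_Ici) ht ht
  rwa [hφ.map_zero] at this

lemma cfc_orlicz_nonneg {φ : ℝ → ℝ} (hφ : IsOrlicz φ) {p : A} (hp : 0 ≤ p) :
    0 ≤ cfc φ p :=
  cfc_nonneg fun t ht => orlicz_nonneg hφ (spectrum_subset_Ici hp ht)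

lemma state_jensen (hg : IsState g) {φ : ℝ → ℝ} (hφ : IsOrlicz φ) {p : A} (hp : 0 ≤ p) :
    φ ((g p).re) ≤ (g (cfc φ p)).re := by
  have hsa : IsSelfAdjoint p := hp.isSelfAdjoint
  have ht0 : 0 ≤ (g p).re := (Complex.nonneg_iff.mp (state_nonneg hg hp)).1
  have hcont : ContinuousOn φ (spectrum ℝ p) := hφ.continuousOn.mono (spectrum_subset_Ici hp)
  rcases eq_or_lt_of_le ht0 with h0 | h0
  · rw [← h0, hφ.map_zero]
    exact (Complex.nonneg_iff.mp (state_nonneg hg (cfc_orlicz_nonneg hφ hp))).1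
  · set t₀ := (g p).re with ht₀
    obtain ⟨c, hc⟩ := support_line hφ.convexOn h0
    have key : cfc (fun t => (φ t₀ - c * t₀) + c * t) p ≤ cfc φ p := by
      apply cfc_mono
      · intro t ht
        have := hc t (spectrum_subset_Ici hp ht)
        linarith
      · exact (continuous_const.add (continuous_const.mul continuous_id)).continuousOn
      · exact hcont
    have heq : cfc (fun t => (φ t₀ - c * t₀) + c * t) p
        = algebraMap ℝ A (φ t₀ - c * t₀) + c • p := by
      rw [cfc_add p _ _, cfc_const _ p, cfc_const_mul _ _ p, cfc_id' ℝ p]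
    rw [heq] at key
    have := state_mono hg key
    have hre : (g (algebraMap ℝ A (φ t₀ - c * t₀) + c • p)).re = φ t₀ := by
      rw [map_add, Algebra.algebraMap_eq_smul_one, ← Complex.coe_smul, map_smul,
        LinearMap.map_smul_of_tower, hg.2]
      simp [ht₀]
    rw [Complex.le_def, hre] at this
    exact this.1

lemma nrSet_bddAbove (x : A) :
    BddAbove {r : ℝ | ∃ g : A →ₗ[ℂ] ℂ, IsState g ∧ r = ‖g x‖} := by
  refine ⟨‖x‖, ?_⟩
  rintro r ⟨g, hg, rfl⟩
  exact state_abs_le_norm hg x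

lemma nr_nonneg (x : A) : 0 ≤ nr x := by
  apply Real.sSup_nonneg
  rintro r ⟨g, hg, rfl⟩
  exact norm_nonneg _

lemma abs_le_nr (hg : IsState g) (x : A) : ‖g x‖ ≤ nr x :=
  le_csSup (nrSet_bddAbove x) ⟨g, hg, rfl⟩

lemma convex3 {φ : ℝ → ℝ} (hφ : IsOrlicz φ) {a b c u1 u2 u3 : ℝ}
    (ha : 0 ≤ a) (hb : 0 ≤ b) (hc : 0 ≤ c) (habc : a + b + c = 1)
    (h1 : 0 ≤ u1) (h2 : 0 ≤ u2) (h3 : 0 ≤ u3) :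
    φ (a * u1 + b * u2 + c * u3) ≤ a * φ u1 + b * φ u2 + c * φ u3 := by
  have := hφ.convexOn.map_sum_le (t := Finset.univ) (w := ![a, b, c]) (p := ![u1, u2, u3])
    (by intro i _; fin_cases i <;> assumption)
    (by simp [Fin.sum_univ_three]; linarith)
    (by intro i _; fin_cases i <;> assumption)
  simpa [Fin.sum_univ_three] using this

lemma state_key (hg : IsState g) (x : A) :
    ‖g x‖ ^ 2 ≤
      4⁻¹ * (2 * nr (x * x) + (g (x * star x)).re + (g (star x * x)).re) := by
  classical
  set c : ℂ := if g x = 0 then 1 else starRingEnd ℂ (g x) / (‖g x‖ : ℂ) with hcdef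
  have hc1 : starRingEnd ℂ c * c = 1 := by
    by_cases h : g x = 0
    · simp [hcdef, h]
    · have habs0 : (‖g x‖ : ℂ) ≠ 0 := by
        simp only [ne_eq, Complex.ofReal_eq_zero, norm_eq_zero]; exact h
      rw [hcdef, if_neg h, map_div₀, Complex.conj_conj, Complex.conj_ofReal, div_mul_div_comm,
        Complex.mul_conj, Complex.normSq_eq_norm_sq,
        div_eq_one_iff_eq (mul_ne_zero habs0 habs0)]
      push_cast; ring
  have hcg : c * g x = (‖g x‖ : ℂ) := by
    by_cases h : g x = 0
    · simp [hcdef, h]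
    · rw [hcdef, if_neg h, div_mul_eq_mul_div, mul_comm, Complex.mul_conj,
        Complex.normSq_eq_norm_sq, div_eq_iff (by simpa [norm_nonneg] using h : (‖g x‖ : ℂ) ≠ 0)]
      push_cast; ring
  set y : A := c • x with hy
  set m : ℝ := ‖g x‖ with hm
  have hm0 : 0 ≤ m := norm_nonneg _
  have hgy : g y = (m : ℂ) := by rw [hy, map_smul, smul_eq_mul, hcg]
  have hyy : star y * y = star x * x := by
    rw [hy, star_smul, smul_mul_smul_comm, RCLike.star_def, hc1, one_smul]
  have hyy' : y * star y = x * star x := by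
    rw [hy, star_smul, smul_mul_smul_comm, RCLike.star_def, mul_comm c, hc1, one_smul]
  have habsc : ‖c‖ = 1 := by
    have h2 : ‖c‖ ^ 2 = 1 := by
      have := congrArg (‖·‖) hc1
      rwa [norm_mul, Complex.norm_conj, norm_one, ← sq] at this
    nlinarith [norm_nonneg c]
  have hy2 : ‖g (y * y)‖ = ‖g (x * x)‖ := by
    rw [hy, smul_mul_smul_comm, map_smul, smul_eq_mul, norm_mul, norm_mul]
    simp [habsc]
  -- the selfadjoint real part r
  set r : A := (2⁻¹ : ℂ) • (y + star y) with hr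
  have hrsa : IsSelfAdjoint r := by
    rw [IsSelfAdjoint, hr, star_smul, star_add, star_star, add_comm]
    congr 1
    simp
  have hgr : g r = (m : ℂ) := by
    rw [hr, map_smul, map_add, state_star hg, hgy, Complex.conj_ofReal, smul_eq_mul]
    push_cast; ring
  -- Cauchy-Schwarz on r
  have hcs : m ^ 2 ≤ (g (star r * r)).re := by
    have := state_cs hg r
    rwa [hgr, Complex.norm_real, Real.norm_of_nonneg hm0] at this
  have hrr : star r * r = (4⁻¹ : ℂ) • (y * y + y * star y + star y * y + star (y * y)) := by
    rw [hrsa.star_eq, hr, smul_mul_smul_comm]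
    rw [add_mul, mul_add, mul_add, star_mul]
    norm_num
    abel_nf
  have hrr_re : (g (star r * r)).re
      = 4⁻¹ * (2 * (g (y * y)).re + (g (x * star x)).re + (g (star x * x)).re) := by
    rw [hrr, hyy, hyy', map_smul, map_add, map_add, map_add, state_star hg]
    simp only [smul_eq_mul, Complex.mul_re, Complex.add_re, Complex.add_im, Complex.conj_re,
      Complex.conj_im]
    norm_num
    ring
  have hN : (g (y * y)).re ≤ nr (x * x) :=
    calc (g (y * y)).re ≤ ‖g (y * y)‖ := Complex.re_le_norm _
    _ = ‖g (x * x)‖ := hy2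
    _ ≤ nr (x * x) := abs_le_nr hg _
  have hfin := hcs
  rw [hrr_re] at hfin
  calc ‖g x‖ ^ 2 = m ^ 2 := by rw [hm]
  _ ≤ 4⁻¹ * (2 * (g (y * y)).re + (g (x * star x)).re + (g (star x * x)).re) := hfin
  _ ≤ 4⁻¹ * (2 * nr (x * x) + (g (x * star x)).re + (g (star x * x)).re) := by linarith

lemma state_main (hg : IsState g) (x : A) {φ : ℝ → ℝ} (hφ : IsOrlicz φ)
    {α : ℝ} (hα0 : 0 ≤ α) (hα1 : α ≤ 1) :
    φ (‖g x‖ ^ 2) ≤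
      (α / 2) * φ (nr (x * x)) +
        ‖((α / 4 : ℝ) : ℂ) • cfc φ (x * star x) +
          ((1 - 3 * α / 4 : ℝ) : ℂ) • cfc φ (star x * x)‖ := by
  have hN0 : 0 ≤ nr (x * x) := nr_nonneg _
  have hG1 : 0 ≤ (g (x * star x)).re :=
    (Complex.nonneg_iff.mp (state_nonneg hg (mul_star_self_nonneg x))).1
  have hG2 : 0 ≤ (g (star x * x)).re :=
    (Complex.nonneg_iff.mp (state_nonneg hg (star_mul_self_nonneg x))).1
  have hu0 : 0 ≤ ‖g x‖ ^ 2 := by positivity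
  have hI := state_key hg x
  have hII := state_cs hg x
  set u := ‖g x‖ ^ 2 with hu
  set N := nr (x * x) with hNdef
  set G1 := (g (x * star x)).re with hG1def
  set G2 := (g (star x * x)).re with hG2def
  have hW : u ≤ (α / 2) * N + (α / 4) * G1 + (1 - 3 * α / 4) * G2 := by
    nlinarith [mul_le_mul_of_nonneg_left hI hα0,
      mul_le_mul_of_nonneg_left hII (by linarith : (0:ℝ) ≤ 1 - α)]
  have hW0 : 0 ≤ (α / 2) * N + (α / 4) * G1 + (1 - 3 * α / 4) * G2 := by
    have : (0:ℝ) ≤ 1 - 3 * α / 4 := by linarith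
    positivity
  have hmono := hφ.monotoneOn (Set.mem_Ici.mpr hu0) (Set.mem_Ici.mpr hW0) hW
  have hconv := convex3 hφ (a := α / 2) (b := α / 4) (c := 1 - 3 * α / 4)
    (by linarith) (by linarith) (by linarith) (by ring) hN0 hG1 hG2
  have hj1 : φ G1 ≤ (g (cfc φ (x * star x))).re :=
    state_jensen hg hφ (mul_star_self_nonneg x)
  have hj2 : φ G2 ≤ (g (cfc φ (star x * x))).re :=
    state_jensen hg hφ (star_mul_self_nonneg x)
  set Q1 := cfc φ (x * star x) with hQ1def
  set Q2 := cfc φ (star x * x) with hQ2def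
  set P := ((α / 4 : ℝ) : ℂ) • Q1 + ((1 - 3 * α / 4 : ℝ) : ℂ) • Q2 with hPdef
  have hPsa : IsSelfAdjoint P := by
    have h1 : IsSelfAdjoint Q1 := cfc_predicate φ (x * star x)
    have h2 : IsSelfAdjoint Q2 := cfc_predicate φ (star x * x)
    rw [IsSelfAdjoint, hPdef, star_add, star_smul, star_smul, h1.star_eq, h2.star_eq]
    simp only [RCLike.star_def, Complex.conj_ofReal]
  have hgP : (g P).re = (α / 4) * (g Q1).re + (1 - 3 * α / 4) * (g Q2).re := by
    rw [hPdef, map_add, map_smul, map_smul]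
    simp [smul_eq_mul, Complex.re_ofReal_mul]
  have hPnorm : (g P).re ≤ ‖P‖ := state_re_le_norm hg hPsa
  calc φ u ≤ φ ((α / 2) * N + (α / 4) * G1 + (1 - 3 * α / 4) * G2) := hmono
  _ ≤ (α / 2) * φ N + (α / 4) * φ G1 + (1 - 3 * α / 4) * φ G2 := hconv
  _ ≤ (α / 2) * φ N + (α / 4) * (g Q1).re + (1 - 3 * α / 4) * (g Q2).re := by
      have h1 := mul_le_mul_of_nonneg_left hj1 (by linarith : (0:ℝ) ≤ α / 4)
      have h2 := mul_le_mul_of_nonneg_left hj2 (by linarith : (0:ℝ) ≤ 1 - 3 * α / 4)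
      linarith
  _ = (α / 2) * φ N + (g P).re := by rw [hgP]; ring
  _ ≤ (α / 2) * φ N + ‖P‖ := by linarith

/-- `φ(v(x)²) ≤ (α/2) φ(v(x²)) + ‖(α/4) φ(x x*) + (1 - 3α/4) φ(x* x)‖`. -/
theorem stmt11 (x : A) (φ : ℝ → ℝ) (hφ : IsOrlicz φ)
    (α : ℝ) (hα0 : 0 ≤ α) (hα1 : α ≤ 1) :
    φ (nr x ^ 2) ≤
      (α / 2) * φ (nr (x * x)) +
        ‖((α / 4 : ℝ) : ℂ) • cfc φ (x * star x) +
          ((1 - 3 * α / 4 : ℝ) : ℂ) • cfc φ (star x * x)‖ := by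
  have hRHS0 : 0 ≤ (α / 2) * φ (nr (x * x)) +
      ‖((α / 4 : ℝ) : ℂ) • cfc φ (x * star x) +
        ((1 - 3 * α / 4 : ℝ) : ℂ) • cfc φ (star x * x)‖ := by
    have h1 : 0 ≤ φ (nr (x * x)) := orlicz_nonneg hφ (nr_nonneg _)
    have h2 : (0:ℝ) ≤ α / 2 := by linarith
    positivity
  set S := {r : ℝ | ∃ g : A →ₗ[ℂ] ℂ, IsState g ∧ r = ‖g x‖} with hS
  rcases Set.eq_empty_or_nonempty S with hemp | hne
  · rw [show nr x = sSup S from rfl, hemp, Real.sSup_empty]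
    simpa [hφ.map_zero] using hRHS0
  · have hbdd : BddAbove S := nrSet_bddAbove x
    have hM0 : 0 ≤ nr x := nr_nonneg x
    rcases eq_or_lt_of_le hM0 with hM | hM
    · obtain ⟨r0, g0, hg0, hr0⟩ := hne
      have h1 : ‖g0 x‖ ≤ nr x := abs_le_nr hg0 x
      have h2 : ‖g0 x‖ = 0 :=
        le_antisymm (hM ▸ h1) (norm_nonneg _)
      have hmain := state_main hg0 x hφ hα0 hα1
      rw [h2] at hmain
      rw [← hM]
      simpa using hmain
    · set ψ : ℝ → ℝ := fun t => φ (max t 0 ^ 2) with hψ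
      have hψmono : Monotone ψ := by
        intro s t hst
        have h1 : max s 0 ≤ max t 0 := max_le_max hst le_rfl
        have h0s : (0:ℝ) ≤ max s 0 := le_max_right _ _
        have h0t : (0:ℝ) ≤ max t 0 := le_max_right _ _
        exact hφ.monotoneOn (Set.mem_Ici.mpr (by positivity))
          (Set.mem_Ici.mpr (by positivity)) (by nlinarith)
      have hψcont : ContinuousAt ψ (nr x) := by
        have hx2 : (0:ℝ) < nr x ^ 2 := by positivity
        have hc1 : ContinuousAt φ (nr x ^ 2) :=
          hφ.continuousOn.continuousAt (Ici_mem_nhds hx2)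
        have hc2 : ContinuousAt (fun t : ℝ => max t 0 ^ 2) (nr x) := by fun_prop
        have hc1' : ContinuousAt φ ((fun t : ℝ => max t 0 ^ 2) (nr x)) := by
          simpa [max_eq_left hM0] using hc1
        have hcomp := ContinuousAt.comp (g := φ) (f := fun t : ℝ => max t 0 ^ 2) (x := nr x) hc1' hc2
        exact hcomp
      have key := hψmono.map_csSup_of_continuousAt
        (by exact hψcont) hne hbdd
      have heq : φ (nr x ^ 2) = ψ (sSup S) := by
        rw [hψ, show nr x = sSup S from rfl]
        simp [max_eq_left (show (0:ℝ) ≤ sSup S from hM0)]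
      rw [heq, key]
      apply csSup_le (hne.image ψ)
      rintro r ⟨s, ⟨g, hg, rfl⟩, rfl⟩
      have hmain := state_main hg x hφ hα0 hα1
      simpa [hψ, max_eq_left (norm_nonneg (g x))] using hmain

end
end
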